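/- arXiv:1707.09918 — 4 statements merged into one kernel-verified Lean document; each statement's English description precedes it below -/
import Mathlib

section
/- For β = 1 and any integer α ≥ 1, f_ee(x) = f_nn(x) + (α−1)·f_en(x); equivalently, for every integer k ≥ 1, the number of bounce-free EE-paths in L_{1/α}(k) equals the number of bounce-free NN-paths in L_{1/α}(k) plus (α−1) times the number of bounce-free EN-paths in L_{1/α}(k). -/
/-!
Lattice paths with unit East (`true`) and unit North (`false`) steps,
bounces with respect to the line `y = (β/α)·x`, and the associated
generating functions over `ℚ`.
-/

/-- A lattice path is a list of unit steps: `true` = East, `false` = North. -/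
abbrev LatticePath := List Bool

/-- `p` is a lattice path from `(0,0)` to `(α*k, β*k)`, i.e. a member of `L_{β/α}(k)`. -/
def InL (α β k : ℕ) (p : LatticePath) : Prop :=
  p.count true = α * k ∧ p.count false = β * k

/-- `p` has a left bounce at step index `i`: step `i` is an E-step, step `i+1` is an
N-step, and their common endpoint (the point reached after `i+1` steps) lies on the
line `y = (β/α)·x`, i.e. `α·y = β·x`. -/
def IsLeftBounce (α β : ℕ) (p : LatticePath) (i : ℕ) : Prop :=
  p[i]? = some true ∧ p[i + 1]? = some false ∧
    α * ((p.take (i + 1)).count false) = β * ((p.take (i + 1)).count true)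

/-- `p` has a right bounce at step index `i`: step `i` is an N-step, step `i+1` is an
E-step, and their common endpoint lies on the line `y = (β/α)·x`. -/
def IsRightBounce (α β : ℕ) (p : LatticePath) (i : ℕ) : Prop :=
  p[i]? = some false ∧ p[i + 1]? = some true ∧
    α * ((p.take (i + 1)).count false) = β * ((p.take (i + 1)).count true)

/-- The number of left bounces of `p` with respect to the line `y = (β/α)·x`. -/
noncomputable def leftBounces (α β : ℕ) (p : LatticePath) : ℕ :=
  {i | IsLeftBounce α β p i}.ncard

/-- The number of right bounces of `p` with respect to the line `y = (β/α)·x`. -/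
noncomputable def rightBounces (α β : ℕ) (p : LatticePath) : ℕ :=
  {i | IsRightBounce α β p i}.ncard

/-- `p` is bounce-free: it has no left and no right bounces. -/
def BounceFree (α β : ℕ) (p : LatticePath) : Prop :=
  (∀ i, ¬ IsLeftBounce α β p i) ∧ (∀ i, ¬ IsRightBounce α β p i)

/-- The first step of `p` is `a`. -/
def FirstStep (p : LatticePath) (a : Bool) : Prop := p.head? = some a

/-- The last step of `p` is `b`. -/
def LastStep (p : LatticePath) (b : Bool) : Prop := p.getLast? = some b

/-- The generating function `Σ_{k≥1} |S k|·xᵏ ∈ ℚ[[x]]` of a family of path sets. -/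
noncomputable def gfOf (S : ℕ → Set LatticePath) : PowerSeries ℚ :=
  PowerSeries.mk fun k => if k = 0 then 0 else ((S k).ncard : ℚ)

/-- `g(x) = Σ_{k≥1} C((α+β)k, αk)·xᵏ`, counting all paths in `L_{β/α}(k)`. -/
noncomputable def gSer (α β : ℕ) : PowerSeries ℚ :=
  PowerSeries.mk fun k => if k = 0 then 0 else ((((α + β) * k).choose (α * k) : ℕ) : ℚ)

/-- `g_ee(x) = Σ_{k≥1} C((α+β)k−2, αk−2)·xᵏ`, counting EE-paths in `L_{β/α}(k)`.
We write the lower index as `βk = ((α+β)k−2) − (αk−2)`, which equals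
`C((α+β)k−2, αk−2)` by the symmetry of binomial coefficients and correctly
implements the convention `C(n, −1) = 0` (needed when `αk = 1`), which ℕ-truncated
subtraction would not. -/
noncomputable def geeSer (α β : ℕ) : PowerSeries ℚ :=
  PowerSeries.mk fun k => if k = 0 then 0 else ((((α + β) * k - 2).choose (β * k) : ℕ) : ℚ)

/-- `g_en(x) = Σ_{k≥1} C((α+β)k−2, αk−1)·xᵏ`, counting EN-paths in `L_{β/α}(k)`. -/
noncomputable def genSer (α β : ℕ) : PowerSeries ℚ :=
  PowerSeries.mk fun k => if k = 0 then 0 else ((((α + β) * k - 2).choose (α * k - 1) : ℕ) : ℚ)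

/-- `g_nn(x) = Σ_{k≥1} C((α+β)k−2, αk)·xᵏ`, counting NN-paths in `L_{β/α}(k)`. -/
noncomputable def gnnSer (α β : ℕ) : PowerSeries ℚ :=
  PowerSeries.mk fun k => if k = 0 then 0 else ((((α + β) * k - 2).choose (α * k) : ℕ) : ℚ)

/-- `f_ee(x)`: generating function of bounce-free EE-paths in `L_{β/α}(k)`. -/
noncomputable def feeSer (α β : ℕ) : PowerSeries ℚ :=
  gfOf fun k => {p | InL α β k p ∧ BounceFree α β p ∧ FirstStep p true ∧ LastStep p true}

/-- `f_en(x)`: generating function of bounce-free EN-paths in `L_{β/α}(k)`. -/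
noncomputable def fenSer (α β : ℕ) : PowerSeries ℚ :=
  gfOf fun k => {p | InL α β k p ∧ BounceFree α β p ∧ FirstStep p true ∧ LastStep p false}

/-- `f_nn(x)`: generating function of bounce-free NN-paths in `L_{β/α}(k)`. -/
noncomputable def fnnSer (α β : ℕ) : PowerSeries ℚ :=
  gfOf fun k => {p | InL α β k p ∧ BounceFree α β p ∧ FirstStep p false ∧ LastStep p false}

/-- `f(x)`: generating function of all bounce-free paths in `L_{β/α}(k)`. -/
noncomputable def fSer (α β : ℕ) : PowerSeries ℚ :=
  gfOf fun k => {p | InL α β k p ∧ BounceFree α β p}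

/-- `B_{ℓ,r}(x)`: generating function of paths in `L_{β/α}(k)` with exactly `ℓ`
left bounces and exactly `r` right bounces. -/
noncomputable def BSer (α β ℓ r : ℕ) : PowerSeries ℚ :=
  gfOf fun k => {p | InL α β k p ∧ leftBounces α β p = ℓ ∧ rightBounces α β p = r}

/-- The Fuss–Catalan generating function `c_α(x) = Σ_{k≥0} 1/(αk+1)·C((α+1)k, k)·xᵏ`. -/
noncomputable def fussCatalan (α : ℕ) : PowerSeries ℚ :=
  PowerSeries.mk fun k => (1 / ((α * k + 1 : ℕ) : ℚ)) * ((((α + 1) * k).choose k : ℕ) : ℚ)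

/-- For slope `1/α`: `p` has a horizontal cross at the lattice point `(α*i, i)` (`i ≥ 1`):
`p` passes through `(α*i, i)` (so the prefix of length `(α+1)*i` has exactly `α*i`
E-steps), and both the step ending there and the step starting there are E-steps. -/
def HasHCrossAt (α : ℕ) (p : LatticePath) (i : ℕ) : Prop :=
  1 ≤ i ∧ (p.take ((α + 1) * i)).count true = α * i ∧
    p[(α + 1) * i - 1]? = some true ∧ p[(α + 1) * i]? = some true

/-- `p` has no horizontal crosses with respect to the line `y = x/α`. -/
def NoHCross (α : ℕ) (p : LatticePath) : Prop := ∀ i, ¬ HasHCrossAt α p i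


namespace S12

/-- Height of a path with respect to the line `y = x/α`. -/
def ht (α : ℕ) (p : List Bool) : ℤ := (p.count true : ℤ) - α * (p.count false : ℤ)

/-- Height after `t` steps. -/
def Hh (α : ℕ) (p : List Bool) (t : ℕ) : ℤ := ht α (p.take t)

@[simp] lemma ht_nil (α : ℕ) : ht α [] = 0 := by simp [ht]

@[simp] lemma ht_append (α : ℕ) (a b : List Bool) : ht α (a ++ b) = ht α a + ht α b := by
  simp [ht]; ring

@[simp] lemma ht_reverse (α : ℕ) (a : List Bool) : ht α a.reverse = ht α a := by
  simp [ht]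

@[simp] lemma ht_singleton (α : ℕ) (b : Bool) : ht α [b] = if b then 1 else -(α:ℤ) := by
  cases b <;> simp [ht]

@[simp] lemma Hh_zero (α : ℕ) (p : List Bool) : Hh α p 0 = 0 := by simp [Hh]

lemma Hh_of_length_le (α : ℕ) {p : List Bool} {t : ℕ} (h : p.length ≤ t) :
    Hh α p t = ht α p := by simp [Hh, List.take_of_length_le h]

lemma Hh_succ (α : ℕ) {p : List Bool} {t : ℕ} (h : t < p.length) :
    Hh α p (t + 1) = Hh α p t + (if p[t] then 1 else -(α:ℤ)) := by
  have h2 : p.take (t+1) = p.take t ++ [p[t]] := by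
    rw [← List.take_concat_get h, List.concat_eq_append]
  unfold Hh
  rw [h2, ht_append, ht_singleton]

lemma Hh_step_le (α : ℕ) (p : List Bool) (t : ℕ) : Hh α p (t + 1) ≤ Hh α p t + 1 := by
  by_cases h : t < p.length
  · rw [Hh_succ α h]
    cases hb : p[t] <;> simp <;> omega
  · push_neg at h
    rw [Hh_of_length_le α h, Hh_of_length_le α (by omega)]
    omega

/-- Discrete IVT going up: heights increase by at most 1 per step. -/
lemma upcross (α : ℕ) (p : List Bool) {a b : ℕ} (v : ℤ) (hab : a ≤ b)
    (ha : Hh α p a < v) (hb : v ≤ Hh α p b) : ∃ t, a < t ∧ t ≤ b ∧ Hh α p t = v := by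
  induction b with
  | zero =>
    have : a = 0 := by omega
    subst this; omega
  | succ n ih =>
    rcases Nat.lt_or_ge a (n+1) with h1 | h1
    · by_cases h2 : v ≤ Hh α p n
      · obtain ⟨t, ht1, ht2, ht3⟩ := ih (by omega) h2
        exact ⟨t, ht1, by omega, ht3⟩
      · push_neg at h2
        have := Hh_step_le α p n
        exact ⟨n+1, by omega, le_refl _, by omega⟩
    · have : a = n+1 := by omega
      subst this; omega

lemma step_true (α : ℕ) {p : List Bool} {t : ℕ} (h : t < p.length)
    (hlt : Hh α p t < Hh α p (t+1)) : p[t] = true ∧ Hh α p (t+1) = Hh α p t + 1 := by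
  rw [Hh_succ α h] at hlt ⊢
  cases hb : p[t]
  · rw [hb] at hlt; simp at hlt; omega
  · exact ⟨rfl, by simp⟩

lemma step_false (α : ℕ) {p : List Bool} {t : ℕ} (h : t < p.length)
    (hlt : Hh α p (t+1) < Hh α p t) : p[t] = false ∧ Hh α p (t+1) = Hh α p t - α := by
  rw [Hh_succ α h] at hlt ⊢
  cases hb : p[t]
  · exact ⟨rfl, by simp; ring⟩
  · rw [hb] at hlt; simp at hlt

lemma Hh_append_left (α : ℕ) {x : List Bool} (y : List Bool) {t : ℕ} (h : t ≤ x.length) :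
    Hh α (x ++ y) t = Hh α x t := by
  simp [Hh, List.take_append, Nat.sub_eq_zero_of_le h]

lemma Hh_append_right (α : ℕ) (x y : List Bool) (s : ℕ) :
    Hh α (x ++ y) (x.length + s) = ht α x + Hh α y s := by
  simp [Hh, List.take_append, List.take_of_length_le (Nat.le_add_right x.length s)]

lemma Hh_drop (α : ℕ) (p : List Bool) (z s : ℕ) :
    Hh α (p.drop z) s = Hh α p (z + s) - Hh α p z := by
  by_cases hz : z ≤ p.length
  · have h1 : Hh α (p.take z ++ p.drop z) (z + s) = ht α (p.take z) + Hh α (p.drop z) s := by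
      have := Hh_append_right α (p.take z) (p.drop z) s
      rwa [List.length_take, Nat.min_eq_left hz] at this
    rw [List.take_append_drop] at h1
    have h2 : Hh α p z = ht α (p.take z) := rfl
    omega
  · push_neg at hz
    rw [List.drop_of_length_le (by omega)]
    rw [Hh_of_length_le α (t := z + s) (by omega), Hh_of_length_le α (t := z) (by omega)]
    simp [Hh]

lemma Hh_reverse (α : ℕ) (l : List Bool) {s : ℕ} (h : s ≤ l.length) :
    Hh α l.reverse s = ht α l - Hh α l (l.length - s) := by
  have h1 : l.reverse.take s = (l.drop (l.length - s)).reverse := by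
    rw [← List.reverse_reverse (l.reverse.take s), List.reverse_take, List.reverse_reverse,
      List.length_reverse]
  unfold Hh
  rw [h1, ht_reverse]
  have h5 := Hh_drop α l (l.length - s) (s)
  have h2 : l.length - s + s = l.length := by omega
  rw [h2] at h5
  have h3 : Hh α l l.length = ht α l := Hh_of_length_le α le_rfl
  rw [h3] at h5
  have h4 : ht α (l.drop (l.length - s)) = Hh α (l.drop (l.length - s)) s :=
    (Hh_of_length_le α (by simp; omega)).symm
  rw [h4, h5]
  rfl

end S12

namespace S12

lemma length_eq_counts (l : List Bool) : l.length = l.count true + l.count false := by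
  induction l with
  | nil => simp
  | cons a l ih =>
    simp only [List.count_cons, List.length_cons, ih]
    cases a <;> simp <;> omega

def Good (α : ℕ) (p : List Bool) : Prop :=
  ∀ i, i + 1 < p.length → Hh α p (i + 1) = 0 → p[i]? = p[i + 1]?

lemma line_iff (α : ℕ) (p : List Bool) (t : ℕ) :
    α * ((p.take t).count false) = 1 * ((p.take t).count true) ↔ Hh α p t = 0 := by
  unfold Hh ht; omega

lemma bounceFree_iff_good (α : ℕ) (p : List Bool) : BounceFree α 1 p ↔ Good α p := by
  constructor
  · rintro ⟨hL, hR⟩ i hi h0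
    have hi' : i < p.length := by omega
    rw [List.getElem?_eq_getElem hi', List.getElem?_eq_getElem hi]
    cases hb1 : p[i]'hi' <;> cases hb2 : p[i+1]'hi
    · rfl
    · exact absurd ⟨by rw [List.getElem?_eq_getElem hi', hb1],
        by rw [List.getElem?_eq_getElem hi, hb2], (line_iff α p (i+1)).2 h0⟩ (hR i)
    · exact absurd ⟨by rw [List.getElem?_eq_getElem hi', hb1],
        by rw [List.getElem?_eq_getElem hi, hb2], (line_iff α p (i+1)).2 h0⟩ (hL i)
    · rfl
  · intro hg
    constructor
    · rintro i ⟨h1, h2, h3⟩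
      have hi : i + 1 < p.length := (List.getElem?_eq_some_iff.1 h2).1
      have := hg i hi ((line_iff α p (i+1)).1 h3)
      rw [h1, h2] at this; cases this
    · rintro i ⟨h1, h2, h3⟩
      have hi : i + 1 < p.length := (List.getElem?_eq_some_iff.1 h2).1
      have := hg i hi ((line_iff α p (i+1)).1 h3)
      rw [h1, h2] at this; cases this

noncomputable def zlast (α : ℕ) (p : List Bool) : ℕ :=
  Nat.findGreatest (fun t => 0 < t ∧ Hh α p t = 0) (p.length - 1)

noncomputable def zfirst (α : ℕ) (p : List Bool) : ℕ :=
  sInf {t | 0 < t ∧ Hh α p t = 0}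

noncomputable def jx (α : ℕ) (p : List Bool) : ℕ :=
  sInf {t | zlast α p ≤ t ∧ Hh α p (t + 1) < 0}

noncomputable def tstar (α : ℕ) (v : ℤ) (q : List Bool) : ℕ :=
  Nat.findGreatest (fun t => Hh α q t = v) (q.length - 1)

lemma zlast_le (α : ℕ) (p : List Bool) : zlast α p ≤ p.length - 1 := by
  unfold zlast; exact Nat.findGreatest_le _

lemma zlast_spec {α : ℕ} {p : List Bool} (h : 0 < zlast α p) : Hh α p (zlast α p) = 0 := by
  unfold zlast at h ⊢
  exact (Nat.findGreatest_of_ne_zero (P := fun t => 0 < t ∧ Hh α p t = 0)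
    (n := p.length - 1) rfl (by omega)).2

lemma zlast_eq {α : ℕ} {p : List Bool} {z : ℕ} (hz : z ≤ p.length - 1)
    (h0 : z = 0 ∨ (0 < z ∧ Hh α p z = 0))
    (hgt : ∀ t, z < t → t ≤ p.length - 1 → Hh α p t ≠ 0) : zlast α p = z := by
  unfold zlast
  have hle : Nat.findGreatest (fun t => 0 < t ∧ Hh α p t = 0) (p.length - 1) ≤ z := by
    by_contra h
    push_neg at h
    have hP := Nat.findGreatest_of_ne_zero (P := fun t => 0 < t ∧ Hh α p t = 0)
      (n := p.length - 1) rfl (by omega)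
    exact hgt _ h (Nat.findGreatest_le _) hP.2
  rcases h0 with h0 | h0
  · omega
  · have := Nat.le_findGreatest (P := fun t => 0 < t ∧ Hh α p t = 0) (n := p.length - 1) hz h0
    omega

lemma zlast_is_greatest {α : ℕ} {p : List Bool} {t : ℕ} (h1 : zlast α p < t)
    (h2 : t ≤ p.length - 1) : Hh α p t ≠ 0 := by
  unfold zlast at h1
  intro h0
  exact (Nat.findGreatest_is_greatest h1 h2) ⟨by omega, h0⟩

lemma tstar_eq {α : ℕ} {v : ℤ} {q : List Bool} {t0 : ℕ} (h1 : t0 ≤ q.length - 1)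
    (h2 : Hh α q t0 = v) (h3 : ∀ t, t0 < t → t ≤ q.length - 1 → Hh α q t ≠ v) :
    tstar α v q = t0 := by
  unfold tstar
  have hle := Nat.le_findGreatest (P := fun t => Hh α q t = v) (n := q.length - 1) h1 h2
  by_contra h
  have hne : Nat.findGreatest (fun t => Hh α q t = v) (q.length - 1) ≠ 0 := by omega
  have hP := Nat.findGreatest_of_ne_zero (P := fun t => Hh α q t = v)
    (n := q.length - 1) rfl hne
  exact h3 _ (by omega) (Nat.findGreatest_le _) hP

lemma zfirst_eq {α : ℕ} {p : List Bool} {z : ℕ} (h0 : 0 < z) (h00 : Hh α p z = 0)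
    (hlt : ∀ t, 0 < t → t < z → Hh α p t ≠ 0) : zfirst α p = z := by
  have h1 : z ∈ {t | 0 < t ∧ Hh α p t = 0} := ⟨h0, h00⟩
  have hle : zfirst α p ≤ z := Nat.sInf_le h1
  have hmem : zfirst α p ∈ {t | 0 < t ∧ Hh α p t = 0} := Nat.sInf_mem ⟨z, h1⟩
  rcases Nat.lt_or_ge (zfirst α p) z with h | h
  · exact absurd hmem.2 (hlt _ hmem.1 h)
  · omega

lemma good_rotate {α : ℕ} {x y : List Bool} (hx : ht α x = 0) (hy : ht α y = 0)
    (hgood : Good α (x ++ y)) (hjunc : y.getLast? = x.head?) : Good α (y ++ x) := by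
  intro i hi h0
  rw [List.length_append] at hi
  rcases Nat.lt_trichotomy (i + 1) y.length with hc | hc | hc
  · have hy1 : Hh α (y ++ x) (i + 1) = Hh α y (i + 1) := Hh_append_left α x (by omega)
    have hy2 : Hh α (x ++ y) (x.length + (i + 1)) = ht α x + Hh α y (i + 1) :=
      Hh_append_right α x y (i + 1)
    have h0' : Hh α (x ++ y) (x.length + (i + 1)) = 0 := by
      rw [hy2, hx]; rw [hy1] at h0; omega
    have := hgood (x.length + i) (by rw [List.length_append]; omega)
      (by rw [show x.length + i + 1 = x.length + (i+1) by omega]; exact h0')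
    rw [List.getElem?_append_right (by omega), List.getElem?_append_right (by omega)] at this
    rw [List.getElem?_append_left (by omega : i < y.length),
      List.getElem?_append_left (by omega : i + 1 < y.length)]
    rw [show x.length + i - x.length = i by omega,
      show x.length + i + 1 - x.length = i + 1 by omega] at this
    exact this
  · have hi' : i < y.length := by omega
    have e1 : (y ++ x)[i]? = y[i]? := List.getElem?_append_left hi'
    have e2 : (y ++ x)[i+1]? = x[0]? := by
      rw [List.getElem?_append_right (by omega)]
      congr 1
      omega
    rw [e1, e2, ← List.head?_eq_getElem?, ← hjunc, List.getLast?_eq_getElem?]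
    congr 1
    omega
  · obtain ⟨s, rfl⟩ : ∃ s, i = y.length + s := ⟨i - y.length, by omega⟩
    have hs1 : s + 1 < x.length := by omega
    have hx1 : Hh α (y ++ x) (y.length + (s + 1)) = ht α y + Hh α x (s + 1) :=
      Hh_append_right α y x (s + 1)
    have hx2 : Hh α (x ++ y) (s + 1) = Hh α x (s + 1) := Hh_append_left α y (by omega)
    have h0' : Hh α (x ++ y) (s + 1) = 0 := by
      rw [show y.length + s + 1 = y.length + (s + 1) by omega] at h0
      rw [hx1, hy] at h0
      rw [hx2]; omega
    have := hgood s (by rw [List.length_append]; omega) h0'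
    rw [List.getElem?_append_left (by omega : s < x.length),
      List.getElem?_append_left hs1] at this
    rw [List.getElem?_append_right (by omega : y.length ≤ y.length + s),
      List.getElem?_append_right (by omega : y.length ≤ y.length + s + 1)]
    rw [show y.length + s - y.length = s by omega,
      show y.length + s + 1 - y.length = s + 1 by omega]
    exact this

end S12

namespace S12

variable {α k : ℕ}

lemma Hh_take (α : ℕ) (p : List Bool) {z s : ℕ} (h : s ≤ z) :
    Hh α (p.take z) s = Hh α p s := by
  unfold Hh
  rw [List.take_take, Nat.min_eq_left h]

lemma basicL (hα : 1 ≤ α) (hk : 1 ≤ k) {p : List Bool} (hp : InL α 1 k p) :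
    p.length = α * k + k ∧ 2 ≤ p.length ∧ ht α p = 0 := by
  obtain ⟨h1, h2⟩ := hp
  have hl := length_eq_counts p
  rw [h1, h2] at hl
  have hpos : 1 ≤ α * k := Nat.mul_pos hα hk
  refine ⟨by omega, by omega, ?_⟩
  unfold ht
  rw [h1, h2]
  push_cast
  ring

/-- Case A forward: rotating an EE path at its last interior zero when the step
there is an N-step. -/
lemma caseA_forward (hα : 1 ≤ α) (hk : 1 ≤ k) {p : List Bool} (hp : InL α 1 k p)
    (hg : Good α p) (hf : p[0]? = some true) (hl : p[p.length - 1]? = some true)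
    (hz : p[zlast α p]? = some false) :
    InL α 1 k (p.drop (zlast α p) ++ p.take (zlast α p)) ∧
    Good α (p.drop (zlast α p) ++ p.take (zlast α p)) ∧
    (p.drop (zlast α p) ++ p.take (zlast α p))[0]? = some false ∧
    (p.drop (zlast α p) ++ p.take (zlast α p))[(p.drop (zlast α p) ++
      p.take (zlast α p)).length - 1]? = some false ∧
    zfirst α (p.drop (zlast α p) ++ p.take (zlast α p)) = p.length - zlast α p ∧
    ((p.drop (zlast α p) ++ p.take (zlast α p)).drop (p.length - zlast α p) ++
      (p.drop (zlast α p) ++ p.take (zlast α p)).take (p.length - zlast α p)) = p := by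
  obtain ⟨hlen, hlen2, htp⟩ := basicL hα hk hp
  set z := zlast α p with hzdef
  have hzlt : z < p.length := (List.getElem?_eq_some_iff.1 hz).1
  have hzpos : 0 < z := by
    rcases Nat.eq_zero_or_pos z with h | h
    · rw [h] at hz; rw [hz] at hf; cases hf
    · exact h
  have hz0 : Hh α p z = 0 := zlast_spec hzpos
  set a := p.take z with hadef
  set b := p.drop z with hbdef
  have hab : a ++ b = p := List.take_append_drop z p
  have hla : a.length = z := by rw [hadef, List.length_take]; omega
  have hlb : b.length = p.length - z := by rw [hbdef, List.length_drop]
  have hta : ht α a = 0 := hz0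
  have htb : ht α b = 0 := by
    have := ht_append α a b
    rw [hab] at this
    omega
  have hbne : b ≠ [] := by
    intro h
    have := hlb
    rw [h] at this
    simp at this
    omega
  -- junction facts
  have hbl : b.getLast? = some true := by
    rw [List.getLast?_eq_getElem?, hbdef, List.getElem?_drop, hlb]
    rw [show z + (p.length - z - 1) = p.length - 1 by omega]
    exact hl
  have hah : a.head? = some true := by
    rw [List.head?_eq_getElem?, hadef, List.getElem?_take_of_lt hzpos]
    exact hf
  have hgq : Good α (b ++ a) := by
    apply good_rotate hta htb _ (by rw [hbl, hah])
    rw [hab]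
    exact hg
  -- counts
  have hcount : ∀ c : Bool, (b ++ a).count c = p.count c := by
    intro c
    rw [List.count_append, ← hab, List.count_append]
    omega
  have hInL : InL α 1 k (b ++ a) := ⟨by rw [hcount]; exact hp.1, by rw [hcount]; exact hp.2⟩
  have hlenq : (b ++ a).length = p.length := by
    rw [List.length_append, ← hab, List.length_append]
    omega
  -- first step
  have hq0 : (b ++ a)[0]? = some false := by
    rw [List.getElem?_append_left (by omega : 0 < b.length), hbdef, List.getElem?_drop]
    rw [Nat.add_zero]
    exact hz
  -- last step: p[z-1]? = p[z]? by goodness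
  have hzm1 : p[z - 1]? = p[z]? := by
    have := hg (z - 1) (by omega) (by rw [show z - 1 + 1 = z by omega]; exact hz0)
    rwa [show z - 1 + 1 = z by omega] at this
  have hqlast : (b ++ a)[(b ++ a).length - 1]? = some false := by
    rw [hlenq, List.getElem?_append_right (by omega : b.length ≤ p.length - 1)]
    rw [hadef, List.getElem?_take_of_lt (by omega : p.length - 1 - b.length < z)]
    rw [show p.length - 1 - b.length = z - 1 by omega]
    rw [hzm1]
    exact hz
  -- first interior zero of the image
  have hzf : zfirst α (b ++ a) = p.length - z := by
    apply zfirst_eq (by omega)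
    · rw [show p.length - z = b.length by omega, Hh_append_left α a (le_refl _),
        Hh_of_length_le α (le_refl _)]
      exact htb
    · intro t h0t htlt
      rw [Hh_append_left α a (by omega : t ≤ b.length)]
      rw [hbdef, Hh_drop, hz0]
      have := zlast_is_greatest (α := α) (p := p) (t := z + t) (by omega) (by omega)
      omega
  refine ⟨hInL, hgq, hq0, hqlast, hzf, ?_⟩
  rw [show p.length - z = b.length by omega, List.drop_left, List.take_left, hab]

end S12

namespace S12

/-- Case A backward: rotating an NN path at its first interior zero. -/
lemma caseA_backward (hα : 1 ≤ α) (hk : 1 ≤ k) {q : List Bool} (hq : InL α 1 k q)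
    (hg : Good α q) (hf : q[0]? = some false) (hl : q[q.length - 1]? = some false) :
    InL α 1 k (q.drop (zfirst α q) ++ q.take (zfirst α q)) ∧
    Good α (q.drop (zfirst α q) ++ q.take (zfirst α q)) ∧
    (q.drop (zfirst α q) ++ q.take (zfirst α q))[0]? = some true ∧
    (q.drop (zfirst α q) ++ q.take (zfirst α q))[(q.drop (zfirst α q) ++
      q.take (zfirst α q)).length - 1]? = some true ∧
    zlast α (q.drop (zfirst α q) ++ q.take (zfirst α q)) = q.length - zfirst α q ∧
    (q.drop (zfirst α q) ++ q.take (zfirst α q))[q.length - zfirst α q]? = some false ∧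
    ((q.drop (zfirst α q) ++ q.take (zfirst α q)).drop (q.length - zfirst α q) ++
      (q.drop (zfirst α q) ++ q.take (zfirst α q)).take (q.length - zfirst α q)) = q := by
  obtain ⟨hlen, hlen2, htq⟩ := basicL hα hk hq
  -- endpoint heights
  have hH1 : Hh α q 1 = -(α : ℤ) := by
    rw [show (1:ℕ) = 0 + 1 by omega, Hh_succ α (by omega : 0 < q.length)]
    have : q[0] = false := by
      have := List.getElem?_eq_getElem (l := q) (i := 0) (by omega)
      rw [this] at hf
      exact (Option.some_inj.1 hf)
    rw [this]
    simp
  have hHl1 : Hh α q (q.length - 1) = α := by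
    have hstep := Hh_succ α (by omega : q.length - 1 < q.length)
    rw [show q.length - 1 + 1 = q.length by omega] at hstep
    have hfin : Hh α q q.length = 0 := by
      rw [Hh_of_length_le α (le_refl _)]; exact htq
    have : q[q.length - 1] = false := by
      have := List.getElem?_eq_getElem (l := q) (i := q.length - 1) (by omega)
      rw [this] at hl
      exact (Option.some_inj.1 hl)
    rw [this] at hstep
    simp at hstep
    omega
  -- there is an interior zero
  have hzx : ∃ t, 1 < t ∧ t ≤ q.length - 1 ∧ Hh α q t = 0 :=
    upcross α q 0 (by omega) (by omega) (by omega)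
  obtain ⟨t0, ht01, ht02, ht03⟩ := hzx
  set z := zfirst α q with hzdef
  have hwit : t0 ∈ {t | 0 < t ∧ Hh α q t = 0} := ⟨by omega, ht03⟩
  have hzmem : 0 < z ∧ Hh α q z = 0 := by
    have := Nat.sInf_mem (⟨t0, hwit⟩ : {t | 0 < t ∧ Hh α q t = 0}.Nonempty)
    exact this
  have hzle : z ≤ t0 := Nat.sInf_le hwit
  have hzmin : ∀ t, 0 < t → t < z → Hh α q t ≠ 0 := by
    intro t h0 hlt hzero
    exact Nat.notMem_of_lt_sInf hlt ⟨h0, hzero⟩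
  have hzlt : z < q.length := by omega
  -- heights before z are negative
  have hneg : ∀ t, 0 < t → t < z → Hh α q t < 0 := by
    intro t
    induction t with
    | zero => omega
    | succ n ih =>
      intro _ hlt
      rcases Nat.eq_zero_or_pos n with h | h
      · rw [h]; rw [show 0 + 1 = 1 by omega, hH1]; omega
      · have h1 := ih (by omega) (by omega)
        have h2 := Hh_step_le α q n
        have h3 := hzmin (n+1) (by omega) hlt
        omega
  have hz2 : 2 ≤ z := by
    rcases Nat.lt_or_ge z 2 with h | h
    · interval_cases z
      · omega
      · rw [hH1] at hzmem; omega
    · exact h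
  -- step into the zero is an E-step
  have hstep := step_true α (p := q) (t := z - 1) (by omega)
    (by rw [show z - 1 + 1 = z by omega, hzmem.2]
        exact hneg (z-1) (by omega) (by omega))
  have hqz1 : q[z - 1]? = some true := by
    rw [List.getElem?_eq_getElem (by omega : z - 1 < q.length), hstep.1]
  have hqz : q[z]? = some true := by
    have := hg (z - 1) (by omega) (by rw [show z - 1 + 1 = z by omega]; exact hzmem.2)
    rw [show z - 1 + 1 = z by omega] at this
    rw [← this]
    exact hqz1
  set c := q.take z with hcdef
  set d := q.drop z with hddef
  have hcd : c ++ d = q := List.take_append_drop z q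
  have hlc : c.length = z := by rw [hcdef, List.length_take]; omega
  have hld : d.length = q.length - z := by rw [hddef, List.length_drop]
  have htc : ht α c = 0 := hzmem.2
  have htd : ht α d = 0 := by
    have := ht_append α c d
    rw [hcd] at this
    omega
  have hgq : Good α (d ++ c) := by
    apply good_rotate htc htd _ ?_
    · rw [hcd]; exact hg
    · rw [List.getLast?_eq_getElem?, List.head?_eq_getElem?]
      rw [hddef, List.getElem?_drop, hld]
      rw [show z + (q.length - z - 1) = q.length - 1 by omega]
      rw [hcdef, List.getElem?_take_of_lt (by omega : 0 < z)]
      rw [hl, hf]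
  have hcount : ∀ x : Bool, (d ++ c).count x = q.count x := by
    intro x
    rw [List.count_append, ← hcd, List.count_append]
    omega
  have hInL : InL α 1 k (d ++ c) := ⟨by rw [hcount]; exact hq.1, by rw [hcount]; exact hq.2⟩
  have hlenq : (d ++ c).length = q.length := by
    rw [List.length_append, ← hcd, List.length_append]
    omega
  have hq0 : (d ++ c)[0]? = some true := by
    rw [List.getElem?_append_left (by omega : 0 < d.length), hddef, List.getElem?_drop,
      Nat.add_zero]
    exact hqz
  have hqlast : (d ++ c)[(d ++ c).length - 1]? = some true := by
    rw [hlenq, List.getElem?_append_right (by omega : d.length ≤ q.length - 1)]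
    rw [hcdef, List.getElem?_take_of_lt (by omega : q.length - 1 - d.length < z)]
    rw [show q.length - 1 - d.length = z - 1 by omega]
    exact hqz1
  have hzl : zlast α (d ++ c) = q.length - z := by
    apply zlast_eq (by omega)
    · right
      constructor
      · omega
      · rw [show q.length - z = d.length by omega, Hh_append_left α c (le_refl _),
          Hh_of_length_le α (le_refl _)]
        exact htd
    · intro t h1 h2
      rw [hlenq] at h2
      have hsplit : t = d.length + (t - d.length) := by omega
      rw [hsplit, Hh_append_right α d c, htd]
      rw [hcdef, Hh_take α q (by omega : t - d.length ≤ z)]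
      have := hzmin (t - d.length) (by omega) (by omega)
      omega
  have hmid : (d ++ c)[q.length - z]? = some false := by
    rw [show q.length - z = d.length by omega,
      List.getElem?_append_right (le_refl _), Nat.sub_self]
    rw [hcdef, List.getElem?_take_of_lt (by omega : 0 < z)]
    exact hf
  refine ⟨hInL, hgq, hq0, hqlast, hzl, hmid, ?_⟩
  rw [show q.length - z = d.length by omega, List.drop_left, List.take_left, hcd]

end S12

namespace S12

lemma tstar_spec {α : ℕ} {v : ℤ} {q : List Bool} {t0 : ℕ} (h0 : t0 ≤ q.length - 1)
    (h1 : Hh α q t0 = v) (h2 : 0 < t0) :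
    0 < tstar α v q ∧ tstar α v q ≤ q.length - 1 ∧ Hh α q (tstar α v q) = v ∧
      (∀ t, tstar α v q < t → t ≤ q.length - 1 → Hh α q t ≠ v) := by
  unfold tstar
  have hle := Nat.le_findGreatest (P := fun t => Hh α q t = v) (n := q.length - 1) h0 h1
  have hP := Nat.findGreatest_of_ne_zero (P := fun t => Hh α q t = v)
    (n := q.length - 1) rfl (by omega)
  refine ⟨by omega, Nat.findGreatest_le _, hP, ?_⟩
  intro t hlt hle2 hv
  exact Nat.findGreatest_is_greatest hlt hle2 hv

/-- Case B forward. -/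
lemma caseB_forward (hα : 1 ≤ α) (hk : 1 ≤ k) {p : List Bool} (hp : InL α 1 k p)
    (hg : Good α p) (hf : p[0]? = some true) (hl : p[p.length - 1]? = some true)
    (hz : p[zlast α p]? = some true) :
    1 ≤ Hh α p (jx α p) ∧ Hh α p (jx α p) + 1 ≤ α ∧
    InL α 1 k (p.take (jx α p) ++ ((p.drop (jx α p + 1)).reverse ++ [false])) ∧
    Good α (p.take (jx α p) ++ ((p.drop (jx α p + 1)).reverse ++ [false])) ∧
    (p.take (jx α p) ++ ((p.drop (jx α p + 1)).reverse ++ [false]))[0]? = some true ∧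
    (p.take (jx α p) ++ ((p.drop (jx α p + 1)).reverse ++ [false]))[(p.take (jx α p) ++
      ((p.drop (jx α p + 1)).reverse ++ [false])).length - 1]? = some false ∧
    tstar α (Hh α p (jx α p))
      (p.take (jx α p) ++ ((p.drop (jx α p + 1)).reverse ++ [false])) = jx α p ∧
    (letI q := p.take (jx α p) ++ ((p.drop (jx α p + 1)).reverse ++ [false]);
      q.take (jx α p) ++ ([false] ++ ((q.drop (jx α p)).dropLast).reverse) = p) := by
  obtain ⟨hlen, hlen2, htp⟩ := basicL hα hk hp
  set z := zlast α p with hzdef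
  have hzle : z ≤ p.length - 1 := zlast_le α p
  have hz0 : Hh α p z = 0 := by
    rcases Nat.eq_zero_or_pos z with h | h
    · rw [h]; simp
    · exact zlast_spec h
  -- height at the end
  have hfin : Hh α p p.length = 0 := by
    rw [Hh_of_length_le α (le_refl _)]; exact htp
  have hHl1 : Hh α p (p.length - 1) = -1 := by
    have hstep := Hh_succ α (by omega : p.length - 1 < p.length)
    rw [show p.length - 1 + 1 = p.length by omega] at hstep
    have : p[p.length - 1] = true := by
      have := List.getElem?_eq_getElem (l := p) (i := p.length - 1) (by omega)
      rw [this] at hl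
      exact (Option.some_inj.1 hl)
    rw [this] at hstep
    simp at hstep
    omega
  -- z is not the last index
  have hzne : z ≤ p.length - 2 := by
    rcases Nat.lt_or_ge z (p.length - 1) with h | h
    · omega
    · exfalso
      have hzeq : z = p.length - 1 := by omega
      rcases Nat.eq_zero_or_pos z with h0 | h0
      · omega
      · rw [hzeq] at hz0; omega
  -- the set defining jx is nonempty
  have hwit : (p.length - 2) ∈ {t | z ≤ t ∧ Hh α p (t + 1) < 0} := by
    constructor
    · omega
    · rw [show p.length - 2 + 1 = p.length - 1 by omega, hHl1]; omega
  set j := jx α p with hjdef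
  have hjmem : z ≤ j ∧ Hh α p (j + 1) < 0 := by
    have := Nat.sInf_mem (⟨p.length - 2, hwit⟩ :
      {t | z ≤ t ∧ Hh α p (t + 1) < 0}.Nonempty)
    exact this
  have hjle : j ≤ p.length - 2 := Nat.sInf_le hwit
  have hjmin : ∀ t, z ≤ t → t < j → 0 ≤ Hh α p (t + 1) := by
    intro t h1 h2
    by_contra h3
    exact Nat.notMem_of_lt_sInf h2 ⟨h1, by omega⟩
  -- positivity on (z, j]
  have hpos : ∀ t, z < t → t ≤ j → 0 < Hh α p t := by
    intro t h1 h2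
    have hne := zlast_is_greatest (α := α) (p := p) (t := t) h1 (by omega)
    have := hjmin (t - 1) (by omega) (by omega)
    rw [show t - 1 + 1 = t by omega] at this
    omega
  -- step at z is an E-step, hence j > z
  have hzstep : Hh α p (z + 1) = 1 := by
    have hstep := Hh_succ α (by omega : z < p.length)
    have : p[z] = true := by
      have := List.getElem?_eq_getElem (l := p) (i := z) (by omega)
      rw [this] at hz
      exact (Option.some_inj.1 hz)
    rw [this] at hstep
    simp at hstep
    omega
  have hjgt : z < j := by
    rcases Nat.lt_or_ge z j with h | h
    · exact h
    · exfalso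
      have : z = j := by omega
      rw [← this, hzstep] at hjmem
      omega
  set v := Hh α p j with hvdef
  have hv1 : 1 ≤ v := hpos j hjgt (le_refl _)
  -- step at j is an N-step
  have hjstep := step_false α (p := p) (t := j) (by omega) (by omega)
  have hvα : v + 1 ≤ α := by
    have := hjstep.2
    omega
  -- negativity after j
  have hnegafter : ∀ t, j < t → t < p.length → Hh α p t < 0 := by
    intro t
    induction t with
    | zero => omega
    | succ n ih =>
      intro h1 h2
      rcases Nat.lt_or_ge j n with h3 | h3
      · have h4 := ih (by omega) (by omega)
        have h5 := Hh_step_le α p n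
        have h6 := zlast_is_greatest (α := α) (p := p) (t := n + 1) (by omega) (by omega)
        omega
      · have : n = j := by omega
        rw [this]
        exact hjmem.2
  set A := p.take j with hAdef
  set D := p.drop (j + 1) with hDdef
  set R := D.reverse with hRdef
  set q := A ++ (R ++ [false]) with hqdef
  have hlA : A.length = j := by rw [hAdef, List.length_take]; omega
  have hlD : D.length = p.length - (j + 1) := by rw [hDdef, List.length_drop]
  have hlR : R.length = D.length := by rw [hRdef, List.length_reverse]
  have hlq : q.length = p.length := by
    rw [hqdef, List.length_append, List.length_append, List.length_cons, List.length_nil,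
      hlA, hlR, hlD]
    omega
  have htA : ht α A = v := hvdef
  have hHD : ∀ m, Hh α D m = Hh α p (j + 1 + m) - Hh α p (j + 1) := by
    intro m
    rw [hDdef, Hh_drop]
  have htD : ht α D = - Hh α p (j + 1) := by
    have := hHD D.length
    rw [Hh_of_length_le α (le_refl _)] at this
    rw [hlD, show j + 1 + (p.length - (j+1)) = p.length by omega, hfin] at this
    omega
  -- the key height formula for q
  have hQs : ∀ s, s ≤ D.length → Hh α q (j + s) = v - Hh α p (p.length - s) := by
    intro s hs
    have h1 : Hh α q (j + s) = ht α A + Hh α (R ++ [false]) s := by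
      rw [hqdef, ← hlA, Hh_append_right]
    have h2 : Hh α (R ++ [false]) s = Hh α R s := Hh_append_left α [false] (by omega)
    have h3 : Hh α R s = ht α D - Hh α D (D.length - s) := by
      rw [hRdef]
      exact Hh_reverse α D (by omega)
    have h4 := hHD (D.length - s)
    rw [show j + 1 + (D.length - s) = p.length - s by omega] at h4
    rw [h1, h2, h3, h4, htA, htD]
    ring
  -- heights of q agree with p up to j
  have hQlow : ∀ t, t ≤ j → Hh α q t = Hh α p t := by
    intro t h
    rw [hqdef, Hh_append_left α _ (by omega), hAdef, Hh_take α p h]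
  -- q is good
  have hgq : Good α q := by
    intro i hi h0
    rw [hlq] at hi
    rcases Nat.lt_trichotomy (i + 1) j with hc | hc | hc
    · have e0 : Hh α p (i + 1) = 0 := by rw [← hQlow (i+1) (by omega)]; exact h0
      have := hg i (by omega) e0
      have e1 : q[i]? = p[i]? := by
        rw [hqdef, List.getElem?_append_left (by omega : i < A.length), hAdef,
          List.getElem?_take_of_lt (by omega)]
      have e2 : q[i+1]? = p[i+1]? := by
        rw [hqdef, List.getElem?_append_left (by omega : i + 1 < A.length), hAdef,
          List.getElem?_take_of_lt (by omega)]
      rw [e1, e2]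
      exact this
    · exfalso
      rw [hc] at h0
      rw [hQlow j (le_refl _)] at h0
      omega
    · exfalso
      have hs : i + 1 - j ≤ D.length := by omega
      have := hQs (i + 1 - j) hs
      rw [show j + (i + 1 - j) = i + 1 by omega] at this
      rw [this] at h0
      have := hnegafter (p.length - (i + 1 - j)) (by omega) (by omega)
      omega
  -- counts
  have hdropj : p.drop j = false :: D := by
    rw [hDdef]
    have := List.drop_eq_getElem_cons (l := p) (i := j) (by omega)
    rw [hjstep.1] at this
    exact this
  have hpsplit : A ++ (false :: D) = p := by
    rw [← hdropj, hAdef]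
    exact List.take_append_drop j p
  have hcount : ∀ c : Bool, q.count c = p.count c := by
    intro c
    rw [hqdef, ← hpsplit]
    cases c <;> (simp [List.count_append, List.count_cons, hRdef]; try omega)
  have hInL : InL α 1 k q := ⟨by rw [hcount]; exact hp.1, by rw [hcount]; exact hp.2⟩
  -- first and last steps of q
  have hq0 : q[0]? = some true := by
    rw [hqdef, List.getElem?_append_left (by omega : 0 < A.length), hAdef,
      List.getElem?_take_of_lt (by omega)]
    exact hf
  have hqlast : q[q.length - 1]? = some false := by
    rw [hlq, hqdef, List.getElem?_append_right (by omega : A.length ≤ p.length - 1),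
      List.getElem?_append_right (by rw [hlA, hlR]; omega)]
    rw [hlA, hlR, hlD, show p.length - 1 - j - (p.length - (j+1)) = 0 by omega]
    rfl
  -- t* of the image is j
  have hts : tstar α v q = j := by
    apply tstar_eq (by omega)
    · rw [hQlow j (le_refl _)]
    · intro t h1 h2
      rw [hlq] at h2
      have := hQs (t - j) (by omega)
      rw [show j + (t - j) = t by omega] at this
      rw [this]
      have := hnegafter (p.length - (t - j)) (by omega) (by omega)
      omega
  refine ⟨hv1, hvα, hInL, hgq, hq0, hqlast, hts, ?_⟩
  have e1 : q.take j = A := by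
    rw [hqdef]
    exact List.take_left' hlA
  have e2 : q.drop j = R ++ [false] := by
    rw [hqdef]
    exact List.drop_left' hlA
  rw [e1, e2, List.dropLast_concat, hRdef, List.reverse_reverse]
  rw [show A ++ ([false] ++ D) = A ++ (false :: D) by simp]
  exact hpsplit

end S12

namespace S12

/-- Case B backward. -/
lemma caseB_backward (hα : 1 ≤ α) (hk : 1 ≤ k) {q : List Bool} {v : ℤ}
    (hq : InL α 1 k q) (hg : Good α q) (hf : q[0]? = some true)
    (hl : q[q.length - 1]? = some false) (hv1 : 1 ≤ v) (hvα : v + 1 ≤ α) :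
    (letI t := tstar α v q
     letI p' := q.take t ++ ([false] ++ ((q.drop t).dropLast).reverse)
     InL α 1 k p' ∧ Good α p' ∧ p'[0]? = some true ∧
     p'[p'.length - 1]? = some true ∧ p'[zlast α p']? = some true ∧
     jx α p' = t ∧ Hh α p' (jx α p') = v ∧
     p'.take (jx α p') ++ ((p'.drop (jx α p' + 1)).reverse ++ [false]) = q) := by
  obtain ⟨hlen, hlen2, htq⟩ := basicL hα hk hq
  have hfin : Hh α q q.length = 0 := by
    rw [Hh_of_length_le α (le_refl _)]; exact htq
  have hHl1 : Hh α q (q.length - 1) = α := by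
    have hstep := Hh_succ α (by omega : q.length - 1 < q.length)
    rw [show q.length - 1 + 1 = q.length by omega] at hstep
    have : q[q.length - 1] = false := by
      have := List.getElem?_eq_getElem (l := q) (i := q.length - 1) (by omega)
      rw [this] at hl
      exact (Option.some_inj.1 hl)
    rw [this] at hstep
    simp at hstep
    omega
  -- existence of a visit to level v
  obtain ⟨t0, ht01, ht02, ht03⟩ :=
    upcross α q v (by omega : 0 ≤ q.length - 1) (by simp; omega) (by omega)
  obtain ⟨hts0, htsle, htsv, htsgr⟩ := tstar_spec ht02 ht03 ht01
  set t := tstar α v q with htdef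
  -- heights after t* exceed v
  have hgtv : ∀ s, t < s → s ≤ q.length - 1 → v < Hh α q s := by
    intro s h1 h2
    rcases lt_or_ge v (Hh α q s) with h | h
    · exact h
    · exfalso
      have hne := htsgr s h1 h2
      obtain ⟨s', hs1, hs2, hs3⟩ := upcross α q v h2 (by omega) (by omega)
      exact htsgr s' (by omega) hs2 hs3
  have htlt : t < q.length - 1 := by
    rcases Nat.lt_or_ge t (q.length - 1) with h | h
    · exact h
    · exfalso
      have : t = q.length - 1 := by omega
      rw [this, hHl1] at htsv
      omega
  -- the step at t* is an E-step
  have hstept : q[t] = true := by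
    have := step_true α (p := q) (t := t) (by omega)
      (by rw [htsv]; exact hgtv (t+1) (by omega) (by omega))
    exact this.1
  set C := q.take t with hCdef
  set E := q.drop t with hEdef
  set r := E.dropLast with hrdef
  set p' := C ++ ([false] ++ r.reverse) with hpdef
  have hlC : C.length = t := by rw [hCdef, List.length_take]; omega
  have hlE : E.length = q.length - t := by rw [hEdef, List.length_drop]
  have hlr : r.length = q.length - t - 1 := by
    rw [hrdef, List.length_dropLast, hlE]
  have hlp : p'.length = q.length := by
    rw [hpdef, List.length_append, List.length_append, List.length_cons, List.length_nil,
      hlC, List.length_reverse, hlr]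
    omega
  have hEne : E ≠ [] := by
    intro h
    have := hlE
    rw [h] at this
    simp at this
    omega
  have hElast : E.getLast? = some false := by
    rw [List.getLast?_eq_getElem?, hEdef, List.getElem?_drop, List.length_drop]
    rw [show t + (q.length - t - 1) = q.length - 1 by omega]
    exact hl
  have hEsplit : r ++ [false] = E := by
    have h1 := List.dropLast_concat_getLast hEne
    have h2 : E.getLast hEne = false := by
      rw [List.getLast?_eq_getLast hEne] at hElast
      exact Option.some_inj.1 hElast
    rw [h2] at h1
    exact h1
  have hCE : C ++ E = q := List.take_append_drop t q
  have htC : ht α C = v := htsv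
  have htE : ht α E = -v := by
    have := ht_append α C E
    rw [hCE] at this
    omega
  have htr : ht α r = α - v := by
    have := ht_append α r [false]
    rw [hEsplit] at this
    rw [ht_singleton] at this
    simp at this
    omega
  have hHE : ∀ m, Hh α E m = Hh α q (t + m) - v := by
    intro m
    rw [hEdef, Hh_drop, htsv]
  have hHr : ∀ m, m ≤ r.length → Hh α r m = Hh α q (t + m) - v := by
    intro m hm
    rw [hrdef, List.dropLast_eq_take, Hh_take α E (by rw [hlE]; rw [hlr] at hm; omega)]
    exact hHE m
  -- key height formula
  have hPs : ∀ s, s ≤ r.length → Hh α p' (t + 1 + s) = v - Hh α q (q.length - 1 - s) := by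
    intro s hs
    have h1 : Hh α p' (t + (1 + s)) = ht α C + Hh α ([false] ++ r.reverse) (1 + s) := by
      rw [hpdef, ← hlC, Hh_append_right]
    have h2 : Hh α ([false] ++ r.reverse) (1 + s) =
        ht α ([false] : List Bool) + Hh α r.reverse s := by
      have := Hh_append_right α ([false] : List Bool) r.reverse s
      simpa using this
    have h3 : Hh α r.reverse s = ht α r - Hh α r (r.length - s) := Hh_reverse α r hs
    have h4 := hHr (r.length - s) (by omega)
    rw [show t + (r.length - s) = q.length - 1 - s by omega] at h4
    rw [show t + 1 + s = t + (1 + s) by omega, h1, h2, h3, h4, htC, htr, ht_singleton]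
    simp
    ring
  have hPlow : ∀ s, s ≤ t → Hh α p' s = Hh α q s := by
    intro s h
    rw [hpdef, Hh_append_left α _ (by omega), hCdef, Hh_take α q h]
  have hPneg : ∀ s, t < s → s < q.length → Hh α p' s < 0 := by
    intro s h1 h2
    have hss : s - t - 1 ≤ r.length := by omega
    have := hPs (s - t - 1) (by omega)
    rw [show t + 1 + (s - t - 1) = s by omega] at this
    rw [this]
    have := hgtv (q.length - 1 - (s - t - 1)) (by omega) (by omega)
    omega
  -- goodness of p'
  have hgp : Good α p' := by
    intro i hi h0
    rw [hlp] at hi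
    rcases Nat.lt_trichotomy (i + 1) t with hc | hc | hc
    · have e0 : Hh α q (i + 1) = 0 := by rw [← hPlow (i+1) (by omega)]; exact h0
      have := hg i (by omega) e0
      have e1 : p'[i]? = q[i]? := by
        rw [hpdef, List.getElem?_append_left (by omega : i < C.length), hCdef,
          List.getElem?_take_of_lt (by omega)]
      have e2 : p'[i+1]? = q[i+1]? := by
        rw [hpdef, List.getElem?_append_left (by omega : i + 1 < C.length), hCdef,
          List.getElem?_take_of_lt (by omega)]
      rw [e1, e2]
      exact this
    · exfalso
      rw [hc, hPlow t (le_refl _), htsv] at h0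
      omega
    · exfalso
      have := hPneg (i+1) hc (by omega)
      omega
  -- counts
  have hcount : ∀ c : Bool, p'.count c = q.count c := by
    intro c
    rw [hpdef, ← hCE, ← hEsplit]
    cases c <;> (simp [List.count_append, List.count_cons]; try omega)
  have hInL : InL α 1 k p' := ⟨by rw [hcount]; exact hq.1, by rw [hcount]; exact hq.2⟩
  -- first and last steps of p'
  have hp0 : p'[0]? = some true := by
    rw [hpdef, List.getElem?_append_left (by omega : 0 < C.length), hCdef,
      List.getElem?_take_of_lt (by omega)]
    exact hf
  have hrne : 0 < r.length := by omega
  have hr0 : r[0]? = q[t]? := by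
    rw [hrdef, List.dropLast_eq_take, List.getElem?_take_of_lt (by rw [hlE]; omega),
      hEdef, List.getElem?_drop, Nat.add_zero]
  have hplast : p'[p'.length - 1]? = some true := by
    rw [hlp, hpdef, List.getElem?_append_right (by omega : C.length ≤ q.length - 1),
      List.getElem?_append_right (by simp [hlC]; omega)]
    rw [hlC, List.length_cons, List.length_nil]
    rw [List.getElem?_reverse (by omega : q.length - 1 - t - 1 < r.length)]
    rw [show r.length - 1 - (q.length - 1 - t - 1) = 0 by omega, hr0]
    rw [List.getElem?_eq_getElem (by omega : t < q.length), hstept]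
  -- structure of interior zeros of p'
  set z0 := zlast α q with hz0def
  have hz0le : z0 ≤ q.length - 1 := zlast_le α q
  have hz0lt : z0 < t := by
    rcases Nat.eq_zero_or_pos z0 with h | h
    · omega
    · have h0 := zlast_spec (α := α) (p := q) h
      rcases Nat.lt_trichotomy z0 t with hlt | heq | hgt
      · exact hlt
      · exfalso; rw [← hz0def, heq, htsv] at h0; omega
      · exfalso
        have := hgtv z0 hgt (by omega)
        rw [← hz0def] at h0
        omega
  have hqpos : ∀ s, z0 < s → s ≤ t → 0 < Hh α q s := by
    intro s h1 h2
    have hne := zlast_is_greatest (α := α) (p := q) (t := s) h1 (by omega)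
    rcases lt_or_ge 0 (Hh α q s) with h | h
    · exact h
    · exfalso
      obtain ⟨s', hs1, hs2, hs3⟩ := upcross α q 0 (by omega : s ≤ q.length - 1)
        (by omega) (by omega)
      exact zlast_is_greatest (α := α) (p := q) (t := s') (by omega) hs2 hs3
  have hzlp : zlast α p' = z0 := by
    apply zlast_eq (by omega)
    · rcases Nat.eq_zero_or_pos z0 with h | h
      · left; exact h
      · right
        refine ⟨h, ?_⟩
        rw [hPlow z0 (by omega)]
        exact zlast_spec h
    · intro s h1 h2
      rw [hlp] at h2
      rcases le_or_gt s t with h3 | h3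
      · rw [hPlow s h3]
        exact fun h0 => absurd h0 (by have := hqpos s h1 h3; omega)
      · have := hPneg s h3 (by omega)
        omega
  have hpz0 : p'[zlast α p']? = some true := by
    rw [hzlp]
    rcases Nat.eq_zero_or_pos z0 with h | h
    · rw [h]; exact hp0
    · have e1 : p'[z0]? = q[z0]? := by
        rw [hpdef, List.getElem?_append_left (by omega : z0 < C.length), hCdef,
          List.getElem?_take_of_lt (by omega)]
      rw [e1]
      have hb : q[z0] = true := by
        cases hb : q[z0] with
        | true => rfl
        | false =>
          exfalso
          have hstep := Hh_succ α (by omega : z0 < q.length)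
          rw [hb] at hstep
          simp at hstep
          have h0 := zlast_spec (α := α) (p := q) h
          rw [← hz0def] at h0
          have := hqpos (z0 + 1) (by omega) (by omega)
          omega
      rw [List.getElem?_eq_getElem (by omega : z0 < q.length), hb]
  have hjxp : jx α p' = t := by
    have hmem : t ∈ {s | zlast α p' ≤ s ∧ Hh α p' (s + 1) < 0} := by
      constructor
      · rw [hzlp]; omega
      · have := hPs 0 (by omega)
        rw [Nat.add_zero, Nat.sub_zero] at this
        rw [this, hHl1]
        omega
    have hle : jx α p' ≤ t := Nat.sInf_le hmem
    have hmm : jx α p' ∈ {s | zlast α p' ≤ s ∧ Hh α p' (s + 1) < 0} := by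
      have := Nat.sInf_mem (⟨t, hmem⟩ :
        {s | zlast α p' ≤ s ∧ Hh α p' (s + 1) < 0}.Nonempty)
      exact this
    rcases Nat.lt_or_ge (jx α p') t with h | h
    · exfalso
      have h1 := hmm.1
      rw [hzlp] at h1
      have h2 := hmm.2
      rw [hPlow (jx α p' + 1) (by omega)] at h2
      have := hqpos (jx α p' + 1) (by omega) (by omega)
      omega
    · omega
  have hvp : Hh α p' (jx α p') = v := by
    rw [hjxp, hPlow t (le_refl _), htsv]
  refine ⟨hInL, hgp, hp0, hplast, hpz0, hjxp, hvp, ?_⟩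
  rw [hjxp]
  have e1 : p'.take t = C := by
    rw [hpdef]
    exact List.take_left' hlC
  have e2 : p'.drop (t + 1) = r.reverse := by
    rw [hpdef, show C ++ ([false] ++ r.reverse) = (C ++ [false]) ++ r.reverse by simp]
    exact List.drop_left' (by simp [hlC])
  rw [e1, e2, List.reverse_reverse, hEsplit]
  exact hCE

end S12

namespace S12

noncomputable def rotA (α : ℕ) (p : List Bool) : List Bool :=
  p.drop (zlast α p) ++ p.take (zlast α p)

noncomputable def rotN (α : ℕ) (q : List Bool) : List Bool :=
  q.drop (zfirst α q) ++ q.take (zfirst α q)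

noncomputable def fB (α : ℕ) (p : List Bool) : ℤ × List Bool :=
  (Hh α p (jx α p), p.take (jx α p) ++ ((p.drop (jx α p + 1)).reverse ++ [false]))

noncomputable def gB (α : ℕ) (x : ℤ × List Bool) : List Bool :=
  x.2.take (tstar α x.1 x.2) ++ ([false] ++ ((x.2.drop (tstar α x.1 x.2)).dropLast).reverse)

lemma card_eq (α k : ℕ) (hα : 1 ≤ α) (hk : 1 ≤ k) :
    {p | InL α 1 k p ∧ BounceFree α 1 p ∧ FirstStep p true ∧ LastStep p true}.ncard
      = {p | InL α 1 k p ∧ BounceFree α 1 p ∧ FirstStep p false ∧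
          LastStep p false}.ncard
        + (α - 1) * {p | InL α 1 k p ∧ BounceFree α 1 p ∧ FirstStep p true ∧
            LastStep p false}.ncard := by
  classical
  set EEs : Set LatticePath :=
    {p | InL α 1 k p ∧ BounceFree α 1 p ∧ FirstStep p true ∧ LastStep p true} with hEEs
  set NNs : Set LatticePath :=
    {p | InL α 1 k p ∧ BounceFree α 1 p ∧ FirstStep p false ∧ LastStep p false} with hNNs
  set ENs : Set LatticePath :=
    {p | InL α 1 k p ∧ BounceFree α 1 p ∧ FirstStep p true ∧ LastStep p false} with hENs
  have memEE : ∀ p, p ∈ EEs ↔ InL α 1 k p ∧ Good α p ∧ p[0]? = some true ∧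
      p[p.length - 1]? = some true := by
    intro p
    rw [hEEs, Set.mem_setOf_eq, bounceFree_iff_good, FirstStep, LastStep,
      List.head?_eq_getElem?, List.getLast?_eq_getElem?]
  have memNN : ∀ p, p ∈ NNs ↔ InL α 1 k p ∧ Good α p ∧ p[0]? = some false ∧
      p[p.length - 1]? = some false := by
    intro p
    rw [hNNs, Set.mem_setOf_eq, bounceFree_iff_good, FirstStep, LastStep,
      List.head?_eq_getElem?, List.getLast?_eq_getElem?]
  have memEN : ∀ p, p ∈ ENs ↔ InL α 1 k p ∧ Good α p ∧ p[0]? = some true ∧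
      p[p.length - 1]? = some false := by
    intro p
    rw [hENs, Set.mem_setOf_eq, bounceFree_iff_good, FirstStep, LastStep,
      List.head?_eq_getElem?, List.getLast?_eq_getElem?]
  have hfinlen : {l : List Bool | l.length = α * k + k}.Finite :=
    List.finite_length_eq Bool (α * k + k)
  have hfin : ∀ S : Set LatticePath, (∀ p ∈ S, InL α 1 k p) → S.Finite := by
    intro S hS
    apply hfinlen.subset
    intro p hp
    exact (basicL hα hk (hS p hp)).1
  have hfinEE : EEs.Finite := hfin _ (fun p hp => ((memEE p).1 hp).1)
  have hfinNN : NNs.Finite := hfin _ (fun p hp => ((memNN p).1 hp).1)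
  have hfinEN : ENs.Finite := hfin _ (fun p hp => ((memEN p).1 hp).1)
  set A := EEs ∩ {p | p[zlast α p]? = some false} with hA
  set B := EEs ∩ {p | p[zlast α p]? = some true} with hB
  have hunion : EEs = A ∪ B := by
    apply Set.Subset.antisymm
    · intro p hp
      obtain ⟨hp1, hp2, hp3, hp4⟩ := (memEE p).1 hp
      have hlen := (basicL hα hk hp1).1
      have hlen2 := (basicL hα hk hp1).2.1
      have hzlt : zlast α p < p.length := by
        have := zlast_le α p
        omega
      cases hb : p[zlast α p]'hzlt
      · left
        exact ⟨hp, by rw [Set.mem_setOf_eq, List.getElem?_eq_getElem hzlt, hb]⟩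
      · right
        exact ⟨hp, by rw [Set.mem_setOf_eq, List.getElem?_eq_getElem hzlt, hb]⟩
    · rintro p (hp | hp) <;> exact hp.1
  have hdisj : Disjoint A B := by
    rw [Set.disjoint_left]
    rintro p ⟨_, h1⟩ ⟨_, h2⟩
    rw [Set.mem_setOf_eq] at h1 h2
    rw [h1] at h2
    cases h2
  have hfinA : A.Finite := hfinEE.subset Set.inter_subset_left
  have hfinB : B.Finite := hfinEE.subset Set.inter_subset_left
  have hcardsplit : EEs.ncard = A.ncard + B.ncard := by
    rw [hunion]
    exact Set.ncard_union_eq hdisj hfinA hfinB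
  -- bijection for A
  have keyA : ∀ p ∈ A, rotA α p ∈ NNs ∧ rotN α (rotA α p) = p := by
    intro p hp
    obtain ⟨hpe, hpz⟩ := hp
    obtain ⟨hp1, hp2, hp3, hp4⟩ := (memEE p).1 hpe
    rw [Set.mem_setOf_eq] at hpz
    obtain ⟨c1, c2, c3, c4, c5, c6⟩ := caseA_forward hα hk hp1 hp2 hp3 hp4 hpz
    refine ⟨(memNN _).2 ⟨c1, c2, c3, c4⟩, ?_⟩
    show (rotA α p).drop (zfirst α (rotA α p)) ++ (rotA α p).take (zfirst α (rotA α p)) = p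
    unfold rotA
    rw [c5]
    exact c6
  have hbijA : Set.BijOn (rotA α) A NNs := by
    refine ⟨fun p hp => (keyA p hp).1, ?_, ?_⟩
    · intro p1 h1 p2 h2 heq
      have e1 := (keyA p1 h1).2
      have e2 := (keyA p2 h2).2
      rw [← e1, ← e2, heq]
    · intro q hq
      obtain ⟨hq1, hq2, hq3, hq4⟩ := (memNN q).1 hq
      obtain ⟨c1, c2, c3, c4, c5, c6, c7⟩ := caseA_backward hα hk hq1 hq2 hq3 hq4
      refine ⟨rotN α q, ⟨?_, ?_⟩, ?_⟩
      · exact (memEE _).2 ⟨c1, c2, c3, c4⟩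
      · show (rotN α q)[zlast α (rotN α q)]? = some false
        unfold rotN
        rw [c5]
        exact c6
      · show (rotN α q).drop (zlast α (rotN α q)) ++ (rotN α q).take (zlast α (rotN α q)) = q
        unfold rotN
        rw [c5]
        exact c7
  have hcardA : A.ncard = NNs.ncard := by
    rw [← hbijA.image_eq]
    exact (Set.ncard_image_of_injOn hbijA.injOn).symm
  -- bijection for B
  have keyB : ∀ p ∈ B, (fB α p).1 ∈ Set.Ioo (0:ℤ) (α:ℤ) ∧ (fB α p).2 ∈ ENs ∧
      gB α (fB α p) = p := by
    intro p hp
    obtain ⟨hpe, hpz⟩ := hp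
    obtain ⟨hp1, hp2, hp3, hp4⟩ := (memEE p).1 hpe
    rw [Set.mem_setOf_eq] at hpz
    obtain ⟨c1, c2, c3, c4, c5, c6, c7, c8⟩ := caseB_forward hα hk hp1 hp2 hp3 hp4 hpz
    refine ⟨Set.mem_Ioo.2 ⟨(by omega : (0:ℤ) < Hh α p (jx α p)),
      (by omega : Hh α p (jx α p) < (α:ℤ))⟩, (memEN _).2 ⟨c3, c4, c5, c6⟩, ?_⟩
    show (fB α p).2.take (tstar α (fB α p).1 (fB α p).2) ++
      ([false] ++ (((fB α p).2.drop (tstar α (fB α p).1 (fB α p).2)).dropLast).reverse) = p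
    unfold fB
    rw [c7]
    exact c8
  have hbijB : Set.BijOn (fB α) B ((Set.Ioo (0:ℤ) (α:ℤ)) ×ˢ ENs) := by
    refine ⟨?_, ?_, ?_⟩
    · intro p hp
      exact Set.mk_mem_prod (keyB p hp).1 (keyB p hp).2.1
    · intro p1 h1 p2 h2 heq
      have e1 := (keyB p1 h1).2.2
      have e2 := (keyB p2 h2).2.2
      rw [← e1, ← e2, heq]
    · rintro ⟨v, q⟩ hvq
      rw [Set.mem_prod] at hvq
      obtain ⟨hv, hq⟩ := hvq
      rw [Set.mem_Ioo] at hv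
      obtain ⟨hv1, hv2⟩ := hv
      obtain ⟨hq1, hq2, hq3, hq4⟩ := (memEN q).1 hq
      obtain ⟨c1, c2, c3, c4, c5, c6, c7, c8⟩ :=
        caseB_backward (v := v) hα hk hq1 hq2 hq3 hq4 (by omega) (by omega)
      refine ⟨gB α (v, q), ⟨?_, ?_⟩, ?_⟩
      · exact (memEE _).2 ⟨c1, c2, c3, c4⟩
      · show (gB α (v, q))[zlast α (gB α (v, q))]? = some true
        exact c5
      · show fB α (gB α (v, q)) = (v, q)
        unfold fB
        have e6 : jx α (gB α (v, q)) = tstar α v q := c6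
        have e7 : Hh α (gB α (v, q)) (jx α (gB α (v, q))) = v := c7
        refine Prod.ext e7 ?_
        exact c8
  have hcardB : B.ncard = ((Set.Ioo (0:ℤ) (α:ℤ)) ×ˢ ENs).ncard := by
    rw [← hbijB.image_eq]
    exact (Set.ncard_image_of_injOn hbijB.injOn).symm
  have hcardprod : ((Set.Ioo (0:ℤ) (α:ℤ)) ×ˢ ENs).ncard
      = (Set.Ioo (0:ℤ) (α:ℤ)).ncard * ENs.ncard := by
    rw [← Nat.card_coe_set_eq, ← Nat.card_coe_set_eq, ← Nat.card_coe_set_eq]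
    rw [Nat.card_congr (Equiv.Set.prod _ _)]
    exact Nat.card_prod _ _
  have hcardIoo : (Set.Ioo (0:ℤ) (α:ℤ)).ncard = α - 1 := by
    rw [← Finset.coe_Ioo, Set.ncard_coe_finset, Int.card_Ioo]
    omega
  rw [hcardsplit, hcardA, hcardB, hcardprod, hcardIoo]

end S12

/-- For `β = 1` and `α ≥ 1`: `f_ee(x) = f_nn(x) + (α−1)·f_en(x)`;
equivalently, for every `k ≥ 1`, the number of bounce-free EE-paths in `L_{1/α}(k)`
equals the number of bounce-free NN-paths plus `(α−1)` times the number of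
bounce-free EN-paths. -/
theorem statement12 (α : ℕ) (hα : 1 ≤ α) :
    feeSer α 1 = fnnSer α 1 + PowerSeries.C ((α : ℚ) - 1) * fenSer α 1 ∧
    ∀ k : ℕ, 1 ≤ k →
      {p | InL α 1 k p ∧ BounceFree α 1 p ∧ FirstStep p true ∧ LastStep p true}.ncard
        = {p | InL α 1 k p ∧ BounceFree α 1 p ∧ FirstStep p false ∧
            LastStep p false}.ncard
          + (α - 1) * {p | InL α 1 k p ∧ BounceFree α 1 p ∧ FirstStep p true ∧
              LastStep p false}.ncard := by
  constructor
  · ext n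
    simp only [feeSer, fnnSer, fenSer, gfOf, map_add, PowerSeries.coeff_mk,
      PowerSeries.coeff_C_mul]
    by_cases hn : n = 0
    · simp [hn]
    · simp only [if_neg hn]
      rw [S12.card_eq α n hα (by omega)]
      push_cast [Nat.cast_sub hα]
      ring
  · intro k hk
    exact S12.card_eq α k hα hk
end

section
/- For β = 1 and any integer α ≥ 1, g_en(x)² − g_ee(x)·g_nn(x) = g_nn(x) as formal power series over ℚ. -/
noncomputable def ich (n : ℤ) (k : ℕ) : ℚ :=
  (∏ i ∈ Finset.range k, ((n : ℚ) - i)) / (k.factorial : ℚ)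

lemma ich_zero (n : ℤ) : ich n 0 = 1 := by simp [ich]

lemma ich_succ (n : ℤ) (k : ℕ) :
    ich n (k + 1) = ich n k * (((n : ℚ) - k) / (k + 1)) := by
  have hf : ((k + 1).factorial : ℚ) = (k.factorial : ℚ) * (k + 1) := by
    rw [Nat.factorial_succ]; push_cast; ring
  have h0 : (k.factorial : ℚ) ≠ 0 := by exact_mod_cast k.factorial_ne_zero
  have h1 : ((k : ℚ) + 1) ≠ 0 := by positivity
  rw [ich, ich, Finset.prod_range_succ, hf]
  field_simp

lemma ich_pascal (n : ℤ) (k : ℕ) :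
    ich (n + 1) (k + 1) = ich n k + ich n (k + 1) := by
  have hp : (∏ i ∈ Finset.range (k + 1), (((n : ℚ) + 1) - i))
      = (∏ i ∈ Finset.range k, ((n : ℚ) - i)) * ((n : ℚ) + 1) := by
    rw [Finset.prod_range_succ']
    push_cast
    congr 1
    · exact Finset.prod_congr rfl fun i _ => by push_cast; ring
    · ring
  have hf : ((k + 1).factorial : ℚ) = (k.factorial : ℚ) * (k + 1) := by
    rw [Nat.factorial_succ]; push_cast; ring
  have h0 : (k.factorial : ℚ) ≠ 0 := by exact_mod_cast k.factorial_ne_zero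
  have h1 : ((k : ℚ) + 1) ≠ 0 := by positivity
  have hq : (∏ i ∈ Finset.range (k + 1), ((n : ℚ) - i))
      = (∏ i ∈ Finset.range k, ((n : ℚ) - i)) * ((n : ℚ) - k) :=
    Finset.prod_range_succ _ _
  rw [ich, ich, ich, hf]
  push_cast
  rw [hp, hq]
  field_simp
  ring

lemma ich_natCast (n k : ℕ) : ich (n : ℤ) k = (n.choose k : ℚ) := by
  induction k with
  | zero => simp [ich_zero]
  | succ k IH =>
    rw [ich_succ, IH]
    push_cast
    rcases le_or_gt (k + 1) n with h | h
    · have := Nat.choose_succ_right_eq n k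
      have hc : ((n.choose (k+1) : ℚ)) * (k + 1) = (n.choose k : ℚ) * ((n : ℚ) - k) := by
        have : ((n - k : ℕ) : ℚ) = (n : ℚ) - k := by
          have : k ≤ n := by omega
          push_cast [this]; ring
        rw [← this]
        exact_mod_cast Nat.choose_succ_right_eq n k
      have h1 : ((k : ℚ) + 1) ≠ 0 := by positivity
      field_simp at hc ⊢
      linarith [hc]
    · have h1 : n.choose (k+1) = 0 := Nat.choose_eq_zero_of_lt h
      rcases lt_or_eq_of_le (Nat.lt_succ_iff.mp h) with h2 | h2
      · have : n.choose k = 0 := Nat.choose_eq_zero_of_lt h2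
        simp [h1, this]
      · subst h2
        simp [h1]

noncomputable def Hser (q : ℕ) (r : ℤ) : PowerSeries ℚ :=
  PowerSeries.mk fun k => ich ((q : ℤ) * k + r) k

lemma Hser_rec (q : ℕ) (r : ℤ) :
    Hser q (r + 1) = Hser q r + PowerSeries.X * Hser q (r + q) := by
  ext k
  cases k with
  | zero => simp [Hser, ich_zero]
  | succ k =>
    simp only [Hser, PowerSeries.coeff_mk, map_add, PowerSeries.coeff_succ_X_mul]
    have hp := ich_pascal ((q : ℤ) * ((k : ℤ) + 1) + r) k
    have e1 : (q : ℤ) * ((k : ℕ) + 1 : ℕ) + (r + 1) = ((q : ℤ) * ((k : ℤ) + 1) + r) + 1 := by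
      push_cast; ring
    have e2 : (q : ℤ) * (k : ℤ) + (r + (q : ℤ)) = (q : ℤ) * ((k : ℤ) + 1) + r := by ring
    have e3 : (q : ℤ) * ((k : ℕ) + 1 : ℕ) + r = (q : ℤ) * ((k : ℤ) + 1) + r := by
      push_cast; ring
    rw [e1, e2, e3, hp, add_comm]

lemma key_coeff (q : ℕ) : ∀ n : ℕ, ∀ r s : ℤ,
    (PowerSeries.coeff n) (Hser q r * Hser q s) =
    (PowerSeries.coeff n) (Hser q (r + 1) * Hser q (s - 1)) := by
  intro n
  induction n with
  | zero =>
    intro r s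
    simp [PowerSeries.coeff_zero_eq_constantCoeff, map_mul, Hser, ich_zero,
      PowerSeries.constantCoeff_mk]
  | succ n IH =>
    have aux : ∀ m : ℕ, ∀ r s : ℤ,
        (PowerSeries.coeff n) (Hser q r * Hser q (s + m)) =
        (PowerSeries.coeff n) (Hser q (r + m) * Hser q s) := by
      intro m
      induction m with
      | zero => intro r s; norm_num
      | succ m IHm =>
        intro r s
        have h1 := IH r (s + (m + 1))
        have e1 : s + ((m : ℤ) + 1) - 1 = s + m := by ring
        rw [e1] at h1
        have h2 := IHm (r + 1) s
        have e2 : r + 1 + (m : ℤ) = r + ((m : ℤ) + 1) := by ring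
        rw [e2] at h2
        push_cast
        rw [h1, h2]
    intro r s
    have hr : Hser q (r + 1) = Hser q r + PowerSeries.X * Hser q (r + q) := Hser_rec q r
    have hs : Hser q s = Hser q (s - 1) + PowerSeries.X * Hser q (s - 1 + q) := by
      have := Hser_rec q (s - 1)
      rw [show s - 1 + 1 = s by ring] at this
      exact this
    calc (PowerSeries.coeff (n + 1)) (Hser q r * Hser q s)
        = (PowerSeries.coeff (n + 1)) (Hser q r * Hser q (s - 1))
          + (PowerSeries.coeff n) (Hser q r * Hser q (s - 1 + q)) := by
          rw [hs]; rw [mul_add, map_add]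
          congr 1
          rw [show Hser q r * (PowerSeries.X * Hser q (s - 1 + q))
              = PowerSeries.X * (Hser q r * Hser q (s - 1 + q)) by ring,
            PowerSeries.coeff_succ_X_mul]
      _ = (PowerSeries.coeff (n + 1)) (Hser q r * Hser q (s - 1))
          + (PowerSeries.coeff n) (Hser q (r + q) * Hser q (s - 1)) := by
          congr 1
          have := aux q r (s - 1)
          push_cast at this ⊢
          rw [this]
      _ = (PowerSeries.coeff (n + 1)) (Hser q (r + 1) * Hser q (s - 1)) := by
          rw [hr, add_mul, map_add]
          congr 1
          rw [show PowerSeries.X * Hser q (r + q) * Hser q (s - 1)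
              = PowerSeries.X * (Hser q (r + q) * Hser q (s - 1)) by ring,
            PowerSeries.coeff_succ_X_mul]

lemma key (q : ℕ) (r s : ℤ) : Hser q r * Hser q s = Hser q (r + 1) * Hser q (s - 1) := by
  ext n
  exact key_coeff q n r s

lemma key_iter (q : ℕ) (r s : ℤ) (m : ℕ) :
    Hser q r * Hser q s = Hser q (r + m) * Hser q (s - m) := by
  induction m with
  | zero => norm_num
  | succ m IHm =>
    rw [IHm, key q (r + m) (s - m)]
    congr 1 <;> congr 1 <;> push_cast <;> ring

lemma gen_eq (al : ℕ) (hal : 1 ≤ al) :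
    genSer al 1 = PowerSeries.X * Hser (al + 1) ((al : ℤ) - 1) := by
  ext k
  cases k with
  | zero => simp [genSer]
  | succ k =>
    rw [PowerSeries.coeff_succ_X_mul]
    simp only [genSer, Hser, PowerSeries.coeff_mk, Nat.succ_ne_zero, if_false]
    obtain ⟨A, hA⟩ : ∃ A, A = al * (k + 1) := ⟨_, rfl⟩
    have hk1 : k + 1 ≤ A := by
      rw [hA]; calc k + 1 = 1 * (k + 1) := (one_mul _).symm
        _ ≤ al * (k + 1) := Nat.mul_le_mul_right _ hal
    have hP : (al + 1) * (k + 1) = A + (k + 1) := by rw [hA]; ring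
    have hsub : (al + 1) * (k + 1) - 2 = A + k - 1 := by omega
    have hsub2 : al * (k + 1) - 1 = A - 1 := by rw [← hA]
    rw [hsub, hsub2]
    have hAz : (A : ℤ) = (al : ℤ) * ((k : ℤ) + 1) := by exact_mod_cast hA
    have hcast : ((al : ℕ) + 1 : ℕ) * (k : ℤ) + ((al : ℤ) - 1) = ((A + k - 1 : ℕ) : ℤ) := by
      have h1 : ((A + k - 1 : ℕ) : ℤ) = (A : ℤ) + (k : ℤ) - 1 := by omega
      rw [h1]
      push_cast
      linear_combination -hAz
    rw [hcast, ich_natCast]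
    norm_cast
    have h2 : A - 1 = (A + k - 1) - k := by omega
    rw [h2, Nat.choose_symm (by omega)]

lemma gee_eq (al : ℕ) (hal : 1 ≤ al) :
    geeSer al 1 = Hser (al + 1) (-2) - 1 := by
  ext k
  cases k with
  | zero => simp [geeSer, Hser, ich_zero]
  | succ k =>
    simp only [geeSer, Hser, PowerSeries.coeff_mk, Nat.succ_ne_zero, if_false, map_sub,
      PowerSeries.coeff_one, sub_zero]
    obtain ⟨A, hA⟩ : ∃ A, A = al * (k + 1) := ⟨_, rfl⟩
    have hk1 : k + 1 ≤ A := by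
      rw [hA]; calc k + 1 = 1 * (k + 1) := (one_mul _).symm
        _ ≤ al * (k + 1) := Nat.mul_le_mul_right _ hal
    have hP : (al + 1) * (k + 1) = A + (k + 1) := by rw [hA]; ring
    have hsub : (al + 1) * (k + 1) - 2 = A + k - 1 := by omega
    rw [hsub]
    have hAz : (A : ℤ) = (al : ℤ) * ((k : ℤ) + 1) := by exact_mod_cast hA
    have hcast : ((al : ℕ) + 1 : ℕ) * ((k : ℕ) + 1 : ℕ) + (-2 : ℤ) = ((A + k - 1 : ℕ) : ℤ) := by
      have h1 : ((A + k - 1 : ℕ) : ℤ) = (A : ℤ) + (k : ℤ) - 1 := by omega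
      rw [h1]
      push_cast
      linear_combination -hAz
    rw [hcast, ich_natCast]
    norm_cast
    rw [one_mul]

lemma gnn_eq (al : ℕ) (hal : 1 ≤ al) :
    gnnSer al 1 = PowerSeries.X * (PowerSeries.X * Hser (al + 1) (2 * (al : ℤ))) := by
  ext k
  match k with
  | 0 => simp [gnnSer]
  | 1 =>
    rw [PowerSeries.coeff_succ_X_mul, PowerSeries.coeff_zero_X_mul]
    simp only [gnnSer, PowerSeries.coeff_mk, Nat.succ_ne_zero, if_false]
    have h1 : (al + 1) * 1 - 2 = al - 1 := by omega
    have h2 : al * 1 = al := by ring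
    rw [h1, h2, Nat.choose_eq_zero_of_lt (by omega)]
    norm_num
  | (k + 2) =>
    rw [show k + 2 = (k + 1) + 1 from rfl, PowerSeries.coeff_succ_X_mul,
      PowerSeries.coeff_succ_X_mul]
    simp only [gnnSer, Hser, PowerSeries.coeff_mk, Nat.succ_ne_zero, if_false]
    obtain ⟨A, hA⟩ : ∃ A, A = al * (k + 2) := ⟨_, rfl⟩
    have hk1 : k + 2 ≤ A := by
      rw [hA]; calc k + 2 = 1 * (k + 2) := (one_mul _).symm
        _ ≤ al * (k + 2) := Nat.mul_le_mul_right _ hal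
    have hP : (al + 1) * (k + 2) = A + (k + 2) := by rw [hA]; ring
    have hsub : (al + 1) * (k + 2) - 2 = A + k := by omega
    have hsub2 : al * (k + 2) = A := hA.symm
    rw [hsub, hsub2]
    have hAz : (A : ℤ) = (al : ℤ) * ((k : ℤ) + 2) := by exact_mod_cast hA
    have hcast : ((al : ℕ) + 1 : ℕ) * (k : ℤ) + 2 * (al : ℤ) = ((A + k : ℕ) : ℤ) := by
      have h1 : ((A + k : ℕ) : ℤ) = (A : ℤ) + (k : ℤ) := by omega
      rw [h1]
      push_cast
      linear_combination -hAz
    rw [hcast, ich_natCast]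
    norm_cast
    have h3 := Nat.choose_symm (show k ≤ A + k by omega)
    rw [Nat.add_sub_cancel] at h3
    exact h3

/-- For `β = 1` and `α ≥ 1`:
`g_en(x)² − g_ee(x)·g_nn(x) = g_nn(x)` in `ℚ[[x]]`. -/
theorem statement13 (α : ℕ) (hα : 1 ≤ α) :
    genSer α 1 ^ 2 - geeSer α 1 * gnnSer α 1 = gnnSer α 1 := by
  have hgen := gen_eq α hα
  have hgee := gee_eq α hα
  have hgnn := gnn_eq α hα
  have hkey := key_iter (α + 1) ((α : ℤ) - 1) ((α : ℤ) - 1) (α + 1)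
  have e1 : (α : ℤ) - 1 + ((α + 1 : ℕ) : ℤ) = 2 * (α : ℤ) := by push_cast; ring
  have e2 : (α : ℤ) - 1 - ((α + 1 : ℕ) : ℤ) = -2 := by push_cast; ring
  rw [e1, e2] at hkey
  rw [hgen, hgee, hgnn]
  linear_combination ((PowerSeries.X : PowerSeries ℚ) ^ 2) * hkey
end

section
/- For α = β = 1 and any integer b ≥ 1, the generating function G_b(x) = Σ_{n≥1} N_b(n)·x^n, where N_b(n) is the number of lattice paths from (0,0) to (n,n) having exactly b bounces (left plus right) on the line y=x, satisfies G_b(x) = 2·(c(x) − 1)^{b+1} = 2·x^{b+1}·c(x)^{2b+2}; consequently, for every integer n > b, n·N_b(n) = 2·(b+1)·C(2n, n−b−1). -/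
/-- `N_b(n)`: the number of lattice paths from `(0,0)` to `(n,n)` having exactly `b`
bounces (left plus right) on the line `y = x`. -/
noncomputable def Nb (b n : ℕ) : ℕ :=
  {p | InL 1 1 n p ∧ leftBounces 1 1 p + rightBounces 1 1 p = b}.ncard

/-- `G_b(x) = Σ_{n≥1} N_b(n)·xⁿ`. -/
noncomputable def GbSer (b : ℕ) : PowerSeries ℚ :=
  PowerSeries.mk fun n => if n = 0 then 0 else (Nb b n : ℚ)


namespace S16

lemma count_tf (l : List Bool) : l.count true + l.count false = l.length := by
  induction l with
  | nil => rfl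
  | cons a t ih => cases a <;> simp [List.count_cons] <;> omega

def IsDyck (w : List Bool) : Prop :=
  w.count true = w.count false ∧ ∀ i, (w.take i).count false ≤ (w.take i).count true

def LB (p : LatticePath) : Set ℕ := {i | IsLeftBounce 1 1 p i}
def RB (p : LatticePath) : Set ℕ := {i | IsRightBounce 1 1 p i}

lemma leftBounces_eq (p : LatticePath) : leftBounces 1 1 p = (LB p).ncard := rfl
lemma rightBounces_eq (p : LatticePath) : rightBounces 1 1 p = (RB p).ncard := rfl

lemma LB_lt_length {p : LatticePath} {i : ℕ} (h : i ∈ LB p) : i < p.length :=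
  (List.getElem?_eq_some_iff.mp h.1).1

lemma RB_lt_length {p : LatticePath} {i : ℕ} (h : i ∈ RB p) : i < p.length :=
  (List.getElem?_eq_some_iff.mp h.1).1

lemma LB_finite (p : LatticePath) : (LB p).Finite :=
  (Set.finite_Iio p.length).subset fun _ h => LB_lt_length h

lemma RB_finite (p : LatticePath) : (RB p).Finite :=
  (Set.finite_Iio p.length).subset fun _ h => RB_lt_length h

/-- Shift lemma for left bounces across a balanced prefix. -/
lemma isLeftBounce_append {u : List Bool} (v : List Bool)
    (hu : u.count true = u.count false) (j : ℕ) :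
    IsLeftBounce 1 1 (u ++ v) (u.length + j) ↔ IsLeftBounce 1 1 v j := by
  have e1 : (u ++ v)[u.length + j]? = v[j]? := by
    rw [List.getElem?_append_right (Nat.le_add_right _ _)]
    congr 1
    omega
  have e2 : (u ++ v)[u.length + j + 1]? = v[j+1]? := by
    rw [List.getElem?_append_right (by omega)]
    congr 1
    omega
  have e3 : (u ++ v).take (u.length + j + 1) = u ++ v.take (j + 1) := by
    rw [List.take_append, List.take_of_length_le (by omega)]
    congr 2
    omega
  unfold IsLeftBounce
  rw [e1, e2, e3, List.count_append, List.count_append]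
  constructor
  · rintro ⟨h1, h2, h3⟩
    exact ⟨h1, h2, by omega⟩
  · rintro ⟨h1, h2, h3⟩
    exact ⟨h1, h2, by omega⟩

lemma isRightBounce_append {u : List Bool} (v : List Bool)
    (hu : u.count true = u.count false) (j : ℕ) :
    IsRightBounce 1 1 (u ++ v) (u.length + j) ↔ IsRightBounce 1 1 v j := by
  have e1 : (u ++ v)[u.length + j]? = v[j]? := by
    rw [List.getElem?_append_right (Nat.le_add_right _ _)]
    congr 1
    omega
  have e2 : (u ++ v)[u.length + j + 1]? = v[j+1]? := by
    rw [List.getElem?_append_right (by omega)]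
    congr 1
    omega
  have e3 : (u ++ v).take (u.length + j + 1) = u ++ v.take (j + 1) := by
    rw [List.take_append, List.take_of_length_le (by omega)]
    congr 2
    omega
  unfold IsRightBounce
  rw [e1, e2, e3, List.count_append, List.count_append]
  constructor
  · rintro ⟨h1, h2, h3⟩
    exact ⟨h1, h2, by omega⟩
  · rintro ⟨h1, h2, h3⟩
    exact ⟨h1, h2, by omega⟩

/-- In the arch `true :: w ++ false :: v`, proper prefixes up to the closing `false`
have strictly more `true`s than `false`s. -/
lemma arch_prefix_lt {w : List Bool} (hw : ∀ i, (w.take i).count false ≤ (w.take i).count true)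
    (v : List Bool) {j : ℕ} (h1 : 1 ≤ j) (h2 : j ≤ w.length + 1) :
    (((true :: w) ++ (false :: v)).take j).count false
      < (((true :: w) ++ (false :: v)).take j).count true := by
  have e : ((true :: w) ++ (false :: v)).take j = true :: w.take (j-1) := by
    have : (true :: w) ++ (false :: v) = true :: (w ++ false :: v) := rfl
    rw [this]
    obtain ⟨j', rfl⟩ : ∃ j', j = j' + 1 := ⟨j - 1, by omega⟩
    rw [List.take_succ_cons, List.take_append,
      Nat.sub_eq_zero_of_le (by omega), List.take_zero, List.append_nil]
    simp
  rw [e]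
  have := hw (j-1)
  simp [List.count_cons]
  omega

lemma arch_balanced {w : List Bool} (hw : w.count true = w.count false) (v : List Bool) :
    (((true :: w) ++ (false :: v)).take (w.length + 2)).count false
      = (((true :: w) ++ (false :: v)).take (w.length + 2)).count true := by
  have e : ((true :: w) ++ (false :: v)).take (w.length + 2) = (true :: w) ++ [false] := by
    rw [List.take_append, List.take_of_length_le (by simp)]
    congr 1
    simp
  rw [e]
  simp [List.count_append, List.count_cons, hw]


open DyckStep

def stepToBool : DyckStep → Bool | U => true | D => false
def boolToStep : Bool → DyckStep | true => U | false => D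

lemma stepToBool_inj : Function.Injective stepToBool := by
  intro a b h; cases a <;> cases b <;> simp [stepToBool] at h ⊢
lemma boolToStep_inj : Function.Injective boolToStep := by
  intro a b h; cases a <;> cases b <;> simp [boolToStep] at h ⊢

lemma count_map_b2s (l : List Bool) (b : Bool) :
    (l.map boolToStep).count (boolToStep b) = l.count b :=
  List.count_map_of_injective _ boolToStep boolToStep_inj b

lemma count_map_s2b (l : List DyckStep) (s : DyckStep) :
    (l.map stepToBool).count (stepToBool s) = l.count s :=
  List.count_map_of_injective _ stepToBool stepToBool_inj s

lemma dyck_ncard (j : ℕ) :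
    {w : List Bool | IsDyck w ∧ w.length = 2 * j}.ncard = catalan j := by
  rw [← Nat.card_coe_set_eq]
  rw [← DyckWord.card_dyckWord_semilength_eq_catalan j, ← Nat.card_eq_fintype_card]
  apply Nat.card_congr
  refine ⟨fun w => ⟨⟨(w : List Bool).map boolToStep, ?_, ?_⟩, ?_⟩,
    fun p => ⟨(p.1 : List DyckStep).map stepToBool, ⟨?_, ?_⟩, ?_⟩, ?_, ?_⟩
  · obtain ⟨⟨h1, h2⟩, h3⟩ := w.2
    have := count_map_b2s (w : List Bool) true
    have := count_map_b2s (w : List Bool) false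
    simp only [boolToStep] at *; omega
  · intro i
    obtain ⟨⟨h1, h2⟩, h3⟩ := w.2
    have := count_map_b2s ((w : List Bool).take i) true
    have := count_map_b2s ((w : List Bool).take i) false
    rw [← List.map_take]
    simp only [boolToStep] at *
    have := h2 i
    omega
  · obtain ⟨⟨h1, h2⟩, h3⟩ := w.2
    show (List.map boolToStep _).count U = j
    have := count_map_b2s (w : List Bool) true
    have := count_tf (w : List Bool)
    simp only [boolToStep] at *
    omega
  · have := count_map_s2b (p.1 : List DyckStep) U
    have := count_map_s2b (p.1 : List DyckStep) D
    have := p.1.count_U_eq_count_D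
    simp only [stepToBool] at *
    omega
  · intro i
    have := count_map_s2b ((p.1 : List DyckStep).take i) U
    have := count_map_s2b ((p.1 : List DyckStep).take i) D
    have := p.1.count_D_le_count_U i
    rw [← List.map_take]
    simp only [stepToBool] at *
    omega
  · rw [List.length_map, ← p.1.two_mul_semilength_eq_length, p.2]
  · intro w
    ext1
    show List.map stepToBool (List.map boolToStep _) = _
    simp only [List.map_map]
    have : stepToBool ∘ boolToStep = id := by funext b; cases b <;> rfl
    simp [this]
  · intro p
    apply Subtype.ext
    apply DyckWord.ext
    show List.map boolToStep (List.map stepToBool _) = _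
    simp only [List.map_map]
    have : boolToStep ∘ stepToBool = id := by funext s; cases s <;> rfl
    simp [this]


lemma arch_append_eq (w v : List Bool) :
    (true :: w) ++ (false :: v) = ((true :: w) ++ [false]) ++ v := by simp

lemma arch_getElem_last (w v : List Bool) :
    ((true :: w) ++ (false :: v))[w.length + 1]? = some false := by
  rw [List.getElem?_append_right (by simp)]
  simp

lemma arch_getElem_next (w v : List Bool) :
    ((true :: w) ++ (false :: v))[w.length + 2]? = v[0]? := by
  rw [List.getElem?_append_right (by simp)]
  have : w.length + 2 - (true :: w).length = 1 := by simp
  rw [this]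
  simp

lemma arch_balanced' (w : List Bool) (hw : w.count true = w.count false) :
    ((true :: w) ++ [false]).count true = ((true :: w) ++ [false]).count false := by
  simp [List.count_append, List.count_cons, hw]

lemma LB_decomp {w : List Bool} (hw : IsDyck w) (v : List Bool) :
    LB ((true :: w) ++ (false :: v)) = (fun j => (w.length + 2) + j) '' LB v := by
  have hp : (true :: w) ++ (false :: v) = ((true :: w) ++ [false]) ++ v := arch_append_eq w v
  have hul : ((true :: w) ++ [false]).length = w.length + 2 := by simp
  have hub : ((true :: w) ++ [false]).count true = ((true :: w) ++ [false]).count false :=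
    arch_balanced' w hw.1
  ext i
  simp only [LB, Set.mem_setOf_eq, Set.mem_image]
  constructor
  · intro hi
    rcases lt_or_ge i (w.length + 1) with h | h
    · exfalso
      obtain ⟨h1, h2, h3⟩ := hi
      have := arch_prefix_lt hw.2 v (j := i+1) (by omega) (by omega)
      rw [one_mul, one_mul] at h3
      omega
    rcases eq_or_lt_of_le h with h' | h'
    · exfalso
      obtain ⟨h1, -, -⟩ := hi
      rw [← h', arch_getElem_last] at h1
      simp at h1
    · refine ⟨i - (w.length + 2), ?_, by show w.length + 2 + (i - (w.length+2)) = i; omega⟩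
      apply (isLeftBounce_append v hub (i - (w.length + 2))).mp
      have he : ((true :: w) ++ [false]).length + (i - (w.length + 2)) = i := by
        rw [hul]; omega
      rw [he, ← hp]
      exact hi
  · rintro ⟨j, hj, rfl⟩
    have := (isLeftBounce_append v hub j).mpr hj
    rw [← hp, hul] at this
    exact this

lemma RB_decomp {w : List Bool} (hw : IsDyck w) (v : List Bool) :
    RB ((true :: w) ++ (false :: v)) =
      ((fun j => (w.length + 2) + j) '' RB v) ∪
        (if v.head? = some true then {w.length + 1} else ∅) := by
  have hp : (true :: w) ++ (false :: v) = ((true :: w) ++ [false]) ++ v := arch_append_eq w v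
  have hul : ((true :: w) ++ [false]).length = w.length + 2 := by simp
  have hub : ((true :: w) ++ [false]).count true = ((true :: w) ++ [false]).count false :=
    arch_balanced' w hw.1
  ext i
  simp only [RB, Set.mem_setOf_eq, Set.mem_union, Set.mem_image]
  constructor
  · intro hi
    rcases lt_or_ge i (w.length + 1) with h | h
    · exfalso
      obtain ⟨h1, h2, h3⟩ := hi
      have := arch_prefix_lt hw.2 v (j := i+1) (by omega) (by omega)
      rw [one_mul, one_mul] at h3
      omega
    rcases eq_or_lt_of_le h with h' | h'
    · right
      obtain ⟨-, h2, -⟩ := hi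
      rw [← h', show w.length + 1 + 1 = w.length + 2 from rfl, arch_getElem_next] at h2
      have hv : v.head? = some true := by
        cases v with
        | nil => simp at h2
        | cons a t => simpa using h2
      simp [hv, h']
    · left
      refine ⟨i - (w.length + 2), ?_, by show w.length + 2 + (i - (w.length+2)) = i; omega⟩
      apply (isRightBounce_append v hub (i - (w.length + 2))).mp
      have he : ((true :: w) ++ [false]).length + (i - (w.length + 2)) = i := by
        rw [hul]; omega
      rw [he, ← hp]
      exact hi
  · intro hmem
    rcases hmem with ⟨j, hj, rfl⟩ | hsing
    · have := (isRightBounce_append v hub j).mpr hj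
      rw [← hp, hul] at this
      exact this
    · by_cases hv : v.head? = some true
      · simp only [hv, if_pos rfl, Set.mem_singleton_iff] at hsing
        subst hsing
        refine ⟨arch_getElem_last w v, ?_, ?_⟩
        · rw [show w.length + 1 + 1 = w.length + 2 from rfl, arch_getElem_next]
          cases v with
          | nil => simp at hv
          | cons a t => simpa using hv
        · rw [one_mul, one_mul, show w.length + 1 + 1 = w.length + 2 from rfl]
          exact arch_balanced hw.1 v
      · simp [hv] at hsing

lemma leftBounces_decomp {w : List Bool} (hw : IsDyck w) (v : List Bool) :
    leftBounces 1 1 ((true :: w) ++ (false :: v)) = leftBounces 1 1 v := by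
  show (LB _).ncard = (LB _).ncard
  rw [LB_decomp hw v]
  exact Set.ncard_image_of_injective _ (add_right_injective _)

lemma rightBounces_decomp {w : List Bool} (hw : IsDyck w) (v : List Bool) :
    rightBounces 1 1 ((true :: w) ++ (false :: v)) =
      rightBounces 1 1 v + (if v.head? = some true then 1 else 0) := by
  show (RB _).ncard = (RB _).ncard + _
  rw [RB_decomp hw v]
  by_cases hv : v.head? = some true
  · simp only [hv, if_true]
    rw [Set.ncard_union_eq ?_ ((RB_finite v).image _) (Set.finite_singleton _)]
    · rw [Set.ncard_image_of_injective _ (add_right_injective _), Set.ncard_singleton]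
    · rw [Set.disjoint_singleton_right]
      rintro ⟨j, hj, hh⟩
      simp only at hh
      omega
  · simp only [hv, if_false, Set.union_empty]
    rw [Set.ncard_image_of_injective _ (add_right_injective _)]
    omega


lemma count_map_not (l : List Bool) (b : Bool) : (l.map not).count b = l.count (!b) := by
  have := List.count_map_of_injective l not (fun a b h => by
    cases a <;> cases b <;> simp_all) (!b)
  simpa using this

lemma isLeftBounce_map_not (p : LatticePath) (i : ℕ) :
    IsLeftBounce 1 1 (p.map not) i ↔ IsRightBounce 1 1 p i := by
  unfold IsLeftBounce IsRightBounce
  rw [List.getElem?_map, List.getElem?_map, ← List.map_take, count_map_not, count_map_not]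
  simp only [Bool.not_true, Bool.not_false, one_mul]
  constructor
  · rintro ⟨h1, h2, h3⟩
    refine ⟨?_, ?_, h3.symm⟩ <;> [skip; skip] <;>
      · cases h : p[i]? <;> cases h' : p[i+1]? <;> simp_all <;> simp_all
  · rintro ⟨h1, h2, h3⟩
    rw [h1, h2]
    exact ⟨rfl, rfl, h3.symm⟩

lemma isRightBounce_map_not (p : LatticePath) (i : ℕ) :
    IsRightBounce 1 1 (p.map not) i ↔ IsLeftBounce 1 1 p i := by
  unfold IsLeftBounce IsRightBounce
  rw [List.getElem?_map, List.getElem?_map, ← List.map_take, count_map_not, count_map_not]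
  simp only [Bool.not_true, Bool.not_false, one_mul]
  constructor
  · rintro ⟨h1, h2, h3⟩
    refine ⟨?_, ?_, h3.symm⟩ <;> [skip; skip] <;>
      · cases h : p[i]? <;> cases h' : p[i+1]? <;> simp_all <;> simp_all
  · rintro ⟨h1, h2, h3⟩
    rw [h1, h2]
    exact ⟨rfl, rfl, h3.symm⟩

lemma bounces_map_not (p : LatticePath) :
    leftBounces 1 1 (p.map not) + rightBounces 1 1 (p.map not)
      = leftBounces 1 1 p + rightBounces 1 1 p := by
  unfold leftBounces rightBounces
  have e1 : {i | IsLeftBounce 1 1 (p.map not) i} = {i | IsRightBounce 1 1 p i} := by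
    ext i; exact isLeftBounce_map_not p i
  have e2 : {i | IsRightBounce 1 1 (p.map not) i} = {i | IsLeftBounce 1 1 p i} := by
    ext i; exact isRightBounce_map_not p i
  rw [e1, e2]
  ring

lemma pathset_finite (n : ℕ) (Q : LatticePath → Prop) :
    {p | InL 1 1 n p ∧ Q p}.Finite := by
  apply (List.finite_length_eq Bool (2*n)).subset
  rintro p ⟨⟨h1, h2⟩, -⟩
  have := count_tf p
  simp only [Set.mem_setOf_eq]
  omega

/-- First-return decomposition: existence. -/
lemma exists_decomp {n : ℕ} {p : LatticePath} (hp : InL 1 1 n p)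
    (hh : p.head? = some true) :
    ∃ k, 1 ≤ k ∧ k ≤ n ∧ ∃ w v, IsDyck w ∧ w.length = 2 * (k - 1) ∧
      InL 1 1 (n - k) v ∧ p = (true :: w) ++ (false :: v) := by
  classical
  obtain ⟨hc1, hc2⟩ := hp
  rw [one_mul] at hc1 hc2
  have hlen : p.length = 2 * n := by have := count_tf p; omega
  obtain ⟨t, rfl⟩ : ∃ t, p = true :: t := by
    cases p with
    | nil => simp at hh
    | cons a t =>
      have ha : a = true := by simpa using hh
      exact ⟨t, by rw [ha]⟩
  set p := true :: t with hpdef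
  have hn1 : 1 ≤ n := by
    have : p.count true = t.count true + 1 := by simp [hpdef, List.count_cons]
    omega
  set d : ℕ → ℤ := fun j => ((p.take j).count true : ℤ) - (p.take j).count false with hd
  have hex : ∃ j, 0 < j ∧ d j = 0 := by
    refine ⟨2 * n, by omega, ?_⟩
    have : p.take (2*n) = p := List.take_of_length_le (by omega)
    simp only [hd, this, hc1, hc2]
    ring
  set j₀ := Nat.find hex with hj₀def
  obtain ⟨hj₀pos, hj₀zero⟩ := Nat.find_spec hex
  rw [← hj₀def] at hj₀pos hj₀zero
  have hmin : ∀ j, j < j₀ → 0 < j → d j ≠ 0 := fun j hj h1 h2 =>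
    Nat.find_min hex hj ⟨h1, h2⟩
  have hstep : ∀ j, (p[j]? = some true ∧ d (j+1) = d j + 1) ∨
      (p[j]? = some false ∧ d (j+1) = d j - 1) ∨ (p[j]? = none ∧ d (j+1) = d j) := by
    intro j
    have ht : p.take (j+1) = p.take j ++ p[j]?.toList := List.take_succ
    cases h : p[j]? with
    | none => right; right; refine ⟨rfl, ?_⟩; simp [hd, ht, h]
    | some b =>
      cases b with
      | true => left; refine ⟨rfl, ?_⟩; simp [hd, ht, h, List.count_append]; ring
      | false => right; left; refine ⟨rfl, ?_⟩; simp [hd, ht, h, List.count_append]; ring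
  have hd1 : d 1 = 1 := by simp [hd, hpdef]
  have hpos : ∀ j, 1 ≤ j → j < j₀ → 1 ≤ d j := by
    intro j
    induction j with
    | zero => omega
    | succ i ih =>
      intro h1 h2
      rcases Nat.eq_or_lt_of_le h1 with h | h
      · rw [← h]; exact le_of_eq hd1.symm
      · have hi : 1 ≤ d i := ih (by omega) (by omega)
        have hne : d (i+1) ≠ 0 := hmin _ h2 (by omega)
        rcases hstep i with ⟨-, hs⟩ | ⟨-, hs⟩ | ⟨-, hs⟩ <;> omega
  have hj₀2 : 2 ≤ j₀ := by
    by_contra h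
    have : j₀ = 1 := by omega
    rw [this] at hj₀zero
    rw [hj₀zero] at hd1
    exact absurd hd1 (by norm_num)
  have hj₀len : j₀ ≤ 2 * n := by
    rw [hj₀def]
    exact Nat.find_min' hex ⟨by omega, by
      have : p.take (2*n) = p := List.take_of_length_le (by omega)
      simp only [hd, this, hc1, hc2]; ring⟩
  have hlast : p[j₀ - 1]? = some false := by
    have h1 : 1 ≤ d (j₀ - 1) := hpos _ (by omega) (by omega)
    rcases hstep (j₀ - 1) with ⟨hs, he⟩ | ⟨hs, he⟩ | ⟨hs, he⟩ <;>
      rw [show j₀ - 1 + 1 = j₀ by omega] at he <;> first | (exfalso; omega) | exact hs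
  -- counts of take j₀
  have hbal : ((p.take j₀).count true : ℤ) = (p.take j₀).count false := by
    have := hj₀zero; simp [hd] at this ⊢; omega
  set k := (p.take j₀).count true with hk
  have htakelen : (p.take j₀).length = j₀ := by
    rw [List.length_take]; omega
  have hj₀k : j₀ = 2 * k := by
    have := count_tf (p.take j₀)
    omega
  have htlen : t.length = 2 * n - 1 := by
    have : p.length = t.length + 1 := by simp [hpdef]
    omega
  have hgetf : t[j₀ - 2]? = some false := by
    have he : p[j₀ - 1]? = t[j₀ - 2]? := by
      rw [hpdef, show j₀ - 1 = (j₀ - 2) + 1 by omega]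
      simp
    rw [← he]
    exact hlast
  have hwlen : (t.take (j₀ - 2)).length = j₀ - 2 := by rw [List.length_take]; omega
  have hlt : j₀ - 2 < t.length := by omega
  have h2 : t.drop (j₀ - 2) = false :: t.drop (j₀ - 1) := by
    obtain ⟨hlt', hev⟩ := List.getElem?_eq_some_iff.mp hgetf
    rw [List.drop_eq_getElem_cons hlt, hev, show j₀ - 2 + 1 = j₀ - 1 by omega]
  have hsplit : p = (true :: t.take (j₀ - 2)) ++ (false :: t.drop (j₀ - 1)) := by
    conv_lhs => rw [hpdef]
    rw [List.cons_append]
    congr 1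
    conv_lhs => rw [← List.take_append_drop (j₀ - 2) t]
    rw [h2]
  have htake : p.take j₀ = (true :: t.take (j₀ - 2)) ++ [false] := by
    rw [hsplit, List.take_append,
      List.take_of_length_le (by simp [hwlen]; omega)]
    congr 1
    rw [show j₀ - (true :: t.take (j₀ - 2)).length = 1 by simp [hwlen]; omega]
    simp
  have hwct : (p.take j₀).count true = (t.take (j₀ - 2)).count true + 1 := by
    rw [htake]
    simp [List.count_append, List.count_cons]
    try omega
  have hwcf : (p.take j₀).count false = (t.take (j₀ - 2)).count false + 1 := by
    rw [htake]
    simp [List.count_append, List.count_cons]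
    try omega
  have hprefix : ∀ m, m ≤ j₀ - 2 →
      (t.take m).count false ≤ (t.take m).count true := by
    intro m hm
    have hd' := hpos (m + 1) (by omega) (by omega)
    have he : p.take (m+1) = true :: t.take m := by rw [hpdef]; simp
    simp only [hd, he, List.count_cons] at hd'
    simp at hd'
    omega
  have hcounts := congrArg (List.count true) hsplit
  have hcounts' := congrArg (List.count false) hsplit
  simp only [List.count_append, List.count_cons, List.count_nil] at hcounts hcounts'
  refine ⟨k, by omega, by omega, t.take (j₀ - 2), t.drop (j₀ - 1), ⟨by omega, ?_⟩, by omega,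
    ⟨?_, ?_⟩, hsplit⟩
  · intro i
    rw [List.take_take]
    exact hprefix _ (by omega)
  · rw [one_mul]
    simp at hcounts
    omega
  · rw [one_mul]
    simp at hcounts'
    omega

/-- number of bounces -/
noncomputable def bnc (p : LatticePath) : ℕ := leftBounces 1 1 p + rightBounces 1 1 p

noncomputable def M (b n : ℕ) (a : Bool) : ℕ :=
  {p | InL 1 1 n p ∧ bnc p = b ∧ p.head? = some a}.ncard

lemma M_finite (b n : ℕ) (a : Bool) :
    {p | InL 1 1 n p ∧ bnc p = b ∧ p.head? = some a}.Finite := pathset_finite n _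

lemma bounces_nil : bnc [] = 0 := by
  have h1 : {i | IsLeftBounce 1 1 [] i} = ∅ := by
    ext i; simp [IsLeftBounce]
  have h2 : {i | IsRightBounce 1 1 [] i} = ∅ := by
    ext i; simp [IsRightBounce]
  simp [bnc, leftBounces, rightBounces, h1, h2]

lemma map_not_not (l : List Bool) : (l.map not).map not = l := by
  rw [List.map_map]
  have : (not ∘ not) = id := by funext x; simp
  simp [this]

lemma map_not_injective : Function.Injective (List.map not : List Bool → List Bool) := by
  intro x y h
  have := congrArg (List.map not) h
  rwa [map_not_not, map_not_not] at this

lemma InL_map_not (n : ℕ) (q : LatticePath) : InL 1 1 n (q.map not) ↔ InL 1 1 n q := by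
  unfold InL
  rw [count_map_not, count_map_not]
  simp only [Bool.not_true, Bool.not_false]
  tauto

lemma M_symm (b n : ℕ) : M b n false = M b n true := by
  unfold M
  have himg : {p | InL 1 1 n p ∧ bnc p = b ∧ p.head? = some false}
      = (List.map not) '' {p | InL 1 1 n p ∧ bnc p = b ∧ p.head? = some true} := by
    ext q
    simp only [Set.mem_image, Set.mem_setOf_eq]
    constructor
    · rintro ⟨h1, h2, h3⟩
      refine ⟨q.map not, ⟨(InL_map_not n q).mpr h1, ?_, ?_⟩, map_not_not q⟩
      · rw [show bnc (q.map not) = bnc q from bounces_map_not q]; exact h2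
      · rw [List.head?_map, h3]; rfl
    · rintro ⟨p, ⟨h1, h2, h3⟩, rfl⟩
      refine ⟨(InL_map_not n p).mpr h1, ?_, ?_⟩
      · rw [show bnc (p.map not) = bnc p from bounces_map_not p]; exact h2
      · rw [List.head?_map, h3]; rfl
  rw [himg, Set.ncard_image_of_injective _ map_not_injective]

lemma M_zero (b : ℕ) (a : Bool) : M b 0 a = 0 := by
  unfold M
  rw [show {p | InL 1 1 0 p ∧ bnc p = b ∧ p.head? = some a} = (∅ : Set LatticePath) from ?_,
    Set.ncard_empty]
  ext p
  simp only [Set.mem_setOf_eq, Set.mem_empty_iff_false, iff_false]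
  rintro ⟨⟨h1, h2⟩, -, h3⟩
  have : p.length = 0 := by have := count_tf p; omega
  rw [List.eq_nil_of_length_eq_zero this] at h3
  simp at h3

/-- the count of "rests" -/
noncomputable def Rcount (b m : ℕ) : ℕ :=
  (if m = 0 ∧ b = 0 then 1 else 0) + (if b = 0 then 0 else M (b-1) m true) + M b m true

lemma ncard_Rst (b m : ℕ) :
    {v | InL 1 1 m v ∧ bnc v + (if v.head? = some true then 1 else 0) = b}.ncard
      = Rcount b m := by
  classical
  set A : Set LatticePath := {v | InL 1 1 m v ∧ bnc v + (if v.head? = some true then 1 else 0) = b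
      ∧ v.head? = none} with hA
  set B : Set LatticePath := {v | InL 1 1 m v ∧ bnc v + 1 = b ∧ v.head? = some true} with hB
  set C : Set LatticePath := {v | InL 1 1 m v ∧ bnc v = b ∧ v.head? = some false} with hC
  have hsplit : {v | InL 1 1 m v ∧ bnc v + (if v.head? = some true then 1 else 0) = b}
      = A ∪ (B ∪ C) := by
    ext v
    simp only [hA, hB, hC, Set.mem_union, Set.mem_setOf_eq]
    rcases hv : v.head? with _ | a
    · simp [hv]
    · cases a
      · simp [hv]
      · simp [hv]
  have hAfin : A.Finite := (pathset_finite m _)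
  have hBfin : B.Finite := (pathset_finite m _)
  have hCfin : C.Finite := (pathset_finite m _)
  have hdisAB : Disjoint A (B ∪ C) := by
    rw [Set.disjoint_left]
    rintro v ⟨-, -, h3⟩ (⟨-, -, h3'⟩ | ⟨-, -, h3'⟩) <;> rw [h3] at h3' <;> exact absurd h3' (by simp)
  have hdisBC : Disjoint B C := by
    rw [Set.disjoint_left]
    rintro v ⟨-, -, h3⟩ ⟨-, -, h3'⟩
    rw [h3] at h3'
    simp at h3'
  rw [hsplit, Set.ncard_union_eq hdisAB hAfin (hBfin.union hCfin),
    Set.ncard_union_eq hdisBC hBfin hCfin]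
  have hAcard : A.ncard = if m = 0 ∧ b = 0 then 1 else 0 := by
    have he : A = if m = 0 ∧ b = 0 then {([] : LatticePath)} else ∅ := by
      ext v
      simp only [hA, Set.mem_setOf_eq]
      constructor
      · rintro ⟨⟨h1, h2⟩, hb, h3⟩
        have hnil : v = [] := by
          cases v
          · rfl
          · simp at h3
        subst hnil
        simp only [List.count_nil] at h1
        have hm : m = 0 := by omega
        have hb0 : b = 0 := by
          rw [bounces_nil] at hb
          simp at hb
          omega
        simp [hm, hb0]
      · intro hv
        by_cases h : m = 0 ∧ b = 0
        · rw [if_pos h] at hv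
          simp only [Set.mem_singleton_iff] at hv
          subst hv
          refine ⟨⟨by simp [h.1], by simp [h.1]⟩, ?_, rfl⟩
          rw [bounces_nil]
          simp [h.2]
        · rw [if_neg h] at hv
          exact absurd hv (Set.notMem_empty _)
    rw [he]
    by_cases h : m = 0 ∧ b = 0 <;> simp [h]
  have hBcard : B.ncard = if b = 0 then 0 else M (b-1) m true := by
    by_cases hb : b = 0
    · have : B = ∅ := by
        ext v
        simp only [hB, Set.mem_setOf_eq, Set.mem_empty_iff_false, iff_false]
        rintro ⟨-, h2, -⟩
        omega
      simp [this, hb]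
    · have : B = {v | InL 1 1 m v ∧ bnc v = b - 1 ∧ v.head? = some true} := by
        ext v
        simp only [hB, Set.mem_setOf_eq]
        constructor
        · rintro ⟨h1, h2, h3⟩; exact ⟨h1, by omega, h3⟩
        · rintro ⟨h1, h2, h3⟩; exact ⟨h1, by omega, h3⟩
      rw [if_neg hb, this]
      rfl
  have hCcard : C.ncard = M b m true := by
    rw [← M_symm]
    rfl
  rw [hAcard, hBcard, hCcard, Rcount]
  ring

lemma ncard_biUnion {ι α : Type*} (s : Finset ι) (f : ι → Set α)
    (hf : ∀ i ∈ s, (f i).Finite)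
    (hd : ∀ i ∈ s, ∀ j ∈ s, i ≠ j → Disjoint (f i) (f j)) :
    (⋃ i ∈ s, f i).ncard = ∑ i ∈ s, (f i).ncard := by
  classical
  induction s using Finset.induction_on with
  | empty => simp
  | @insert a s ha ih =>
    rw [Finset.set_biUnion_insert, Finset.sum_insert ha,
      Set.ncard_union_eq ?dis (hf a (Finset.mem_insert_self a s)) ?fin,
      ih (fun i hi => hf i (Finset.mem_insert_of_mem hi))
        (fun i hi j hj hij =>
          hd i (Finset.mem_insert_of_mem hi) j (Finset.mem_insert_of_mem hj) hij)]
    case dis =>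
      rw [Set.disjoint_iUnion₂_right]
      intro i hi
      exact hd a (Finset.mem_insert_self a s) i (Finset.mem_insert_of_mem hi)
        (fun h => ha (h ▸ hi))
    case fin =>
      exact Set.Finite.biUnion s.finite_toSet
        (fun i hi => hf i (Finset.mem_insert_of_mem hi))

lemma ncard_sprod {α β : Type*} (s : Set α) (t : Set β) (hs : s.Finite) (ht : t.Finite) :
    (s ×ˢ t).ncard = s.ncard * t.ncard := by
  classical
  rw [Set.ncard_eq_toFinset_card _ (hs.prod ht), Set.ncard_eq_toFinset_card _ hs,
    Set.ncard_eq_toFinset_card _ ht, ← Finset.card_product]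
  congr 1
  ext x
  simp [Set.Finite.mem_toFinset]

lemma ncard_image2 {α β γ : Type*} (f : α → β → γ) (s : Set α) (t : Set β)
    (hs : s.Finite) (ht : t.Finite)
    (hinj : ∀ a ∈ s, ∀ b ∈ t, ∀ a' ∈ s, ∀ b' ∈ t, f a b = f a' b' → a = a' ∧ b = b') :
    (Set.image2 f s t).ncard = s.ncard * t.ncard := by
  rw [← Set.image_prod, Set.ncard_image_of_injOn, ncard_sprod s t hs ht]
  rintro ⟨a, b⟩ ⟨ha, hb⟩ ⟨a', b'⟩ ⟨ha', hb'⟩ h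
  obtain ⟨h1, h2⟩ := hinj a ha b hb a' ha' b' hb' h
  simp [h1, h2]

/-- The `k`-th slice: paths whose first return to the diagonal is at `(k, k)`. -/
def Sk (b n k : ℕ) : Set LatticePath :=
  Set.image2 (fun w v => (true :: w) ++ (false :: v))
    {w | IsDyck w ∧ w.length = 2 * (k - 1)}
    {v | InL 1 1 (n - k) v ∧ bnc v + (if v.head? = some true then 1 else 0) = b}

lemma dyck_count_eq {w : List Bool} {k : ℕ} (hw : IsDyck w) (hl : w.length = 2 * (k-1)) :
    w.count true = k - 1 ∧ w.count false = k - 1 := by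
  have := count_tf w
  have := hw.1
  omega

lemma Sk_sub (b n k : ℕ) (hk1 : 1 ≤ k) (hkn : k ≤ n) :
    Sk b n k ⊆ {p | InL 1 1 n p ∧ bnc p = b ∧ p.head? = some true} := by
  rintro p ⟨w, ⟨hw, hwl⟩, v, ⟨hv, hvb⟩, rfl⟩
  obtain ⟨hwt, hwf⟩ := dyck_count_eq hw hwl
  obtain ⟨hvt, hvf⟩ := hv
  rw [one_mul] at hvt hvf
  refine ⟨⟨?_, ?_⟩, ?_, rfl⟩
  · simp [List.count_append, List.count_cons, hwt, hvt]
    omega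
  · simp [List.count_append, List.count_cons, hwf, hvf]
    omega
  · unfold bnc at hvb ⊢
    rw [leftBounces_decomp hw v, rightBounces_decomp hw v]
    omega

lemma Sk_eq_ncard (b n k : ℕ) :
    (Sk b n k).ncard = catalan (k-1) * Rcount b (n-k) := by
  rw [Sk, ncard_image2 _ _ _
    (((List.finite_length_eq Bool (2*(k-1))).subset) (fun w hw => hw.2))
    (pathset_finite (n-k) _) ?_, dyck_ncard, ncard_Rst]
  rintro w ⟨-, hwl⟩ v - w' ⟨-, hwl'⟩ v' - h
  simp only [List.cons_append] at h
  have h' := List.cons_injective h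
  obtain ⟨h1, h2⟩ := List.append_inj h' (by omega)
  constructor
  · exact h1
  · exact List.cons_injective h2

lemma Sk_disjoint (b n : ℕ) {k k' : ℕ} (hk1 : 1 ≤ k) (h : k < k') :
    Disjoint (Sk b n k) (Sk b n k') := by
  rw [Set.disjoint_left]
  rintro p ⟨w, ⟨hw, hwl⟩, v, -, rfl⟩ ⟨w', ⟨hw', hwl'⟩, v', -, he⟩
  have he' : (true :: w') ++ (false :: v') = (true :: w) ++ (false :: v) := he
  have hbal := arch_balanced hw.1 v
  rw [← he'] at hbal
  have hlt := arch_prefix_lt hw'.2 v' (j := w.length + 2) (by omega) (by omega)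
  omega

lemma Sk_finite (b n k : ℕ) : (Sk b n k).Finite :=
  Set.Finite.image2 _
    (((List.finite_length_eq Bool (2*(k-1))).subset) (fun w hw => hw.2))
    (pathset_finite (n-k) _)

lemma Mrec (b n : ℕ) :
    M b n true = ∑ k ∈ Finset.Icc 1 n, catalan (k-1) * Rcount b (n-k) := by
  unfold M
  have hcov : {p | InL 1 1 n p ∧ bnc p = b ∧ p.head? = some true}
      = ⋃ k ∈ Finset.Icc 1 n, Sk b n k := by
    apply Set.Subset.antisymm
    · rintro p ⟨hp, hb, hh⟩
      obtain ⟨k, hk1, hkn, w, v, hw, hwl, hv, rfl⟩ := exists_decomp hp hh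
      refine Set.mem_biUnion (Finset.mem_Icc.mpr ⟨hk1, hkn⟩) ?_
      refine ⟨w, ⟨hw, hwl⟩, v, ⟨hv, ?_⟩, rfl⟩
      unfold bnc at hb
      rw [leftBounces_decomp hw v, rightBounces_decomp hw v] at hb
      unfold bnc
      omega
    · intro p hp
      obtain ⟨k, hk, hmem⟩ := Set.mem_iUnion₂.mp hp
      obtain ⟨hk1, hkn⟩ := Finset.mem_Icc.mp hk
      exact Sk_sub b n k hk1 hkn hmem
  rw [hcov, ncard_biUnion _ _ (fun k _ => Sk_finite b n k) ?dis]
  case dis =>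
    intro i hi j hj hij
    rcases lt_or_gt_of_ne hij with h | h
    · exact Sk_disjoint b n (Finset.mem_Icc.mp hi).1 h
    · exact (Sk_disjoint b n (Finset.mem_Icc.mp hj).1 h).symm
  exact Finset.sum_congr rfl (fun k _ => Sk_eq_ncard b n k)


open PowerSeries

noncomputable def cS : PowerSeries ℚ := fussCatalan 1

lemma coeff_cS (n : ℕ) : coeff n cS = (catalan n : ℚ) := by
  rw [cS, fussCatalan, coeff_mk, catalan_eq_centralBinom_div,
    Nat.cast_div (Nat.succ_dvd_centralBinom n) (by positivity)]
  have h1 : (1+1)*n = 2*n := by ring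
  have h2 : Nat.centralBinom n = (2*n).choose n := rfl
  rw [h1, h2]
  push_cast
  ring

lemma constantCoeff_cS : constantCoeff cS = 1 := by
  rw [← coeff_zero_eq_constantCoeff, coeff_cS]
  simp

lemma cS_eq : cS = 1 + X * cS^2 := by
  ext n
  cases n with
  | zero =>
    simp only [coeff_zero_eq_constantCoeff, map_add, map_mul, constantCoeff_X,
      constantCoeff_one, zero_mul, add_zero, constantCoeff_cS]
  | succ n =>
    rw [map_add, coeff_one, if_neg (Nat.succ_ne_zero n), coeff_succ_X_mul, zero_add,
      coeff_cS, pow_two, PowerSeries.coeff_mul, catalan_succ']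
    push_cast
    exact (Finset.sum_congr rfl fun p _ => by rw [coeff_cS, coeff_cS]).symm

noncomputable def P : PowerSeries ℚ := X * cS

lemma coeff_P (k : ℕ) : coeff k P = if k = 0 then 0 else (catalan (k-1) : ℚ) := by
  cases k with
  | zero => simp [P]
  | succ k => rw [P, coeff_succ_X_mul, coeff_cS]; simp

lemma cS_unit : cS * (1 - P) = 1 := by
  have h := cS_eq
  rw [P]
  linear_combination h

lemma cS_sub_one : cS - 1 = X * cS^2 := by
  have h := cS_eq
  linear_combination h

noncomputable def Eser (b : ℕ) : PowerSeries ℚ :=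
  PowerSeries.mk fun n => if n = 0 then 0 else (M b n true : ℚ)

lemma coeff_Eser (b n : ℕ) : coeff n (Eser b) = if n = 0 then 0 else (M b n true : ℚ) := by
  rw [Eser, coeff_mk]

lemma coeff_rest (b j : ℕ) :
    coeff j ((if b = 0 then 1 else Eser (b-1)) + Eser b) = (Rcount b j : ℚ) := by
  rw [map_add, Rcount]
  by_cases hb : b = 0 <;> by_cases hj : j = 0 <;>
    simp [hb, hj, coeff_Eser, coeff_one, M_zero]

lemma Eser_rec (b : ℕ) : Eser b = P * ((if b = 0 then 1 else Eser (b-1)) + Eser b) := by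
  ext n
  cases n with
  | zero =>
    rw [coeff_Eser, if_pos rfl, coeff_zero_eq_constantCoeff, map_mul]
    have : constantCoeff P = 0 := by rw [P, map_mul, constantCoeff_X, zero_mul]
    rw [this, zero_mul]
  | succ n =>
    rw [coeff_Eser, if_neg (Nat.succ_ne_zero n), PowerSeries.coeff_mul,
      Finset.Nat.sum_antidiagonal_eq_sum_range_succ_mk, Mrec b (n+1)]
    push_cast
    rw [← Finset.sum_subset (show Finset.Icc 1 (n+1) ⊆ Finset.range (n+2) from by
        intro x hx; simp only [Finset.mem_Icc] at hx; simp only [Finset.mem_range]; omega) ?hz]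
    case hz =>
      intro x hx hx'
      simp only [Finset.mem_range] at hx
      simp only [Finset.mem_Icc] at hx'
      have hx0 : x = 0 := by omega
      rw [hx0, coeff_P, if_pos rfl, zero_mul]
    apply Finset.sum_congr rfl
    intro k hk
    obtain ⟨hk1, hk2⟩ := Finset.mem_Icc.mp hk
    rw [coeff_P, if_neg (by omega), coeff_rest]

lemma Eser_solve (b : ℕ) (F : PowerSeries ℚ) (h : Eser b = P * (F + Eser b)) :
    Eser b = cS * P * F := by
  calc Eser b = Eser b * (cS * (1 - P)) := by rw [cS_unit, mul_one]
  _ = cS * P * F := by linear_combination cS * h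

lemma Eser_eq (b : ℕ) : Eser b = (cS - 1)^(b+1) := by
  induction b with
  | zero =>
    have h := Eser_solve 0 1 (by simpa using Eser_rec 0)
    rw [h, pow_one, cS_sub_one, P]
    ring
  | succ b ih =>
    have h := Eser_solve (b+1) (Eser b) (by simpa using Eser_rec (b+1))
    rw [h, ih, pow_succ, cS_sub_one, P]
    ring

lemma Nb_eq_twoM (b n : ℕ) (hn : 1 ≤ n) : Nb b n = 2 * M b n true := by
  have hsplit : {p | InL 1 1 n p ∧ leftBounces 1 1 p + rightBounces 1 1 p = b}
      = {p | InL 1 1 n p ∧ bnc p = b ∧ p.head? = some true}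
        ∪ {p | InL 1 1 n p ∧ bnc p = b ∧ p.head? = some false} := by
    ext p
    simp only [Set.mem_union, Set.mem_setOf_eq, bnc]
    constructor
    · rintro ⟨h1, h2⟩
      cases p with
      | nil =>
        exfalso
        obtain ⟨hc, -⟩ := h1
        simp at hc
        omega
      | cons a t =>
        cases a
        · right; exact ⟨h1, h2, rfl⟩
        · left; exact ⟨h1, h2, rfl⟩
    · rintro (⟨h1, h2, -⟩ | ⟨h1, h2, -⟩) <;> exact ⟨h1, h2⟩
  rw [Nb, hsplit, Set.ncard_union_eq ?_ (pathset_finite n _) (pathset_finite n _)]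
  · show M b n true + M b n false = 2 * M b n true
    rw [M_symm]
    ring
  · rw [Set.disjoint_left]
    rintro p ⟨-, -, h⟩ ⟨-, -, h'⟩
    rw [h] at h'
    simp at h'

lemma GbSer_eq_two_Eser (b : ℕ) : GbSer b = 2 * Eser b := by
  ext n
  rw [GbSer, coeff_mk]
  cases n with
  | zero => simp [Eser]
  | succ n =>
    rw [if_neg (Nat.succ_ne_zero n)]
    have h2 : (2 : PowerSeries ℚ) * Eser b = Eser b + Eser b := by ring
    rw [h2, map_add, coeff_Eser, if_neg (Nat.succ_ne_zero n),
      Nb_eq_twoM b (n+1) (by omega)]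
    push_cast
    ring

lemma ballot_algebra (A Mv q r : ℚ) (hM : Mv + 1 ≠ 0) (hN : 2*Mv+A+2 ≠ 0)
    (hN1 : 2*Mv+A+3 ≠ 0) (hrec : r*(Mv+1) = q*(Mv+A+2)) :
    (A+1)/(2*Mv+A+3) * (q+r) = A/(2*Mv+A+2)*r + (A+2)/(2*Mv+A+2)*q := by
  have hr : r = q*(Mv+A+2)/(Mv+1) := by
    field_simp
    linarith
  rw [hr]
  field_simp
  ring

lemma coeff_cS_pow : ∀ m a : ℕ, 1 ≤ a →
    coeff m (cS^a) = (a : ℚ)/(2*m+a) * (((2*m+a).choose m : ℕ) : ℚ) := by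
  intro m
  induction m using Nat.strong_induction_on with
  | _ m ih =>
    match m with
    | 0 =>
      intro a ha
      rw [coeff_zero_eq_constantCoeff, map_pow, constantCoeff_cS, one_pow]
      rw [Nat.mul_zero, Nat.zero_add, Nat.choose_zero_right]
      have : (a:ℚ) ≠ 0 := by positivity
      push_cast
      field_simp
      ring
    | (m'+1) =>
      intro a ha
      induction a with
      | zero => omega
      | succ a iha =>
        have hstep : cS^(a+1) = cS^a + X * cS^(a+2) := by
          calc cS^(a+1) = cS^a * cS := pow_succ cS a
          _ = cS^a * (1 + X * cS^2) := by rw [← cS_eq]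
          _ = cS^a + X * cS^(a+2) := by ring
        have h1 : coeff (m'+1) (cS^a)
            = (a : ℚ)/(2*((m'+1 : ℕ) : ℚ)+(a : ℚ))
              * (((2*(m'+1)+a).choose (m'+1) : ℕ) : ℚ) := by
          cases a with
          | zero => simp [coeff_one]
          | succ a' => exact iha (by omega)
        have h2 := ih m' (by omega) (a+2) (by omega)
        rw [hstep, map_add, PowerSeries.coeff_succ_X_mul, h1, h2]
        rw [show 2*(m'+1)+a = 2*m'+a+2 from by omega,
          show 2*m'+(a+2) = 2*m'+a+2 from by omega,
          show 2*(m'+1)+(a+1) = 2*m'+a+3 from by omega]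
        have hpas : (((2*m'+a+3).choose (m'+1) : ℕ) : ℚ)
            = (((2*m'+a+2).choose m' : ℕ) : ℚ) + (((2*m'+a+2).choose (m'+1) : ℕ) : ℚ) := by
          rw [show 2*m'+a+3 = (2*m'+a+2)+1 from by omega, Nat.choose_succ_succ']
          push_cast
          ring
        have hrec : (((2*m'+a+2).choose (m'+1) : ℕ) : ℚ) * ((m' : ℚ)+1)
            = (((2*m'+a+2).choose m' : ℕ) : ℚ) * ((m' : ℚ) + (a:ℚ) + 2) := by
          have h := Nat.choose_succ_right_eq (2*m'+a+2) m'
          have hsub : 2*m'+a+2 - m' = m' + a + 2 := by omega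
          rw [hsub] at h
          have hc := congrArg (Nat.cast (R := ℚ)) h
          push_cast at hc
          linear_combination hc
        have key := ballot_algebra (a : ℚ) (m' : ℚ)
          (((2*m'+a+2).choose m' : ℕ) : ℚ) (((2*m'+a+2).choose (m'+1) : ℕ) : ℚ)
          (by positivity) (by positivity) (by positivity)
          (by linear_combination hrec)
        push_cast at hpas key ⊢
        rw [hpas]
        linear_combination -key

lemma GbSer_closed (b : ℕ) : GbSer b = 2 * (cS - 1)^(b+1) := by
  rw [GbSer_eq_two_Eser, Eser_eq]

lemma pow_form (b : ℕ) : (cS - 1)^(b+1) = X^(b+1) * cS^(2*b+2) := by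
  rw [cS_sub_one, mul_pow, ← pow_mul, show 2*(b+1) = 2*b+2 from by omega]

theorem main (b : ℕ) (hb : 1 ≤ b) :
    GbSer b = 2 * (fussCatalan 1 - 1) ^ (b + 1) ∧
    GbSer b = 2 * PowerSeries.X ^ (b + 1) * fussCatalan 1 ^ (2 * b + 2) ∧
    ∀ n : ℕ, b < n → n * Nb b n = 2 * (b + 1) * (2 * n).choose (n - b - 1) := by
  have hI : GbSer b = 2 * (cS - 1)^(b+1) := GbSer_closed b
  have hII : GbSer b = 2 * X^(b+1) * cS^(2*b+2) := by
    rw [hI, pow_form]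
    ring
  refine ⟨hI, hII, ?_⟩
  intro n hn
  have hn1 : 1 ≤ n := by omega
  have hcoeff : (Nb b n : ℚ) = coeff n (GbSer b) := by
    rw [GbSer, coeff_mk, if_neg (by omega)]
  rw [hII] at hcoeff
  have hsplit : (2 : PowerSeries ℚ) * X^(b+1) * cS^(2*b+2)
      = X^(b+1) * cS^(2*b+2) + X^(b+1) * cS^(2*b+2) := by ring
  rw [hsplit, map_add] at hcoeff
  have hX : coeff n (X^(b+1) * cS^(2*b+2)) = coeff (n-b-1) (cS^(2*b+2)) := by
    have h := PowerSeries.coeff_X_pow_mul (cS^(2*b+2)) (b+1) (n-b-1)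
    rw [show (n-b-1) + (b+1) = n from by omega] at h
    exact h
  rw [hX, coeff_cS_pow (n-b-1) (2*b+2) (by omega),
    show 2*(n-b-1)+(2*b+2) = 2*n from by omega] at hcoeff
  have hnQ : ((n : ℚ)) ≠ 0 := by positivity
  have hm : ((n-b-1 : ℕ) : ℚ) = (n:ℚ) - (b:ℚ) - 1 := by
    rw [show n - b - 1 = n - (b+1) from by omega, Nat.cast_sub (by omega)]
    push_cast
    ring
  have hd : (2 * ((n-b-1 : ℕ) : ℚ) + ((2*b+2 : ℕ) : ℚ)) = 2*(n:ℚ) := by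
    rw [hm]
    push_cast
    ring
  rw [hd] at hcoeff
  push_cast at hcoeff
  apply Nat.cast_injective (R := ℚ)
  push_cast
  rw [hcoeff]
  field_simp
  ring


end S16

/-- For `b ≥ 1`: `G_b(x) = 2·(c(x) − 1)^{b+1} = 2·x^{b+1}·c(x)^{2b+2}`,
and for every `n > b`, `n·N_b(n) = 2·(b+1)·C(2n, n−b−1)`. -/
theorem statement16 (b : ℕ) (hb : 1 ≤ b) :
    GbSer b = 2 * (fussCatalan 1 - 1) ^ (b + 1) ∧
    GbSer b = 2 * PowerSeries.X ^ (b + 1) * fussCatalan 1 ^ (2 * b + 2) ∧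
    ∀ n : ℕ, b < n → n * Nb b n = 2 * (b + 1) * (2 * n).choose (n - b - 1) := by
  exact S16.main b hb
end

section
/- For β = 1 and any integer α ≥ 1, the generating functions nhc_ee(x) and nhc_en(x) counting EE-paths, respectively EN-paths, in L_{1/α}(k) with no horizontal crosses satisfy nhc_ee(x)·(1 + g_ee(x)) = g_ee(x) and nhc_en(x)·(1 + g_ee(x)) = g_en(x); moreover nhc_en(x) also counts NE-paths in L_{1/α}(k) with no horizontal crosses, and h_{E✳}(x) := nhc_ee(x) + nhc_en(x), which counts paths in L_{1/α}(k) that start with an E-step and have no horizontal crosses, equals Σ_{k≥1} (α(α+2)/((α+1)k+1))·C((α+1)k+1, k−1)·x^k. -/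
/-- Generating function of EE-paths in `L_{1/α}(k)` with no horizontal crosses. -/
noncomputable def nhcEE (α : ℕ) : PowerSeries ℚ :=
  gfOf fun k => {p | InL α 1 k p ∧ NoHCross α p ∧ FirstStep p true ∧ LastStep p true}

/-- Generating function of EN-paths in `L_{1/α}(k)` with no horizontal crosses. -/
noncomputable def nhcEN (α : ℕ) : PowerSeries ℚ :=
  gfOf fun k => {p | InL α 1 k p ∧ NoHCross α p ∧ FirstStep p true ∧ LastStep p false}

/-- Generating function of NE-paths in `L_{1/α}(k)` with no horizontal crosses. -/
noncomputable def nhcNE (α : ℕ) : PowerSeries ℚ :=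
  gfOf fun k => {p | InL α 1 k p ∧ NoHCross α p ∧ FirstStep p false ∧ LastStep p true}

/-- Generating function of paths in `L_{1/α}(k)` that start with an E-step and have
no horizontal crosses. -/
noncomputable def hEstar (α : ℕ) : PowerSeries ℚ :=
  gfOf fun k => {p | InL α 1 k p ∧ NoHCross α p ∧ FirstStep p true}

namespace St18

/-- The set of boolean lists with `a` trues and `b` falses. -/
def cntSet (a b : ℕ) : Set (List Bool) := {l | l.count true = a ∧ l.count false = b}

lemma length_of_mem_cntSet {a b : ℕ} {l : List Bool} (h : l ∈ cntSet a b) :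
    l.length = a + b := by
  rw [← List.count_true_add_count_false l, h.1, h.2]

lemma cntSet_finite (a b : ℕ) : (cntSet a b).Finite :=
  (List.finite_length_eq Bool (a + b)).subset (fun _ hl => length_of_mem_cntSet hl)

lemma mem_cntSet_cons_iff {a b : ℕ} (x : Bool) (t : List Bool) :
    (x :: t) ∈ cntSet a b ↔
      t ∈ cntSet (if x then a - 1 else a) (if x then b else b - 1) ∧
        (if x then 1 ≤ a else 1 ≤ b) := by
  cases x <;> simp [cntSet, List.count_cons] <;> omega

lemma ncard_cntSet (a b : ℕ) : (cntSet a b).ncard = (a + b).choose b := by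
  induction' h : a + b with n ih generalizing a b
  · obtain ⟨rfl, rfl⟩ : a = 0 ∧ b = 0 := by omega
    have : cntSet 0 0 = {([] : List Bool)} := by
      ext l
      simp only [cntSet, Set.mem_setOf_eq, Set.mem_singleton_iff]
      constructor
      · intro ⟨h1, h2⟩
        have := List.count_true_add_count_false l
        rw [h1, h2] at this
        exact List.eq_nil_of_length_eq_zero this.symm
      · rintro rfl; simp
    rw [this]; simp
  · -- a + b = n + 1
    have split : ∀ l ∈ cntSet a b, ∃ x t, l = x :: t := by
      intro l hl
      have := length_of_mem_cntSet hl
      cases l with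
      | nil => simp at this; omega
      | cons x t => exact ⟨x, t, rfl⟩
    rcases Nat.eq_zero_or_pos a with rfl | ha
    · -- a = 0, b = n+1
      have hb : b = n + 1 := by omega
      have himg : cntSet 0 b = (List.cons false) '' cntSet 0 (b - 1) := by
        ext l
        constructor
        · intro hl
          obtain ⟨x, t, rfl⟩ := split l hl
          cases x
          · rw [mem_cntSet_cons_iff] at hl
            exact ⟨t, by simpa using hl.1, rfl⟩
          · rw [mem_cntSet_cons_iff] at hl
            simp at hl
        · rintro ⟨t, ht, rfl⟩
          rw [mem_cntSet_cons_iff]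
          simp only [if_neg, Bool.false_eq_true, not_false_iff, if_true]
          exact ⟨by simpa using ht, by omega⟩
      rw [himg, Set.ncard_image_of_injective _ (List.cons_injective),
        ih 0 (b - 1) (by omega)]
      simp [hb, Nat.choose_self]
    rcases Nat.eq_zero_or_pos b with rfl | hb
    · -- b = 0
      have himg : cntSet a 0 = (List.cons true) '' cntSet (a - 1) 0 := by
        ext l
        constructor
        · intro hl
          obtain ⟨x, t, rfl⟩ := split l hl
          cases x
          · rw [mem_cntSet_cons_iff] at hl
            simp at hl
          · rw [mem_cntSet_cons_iff] at hl
            exact ⟨t, by simpa using hl.1, rfl⟩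
        · rintro ⟨t, ht, rfl⟩
          rw [mem_cntSet_cons_iff]
          simp only [if_true]
          exact ⟨by simpa using ht, by omega⟩
      rw [himg, Set.ncard_image_of_injective _ (List.cons_injective),
        ih (a - 1) 0 (by omega)]
      simp
    · -- a ≥ 1 and b ≥ 1
      have himg : cntSet a b =
          (List.cons true) '' cntSet (a - 1) b ∪ (List.cons false) '' cntSet a (b - 1) := by
        ext l
        constructor
        · intro hl
          obtain ⟨x, t, rfl⟩ := split l hl
          rw [mem_cntSet_cons_iff] at hl
          cases x
          · right; exact ⟨t, by simpa using hl.1, rfl⟩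
          · left; exact ⟨t, by simpa using hl.1, rfl⟩
        · rintro (⟨t, ht, rfl⟩ | ⟨t, ht, rfl⟩) <;> rw [mem_cntSet_cons_iff]
          · exact ⟨by simpa using ht, by simpa using (show 1 ≤ a by omega)⟩
          · exact ⟨by simpa using ht, by simpa using (show 1 ≤ b by omega)⟩
      have hdisj : Disjoint ((List.cons true) '' cntSet (a - 1) b)
          ((List.cons false) '' cntSet a (b - 1)) := by
        rw [Set.disjoint_left]
        rintro l ⟨t, _, rfl⟩ ⟨s, _, hs⟩
        simp at hs
      rw [himg, Set.ncard_union_eq hdisj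
          (((cntSet_finite _ _).image _))
          (((cntSet_finite _ _).image _)),
        Set.ncard_image_of_injective _ (List.cons_injective),
        Set.ncard_image_of_injective _ (List.cons_injective),
        ih (a - 1) b (by omega), ih a (b - 1) (by omega)]
      obtain ⟨b', rfl⟩ : ∃ b', b = b' + 1 := ⟨b - 1, by omega⟩
      simp only [Nat.add_sub_cancel, Nat.choose_succ_succ, Nat.succ_eq_add_one]
      omega


section PathSets

variable {α k : ℕ}

/-- Paths in `L_{1/α}(k)` starting with E and ending with `b`. -/
def bSet (α k : ℕ) (b : Bool) : Set LatticePath :=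
  {p | InL α 1 k p ∧ FirstStep p true ∧ LastStep p b}

/-- No-cross paths in `L_{1/α}(k)` starting with E and ending with `b`. -/
def aSet (α k : ℕ) (b : Bool) : Set LatticePath :=
  {p | InL α 1 k p ∧ NoHCross α p ∧ FirstStep p true ∧ LastStep p b}

lemma length_of_InL {p : LatticePath} (h : InL α 1 k p) : p.length = (α + 1) * k := by
  rw [← List.count_true_add_count_false p, h.1, h.2]; ring

lemma finite_of_subset_InL {S : Set LatticePath} (hS : S ⊆ {p | InL α 1 k p}) :
    S.Finite :=
  (List.finite_length_eq Bool ((α + 1) * k)).subset fun p hp => length_of_InL (hS hp)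

lemma bSet_finite (b : Bool) : (bSet α k b).Finite :=
  finite_of_subset_InL (fun p hp => hp.1)

lemma aSet_finite (b : Bool) : (aSet α k b).Finite :=
  finite_of_subset_InL (fun p hp => hp.1)

lemma eq_concat_of_first_last {p : LatticePath} {b : Bool}
    (hf : FirstStep p true) (hl : LastStep p b) (hlen : 2 ≤ p.length) :
    ∃ q, p = true :: (q ++ [b]) := by
  cases p with
  | nil => simp at hlen
  | cons x t =>
    have hx : x = true := by
      have := hf
      simp only [FirstStep, List.head?_cons, Option.some.injEq] at this
      exact this
    subst hx
    have ht : t ≠ [] := by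
      intro h; subst h; simp at hlen
    obtain ⟨q, c, rfl⟩ : ∃ q c, t = q ++ [c] :=
      ⟨t.dropLast, t.getLast ht, (List.dropLast_append_getLast ht).symm⟩
    have hc : c = b := by
      have := hl
      simp only [LastStep, ← List.cons_append, List.getLast?_concat,
        Option.some.injEq] at this
      exact this
    subst hc
    exact ⟨q, rfl⟩

lemma concat_injective (b : Bool) :
    Function.Injective (fun q : List Bool => true :: (q ++ [b])) := by
  intro q q' h
  simp only [List.cons.injEq] at h
  exact List.append_left_injective [b] h.2

lemma bSet_true_eq (hk : 1 ≤ k) (h2 : 2 ≤ α * k) :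
    bSet α k true = (fun q => true :: (q ++ [true])) '' cntSet (α * k - 2) k := by
  ext p
  constructor
  · rintro ⟨⟨hT, hF⟩, hf, hl⟩
    have hlen : p.length = (α + 1) * k := length_of_InL ⟨hT, hF⟩
    obtain ⟨q, rfl⟩ := eq_concat_of_first_last hf hl (by nlinarith)
    refine ⟨q, ⟨?_, ?_⟩, rfl⟩
    · have : List.count true (true :: (q ++ [true])) = q.count true + 2 := by
        simp [List.count_cons, List.count_append]
      omega
    · have : List.count false (true :: (q ++ [true])) = q.count false := by
        simp [List.count_cons, List.count_append]
      omega
  · rintro ⟨q, ⟨hT, hF⟩, rfl⟩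
    refine ⟨⟨?_, ?_⟩, List.head?_cons, ?_⟩
    · have h' : List.count true (true :: (q ++ [true])) = q.count true + 2 := by
        simp [List.count_cons, List.count_append]
      rw [h', hT]; omega
    · have h' : List.count false (true :: (q ++ [true])) = q.count false := by
        simp [List.count_cons, List.count_append]
      rw [h', hF]; omega
    · simp only [LastStep, ← List.cons_append, List.getLast?_concat]

lemma bSet_false_eq (hk : 1 ≤ k) (h1 : 1 ≤ α * k) :
    bSet α k false = (fun q => true :: (q ++ [false])) '' cntSet (α * k - 1) (k - 1) := by
  ext p
  constructor
  · rintro ⟨⟨hT, hF⟩, hf, hl⟩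
    have hlen : p.length = (α + 1) * k := length_of_InL ⟨hT, hF⟩
    obtain ⟨q, rfl⟩ := eq_concat_of_first_last hf hl (by nlinarith)
    refine ⟨q, ⟨?_, ?_⟩, rfl⟩
    · have : List.count true (true :: (q ++ [false])) = q.count true + 1 := by
        simp [List.count_cons, List.count_append]
      omega
    · have : List.count false (true :: (q ++ [false])) = q.count false + 1 := by
        simp [List.count_cons, List.count_append]
      omega
  · rintro ⟨q, ⟨hT, hF⟩, rfl⟩
    refine ⟨⟨?_, ?_⟩, List.head?_cons, ?_⟩
    · have h' : List.count true (true :: (q ++ [false])) = q.count true + 1 := by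
        simp [List.count_cons, List.count_append]
      rw [h', hT]; omega
    · have h' : List.count false (true :: (q ++ [false])) = q.count false + 1 := by
        simp [List.count_cons, List.count_append]
      rw [h', hF]; omega
    · simp only [LastStep, ← List.cons_append, List.getLast?_concat]

lemma ncard_bSet_true (hα : 1 ≤ α) (hk : 1 ≤ k) :
    (bSet α k true).ncard = ((α + 1) * k - 2).choose k := by
  rcases le_or_gt 2 (α * k) with h2 | h2
  · rw [bSet_true_eq hk h2, Set.ncard_image_of_injective _ (concat_injective true),
      ncard_cntSet]
    have hh : (α + 1) * k = α * k + k := by ring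
    congr 1
    omega
  · -- α * k = 1, so α = 1, k = 1
    have hαk : α = 1 ∧ k = 1 := by
      constructor <;> nlinarith
    obtain ⟨rfl, rfl⟩ := hαk
    have : bSet 1 1 true = ∅ := by
      ext p
      simp only [Set.mem_empty_iff_false, iff_false]
      rintro ⟨⟨hT, hF⟩, hf, hl⟩
      have hlen : p.length = 2 := by
        have := length_of_InL (k := 1) (α := 1) ⟨hT, hF⟩
        omega
      obtain ⟨q, rfl⟩ := eq_concat_of_first_last hf hl (by omega)
      have : List.count true (true :: (q ++ [true])) = q.count true + 2 := by
        simp [List.count_cons, List.count_append]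
      simp only [this] at hT
      omega
    rw [this]
    simp [show (1 + 1) * 1 - 2 = 0 by norm_num]

lemma ncard_bSet_false (hα : 1 ≤ α) (hk : 1 ≤ k) :
    (bSet α k false).ncard = ((α + 1) * k - 2).choose (k - 1) := by
  have h1 : 1 ≤ α * k := by nlinarith
  rw [bSet_false_eq hk h1, Set.ncard_image_of_injective _ (concat_injective false),
    ncard_cntSet]
  have hh : (α + 1) * k = α * k + k := by ring
  congr 1
  omega

end PathSets

section Cross

variable {α : ℕ}

instance (α : ℕ) (p : LatticePath) : DecidablePred (HasHCrossAt α p) := fun i => by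
  unfold HasHCrossAt; infer_instance

lemma hcross_lt_length {p : LatticePath} {j : ℕ} (h : HasHCrossAt α p j) :
    (α + 1) * j < p.length := by
  have := h.2.2.2
  rw [List.getElem?_eq_some_iff] at this
  exact this.1

lemma cross_append_lt {q r : LatticePath} {i j : ℕ} (hlen : q.length = (α + 1) * i)
    (hj : j < i) : HasHCrossAt α (q ++ r) j ↔ HasHCrossAt α q j := by
  have hle : (α + 1) * j + (α + 1) ≤ (α + 1) * i := by
    have h' : (α + 1) * (j + 1) ≤ (α + 1) * i := Nat.mul_le_mul_left _ (by omega)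
    have h'' : (α + 1) * (j + 1) = (α + 1) * j + (α + 1) := by ring
    omega
  have h1 : (α + 1) * j ≤ q.length := by omega
  have h2 : (α + 1) * j < q.length := by omega
  have h3 : (α + 1) * j - 1 < q.length := by omega
  unfold HasHCrossAt
  rw [List.take_append_of_le_length h1, List.getElem?_append_left h2,
    List.getElem?_append_left h3]

lemma cross_append_eq {q r : LatticePath} {i : ℕ} (hlen : q.length = (α + 1) * i)
    (hcnt : q.count true = α * i) (hi : 1 ≤ i) :
    HasHCrossAt α (q ++ r) i ↔ (q.getLast? = some true ∧ r.head? = some true) := by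
  have hq1 : 1 ≤ q.length := by
    rw [hlen]; nlinarith
  unfold HasHCrossAt
  rw [List.take_append_of_le_length (le_of_eq hlen.symm),
    List.getElem?_append_left (by omega : (α + 1) * i - 1 < q.length),
    List.getElem?_append_right (le_of_eq hlen)]
  have e1 : q.take ((α + 1) * i) = q := by
    rw [← hlen, List.take_length]
  have e2 : q[(α + 1) * i - 1]? = q.getLast? := by
    rw [List.getLast?_eq_getElem?, hlen]
  have e3 : r[(α + 1) * i - q.length]? = r.head? := by
    rw [hlen, Nat.sub_self, List.head?_eq_getElem?]
  rw [e1, e2, e3, hcnt]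
  simp [hi]

lemma cross_append_gt {q r : LatticePath} {i j : ℕ} (hlen : q.length = (α + 1) * i)
    (hcnt : q.count true = α * i) (hj : i < j) :
    HasHCrossAt α (q ++ r) j ↔ HasHCrossAt α r (j - i) := by
  have e1 : (α + 1) * j = (α + 1) * i + (α + 1) * (j - i) := by
    rw [← Nat.mul_add]; congr 1; omega
  have e2 : α * j = α * i + α * (j - i) := by
    rw [← Nat.mul_add]; congr 1; omega
  have hji : 1 ≤ j - i := by omega
  have hd : 1 ≤ (α + 1) * (j - i) := by nlinarith
  unfold HasHCrossAt
  rw [List.take_append, List.count_append,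
    List.getElem?_append_right (by omega : q.length ≤ (α + 1) * j - 1),
    List.getElem?_append_right (by omega : q.length ≤ (α + 1) * j)]
  have e3 : q.take ((α + 1) * j) = q := List.take_of_length_le (by omega)
  have e4 : (α + 1) * j - q.length = (α + 1) * (j - i) := by omega
  have e5 : (α + 1) * j - 1 - q.length = (α + 1) * (j - i) - 1 := by omega
  rw [e3, e4, e5, hcnt]
  constructor
  · rintro ⟨-, hc, h1, h2⟩
    exact ⟨hji, by omega, h1, h2⟩
  · rintro ⟨-, hc, h1, h2⟩
    exact ⟨by omega, by omega, h1, h2⟩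

end Cross

section Decomp

variable {α : ℕ}

lemma ncard_prod (s t : Set LatticePath) (hs : s.Finite) (ht : t.Finite) :
    (s ×ˢ t).ncard = s.ncard * t.ncard := by
  rw [Set.ncard_eq_toFinset_card _ (hs.prod ht), ← Set.Finite.toFinset_prod hs ht,
    Finset.card_product, Set.ncard_eq_toFinset_card _ hs, Set.ncard_eq_toFinset_card _ ht]

lemma ncard_biUnion (s : Finset ℕ) (f : ℕ → Set LatticePath)
    (hfin : ∀ i ∈ s, (f i).Finite)
    (hdisj : ∀ i ∈ s, ∀ j ∈ s, i ≠ j → Disjoint (f i) (f j)) :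
    (⋃ i ∈ s, f i).ncard = ∑ i ∈ s, (f i).ncard := by
  classical
  induction s using Finset.induction_on with
  | empty => simp
  | @insert a s ha ih =>
    rw [Finset.set_biUnion_insert]
    have hdisj' : Disjoint (f a) (⋃ i ∈ s, f i) := by
      rw [Set.disjoint_left]
      rintro x hxa hxu
      obtain ⟨i, hi, hxi⟩ := Set.mem_iUnion₂.mp hxu
      exact (Set.disjoint_left.mp
        (hdisj a (Finset.mem_insert_self a s) i (Finset.mem_insert_of_mem hi)
          (by rintro rfl; exact ha hi)) hxa) hxi
    rw [Set.ncard_union_eq hdisj' (hfin a (Finset.mem_insert_self a s))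
        (Set.Finite.biUnion s.finite_toSet
          (fun i hi => hfin i (Finset.mem_insert_of_mem hi))),
      Finset.sum_insert ha,
      ih (fun i hi => hfin i (Finset.mem_insert_of_mem hi))
        (fun i hi j hj hij => hdisj i (Finset.mem_insert_of_mem hi) j
          (Finset.mem_insert_of_mem hj) hij)]

/-- The concatenation image set in the first-cross decomposition. -/
def crossPart (α k : ℕ) (b : Bool) (i : ℕ) : Set LatticePath :=
  (fun qr : LatticePath × LatticePath => qr.1 ++ qr.2) ''
    ((aSet α i true) ×ˢ (bSet α (k - i) b))

lemma crossPart_finite (k : ℕ) (b : Bool) (i : ℕ) : (crossPart α k b i).Finite :=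
  (((aSet_finite true).prod (bSet_finite b)).image _)

lemma cross_of_mem_crossPart {k i : ℕ} {b : Bool} (hi1 : 1 ≤ i) {p : LatticePath}
    (hp : p ∈ crossPart α k b i) :
    HasHCrossAt α p i ∧ ∀ j < i, ¬ HasHCrossAt α p j := by
  obtain ⟨⟨q, r⟩, ⟨⟨hqIn, hqnc, hqf, hql⟩, ⟨hrIn, hrf, hrl⟩⟩, rfl⟩ := hp
  have hqlen : q.length = (α + 1) * i := length_of_InL hqIn
  have hqT : q.count true = α * i := hqIn.1
  constructor
  · exact (cross_append_eq hqlen hqT hi1).mpr ⟨hql, hrf⟩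
  · intro j hj hcross
    exact hqnc j ((cross_append_lt hqlen hj).mp hcross)

lemma decomp_eq (hα : 1 ≤ α) (b : Bool) {k : ℕ} (hk : 1 ≤ k) :
    bSet α k b = aSet α k b ∪ ⋃ i ∈ Finset.Ico 1 k, crossPart α k b i := by
  ext p
  constructor
  · rintro ⟨hIn, hf, hl⟩
    by_cases hnc : NoHCross α p
    · exact Or.inl ⟨hIn, hnc, hf, hl⟩
    right
    rw [NoHCross] at hnc; push_neg at hnc
    have hcross : HasHCrossAt α p (Nat.find hnc) := Nat.find_spec hnc
    set i := Nat.find hnc with hi_def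
    have hmin : ∀ j < i, ¬ HasHCrossAt α p j := fun j hj => Nat.find_min hnc hj
    have hi1 : 1 ≤ i := hcross.1
    have hplen : p.length = (α + 1) * k := length_of_InL hIn
    have hik : i < k := by
      have h' := hcross_lt_length hcross
      rw [hplen] at h'
      exact Nat.lt_of_mul_lt_mul_left h'
    have hm1 : 1 ≤ (α + 1) * i := by nlinarith
    have hmle : (α + 1) * i ≤ (α + 1) * k := Nat.mul_le_mul_left _ (by omega)
    set m := (α + 1) * i with hm
    set q := p.take m with hq_def
    set r := p.drop m with hr_def
    have hqr : q ++ r = p := List.take_append_drop m p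
    have hqlen : q.length = m := by
      rw [hq_def, List.length_take, hplen]
      omega
    have hqT : q.count true = α * i := hcross.2.1
    have hqF : q.count false = i := by
      have h' := List.count_true_add_count_false q
      rw [hqT, hqlen] at h'
      have e : (α + 1) * i = α * i + i := by ring
      omega
    have eT : α * k = α * i + α * (k - i) := by
      rw [← Nat.mul_add]; congr 1; omega
    have hcnt := List.count_true_add_count_false p
    have hrT : r.count true = α * (k - i) := by
      have h' : q.count true + r.count true = p.count true := by
        rw [← hqr, List.count_append]
      rw [hIn.1] at h'
      omega
    have hrF : r.count false = k - i := by
      have h' : q.count false + r.count false = p.count false := by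
        rw [← hqr, List.count_append]
      rw [hIn.2] at h'
      omega
    have hrne : r ≠ [] := by
      have hlr : r.length = p.length - m := by rw [hr_def, List.length_drop]
      have : 0 < r.length := by
        rw [hlr, hplen]
        have e : (α + 1) * k = (α + 1) * i + (α + 1) * (k - i) := by
          rw [← Nat.mul_add]; congr 1; omega
        have : 1 ≤ (α + 1) * (k - i) := by
          have : 1 ≤ k - i := by omega
          nlinarith
        omega
      exact List.ne_nil_of_length_pos this
    have hrhead : r.head? = some true := by
      rw [List.head?_eq_getElem?, hr_def, List.getElem?_drop]
      simpa using hcross.2.2.2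
    have hrlast : r.getLast? = some b := by
      obtain ⟨c, hc⟩ := Option.isSome_iff_exists.mp
        (List.getLast?_isSome.mpr hrne)
      rw [LastStep, ← hqr, List.getLast?_append, hc] at hl
      have e' : (some c).or q.getLast? = some c := rfl
      rw [e'] at hl
      rw [hc]; exact hl
    have hqhead : q.head? = some true := by
      rw [List.head?_eq_getElem?, hq_def, List.getElem?_take]
      rw [if_pos (by omega : 0 < m), ← List.head?_eq_getElem?]
      exact hf
    have hqlast : q.getLast? = some true := by
      rw [List.getLast?_eq_getElem?, hqlen, hq_def, List.getElem?_take,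
        if_pos (by omega : m - 1 < m)]
      exact hcross.2.2.1
    have hqnc : NoHCross α q := by
      intro j hj
      rcases lt_or_ge j i with hji | hji
      · apply hmin j hji
        have h' := (cross_append_lt (r := r) hqlen hji).mpr hj
        rwa [hqr] at h'
      · have h' := hcross_lt_length hj
        rw [hqlen, hm] at h'
        have : j < i := Nat.lt_of_mul_lt_mul_left h'
        omega
    refine Set.mem_iUnion₂.mpr ⟨i, Finset.mem_Ico.mpr ⟨hi1, hik⟩,
      ⟨(q, r), ⟨⟨⟨hqT, by simpa using hqF⟩, hqnc, hqhead, hqlast⟩,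
        ⟨⟨hrT, by simpa using hrF⟩, hrhead, hrlast⟩⟩, hqr⟩⟩
  · rintro (⟨hIn, _, hf, hl⟩ | hmem)
    · exact ⟨hIn, hf, hl⟩
    obtain ⟨i, hi, hp⟩ := Set.mem_iUnion₂.mp hmem
    rw [Finset.mem_Ico] at hi
    obtain ⟨⟨q, r⟩, ⟨⟨hqIn, hqnc, hqf, hql⟩, ⟨hrIn, hrf, hrl⟩⟩, rfl⟩ := hp
    have hqlen : q.length = (α + 1) * i := length_of_InL hqIn
    have hrlen : r.length = (α + 1) * (k - i) := length_of_InL hrIn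
    have hrne : r ≠ [] := by
      apply List.ne_nil_of_length_pos
      rw [hrlen]
      have : 1 ≤ k - i := by omega
      nlinarith
    refine ⟨⟨?_, ?_⟩, ?_, ?_⟩
    · rw [List.count_append, hqIn.1, hrIn.1, ← Nat.mul_add]
      congr 1; omega
    · rw [List.count_append, hqIn.2, hrIn.2]
      simp only [one_mul]
      omega
    · rw [FirstStep, List.head?_append, hqf]
      rfl
    · rw [LastStep, List.getLast?_append, hrl]
      rfl

lemma disj_aSet_crossPart (b : Bool) {k i : ℕ} (hi : i ∈ Finset.Ico 1 k) :
    Disjoint (aSet α k b) (crossPart α k b i) := by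
  rw [Finset.mem_Ico] at hi
  rw [Set.disjoint_left]
  rintro p ⟨_, hnc, _, _⟩ hp
  exact hnc i (cross_of_mem_crossPart hi.1 hp).1

lemma disj_crossPart (b : Bool) {k i j : ℕ} (hi : i ∈ Finset.Ico 1 k)
    (hj : j ∈ Finset.Ico 1 k) (hij : i ≠ j) :
    Disjoint (crossPart α k b i) (crossPart α k b j) := by
  rw [Finset.mem_Ico] at hi hj
  rw [Set.disjoint_left]
  intro p hpi hpj
  rcases Nat.lt_or_ge i j with h | h
  · exact (cross_of_mem_crossPart hj.1 hpj).2 i h (cross_of_mem_crossPart hi.1 hpi).1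
  · have h' : j < i := by omega
    exact (cross_of_mem_crossPart hi.1 hpi).2 j h' (cross_of_mem_crossPart hj.1 hpj).1

lemma ncard_crossPart (b : Bool) {k i : ℕ} :
    (crossPart α k b i).ncard = (aSet α i true).ncard * (bSet α (k - i) b).ncard := by
  rw [crossPart, Set.ncard_image_of_injOn, ncard_prod _ _ (aSet_finite true) (bSet_finite b)]
  rintro ⟨q, r⟩ ⟨hq, hr⟩ ⟨q', r'⟩ ⟨hq', hr'⟩ h
  simp only at h
  have hlen : q.length = q'.length := by
    rw [length_of_InL hq.1, length_of_InL hq'.1]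
  obtain ⟨h1, h2⟩ := List.append_inj h hlen
  simp [h1, h2]

lemma ncard_rec (hα : 1 ≤ α) (b : Bool) {k : ℕ} (hk : 1 ≤ k) :
    (bSet α k b).ncard = (aSet α k b).ncard +
      ∑ i ∈ Finset.Ico 1 k, (aSet α i true).ncard * (bSet α (k - i) b).ncard := by
  have hfin2 : (⋃ i ∈ Finset.Ico 1 k, crossPart α k b i).Finite :=
    Set.Finite.biUnion (Finset.Ico 1 k).finite_toSet
      (fun i _ => crossPart_finite k b i)
  have hdisj : Disjoint (aSet α k b) (⋃ i ∈ Finset.Ico 1 k, crossPart α k b i) := by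
    rw [Set.disjoint_iUnion₂_right]
    exact fun i hi => disj_aSet_crossPart b hi
  rw [decomp_eq hα b hk,
    Set.ncard_union_eq hdisj (aSet_finite b) hfin2,
    ncard_biUnion _ _ (fun i _ => crossPart_finite k b i)
      (fun i hi j hj hij => disj_crossPart b hi hj hij)]
  congr 1
  exact Finset.sum_congr rfl (fun i _ => ncard_crossPart b)

end Decomp

section Reverse

variable {α : ℕ}

lemma cross_reverse {k : ℕ} {p : LatticePath} (hIn : InL α 1 k p) {i : ℕ}
    (hc : HasHCrossAt α p.reverse i) : HasHCrossAt α p (k - i) := by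
  obtain ⟨hi1, hcnt, hs1, hs2⟩ := hc
  have hplen : p.length = (α + 1) * k := length_of_InL hIn
  have hik : i < k := by
    have h' : (α + 1) * i < p.reverse.length := by
      have := hs2
      rw [List.getElem?_eq_some_iff] at this
      exact this.1
    rw [List.length_reverse, hplen] at h'
    exact Nat.lt_of_mul_lt_mul_left h'
  have e1 : (α + 1) * k = (α + 1) * i + (α + 1) * (k - i) := by
    rw [← Nat.mul_add]; congr 1; omega
  have e2 : α * k = α * i + α * (k - i) := by
    rw [← Nat.mul_add]; congr 1; omega
  set m := (α + 1) * i with hm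
  set m' := (α + 1) * (k - i) with hm'
  have hm'len : m' ≤ p.length := by omega
  have hcnt' : (p.take m').count true = α * (k - i) := by
    rw [List.take_reverse] at hcnt
    have hdlen : p.length - m = m' := by omega
    rw [hdlen, List.count_reverse] at hcnt
    -- hcnt : (p.drop m').count true = α * i
    have hsplit : (p.take m').count true + (p.drop m').count true = p.count true := by
      rw [← List.count_append, List.take_append_drop]
    rw [hIn.1] at hsplit
    omega
  have hm1 : 1 ≤ m := by
    calc 1 = 1 * 1 := rfl
    _ ≤ (α + 1) * i := Nat.mul_le_mul (by omega) hi1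
  have hm'1 : 1 ≤ m' := by
    calc 1 = 1 * 1 := rfl
    _ ≤ (α + 1) * (k - i) := Nat.mul_le_mul (by omega) (by omega)
  have hg1 : p[m' - 1]? = some true := by
    have h' := hs2
    rw [List.getElem?_reverse (by rw [hplen]; omega)] at h'
    rw [← h']
    congr 1
    omega
  have hg2 : p[m']? = some true := by
    have h' := hs1
    rw [List.getElem?_reverse (by rw [hplen]; omega)] at h'
    rw [← h']
    congr 1
    omega
  exact ⟨by omega, hcnt', hg1, hg2⟩

lemma noHCross_reverse {k : ℕ} {p : LatticePath} (hIn : InL α 1 k p)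
    (hnc : NoHCross α p) : NoHCross α p.reverse :=
  fun i hc => hnc (k - i) (cross_reverse hIn hc)

lemma InL_reverse {k : ℕ} {p : LatticePath} (hIn : InL α 1 k p) :
    InL α 1 k p.reverse :=
  ⟨by rw [List.count_reverse]; exact hIn.1, by rw [List.count_reverse]; exact hIn.2⟩

lemma neSet_eq_image {k : ℕ} :
    {p | InL α 1 k p ∧ NoHCross α p ∧ FirstStep p false ∧ LastStep p true} =
      List.reverse '' {p | InL α 1 k p ∧ NoHCross α p ∧ FirstStep p true ∧ LastStep p false} := by
  ext p
  constructor
  · rintro ⟨hIn, hnc, hf, hl⟩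
    refine ⟨p.reverse, ⟨InL_reverse hIn, noHCross_reverse hIn hnc, ?_, ?_⟩,
      List.reverse_reverse p⟩
    · rw [FirstStep, List.head?_reverse]; exact hl
    · rw [LastStep, List.getLast?_reverse]; exact hf
  · rintro ⟨q, ⟨hIn, hnc, hf, hl⟩, rfl⟩
    refine ⟨InL_reverse hIn, noHCross_reverse hIn hnc, ?_, ?_⟩
    · rw [FirstStep, List.head?_reverse]; exact hl
    · rw [LastStep, List.getLast?_reverse]; exact hf

end Reverse

section Gould

open Polynomial

/-- The polynomial `X ↦ C((α+1)j + X, j)` (binomial coefficient as a polynomial). -/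
noncomputable def Qp (α j : ℕ) : Polynomial ℚ :=
  Polynomial.C ((j.factorial : ℚ)⁻¹) *
    ∏ t ∈ Finset.range j, (Polynomial.X + Polynomial.C (((α + 1) * j - t : ℕ) : ℚ))

/-- The Rothe number `a/(a + (α+1)m) · C(a + (α+1)m, m)`. -/
noncomputable def Aq (α a m : ℕ) : ℚ :=
  if m = 0 then 1
  else (a : ℚ) / ((a + (α + 1) * m : ℕ) : ℚ) * ((a + (α + 1) * m).choose m : ℚ)

lemma Qp_eval_nat (α j : ℕ) (c : ℕ) :
    (Qp α j).eval (c : ℚ) = (((α + 1) * j + c).choose j : ℚ) := by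
  have key : ∀ t ∈ Finset.range j,
      ((c : ℚ) + (((α + 1) * j - t : ℕ) : ℚ)) = (((α + 1) * j + c - t : ℕ) : ℚ) := by
    intro t ht
    rw [Finset.mem_range] at ht
    have h1 : t ≤ (α + 1) * j := le_trans ht.le (Nat.le_mul_of_pos_left j (by omega))
    push_cast [Nat.cast_sub h1, Nat.cast_sub (by omega : t ≤ (α + 1) * j + c)]
    ring
  rw [Qp, Polynomial.eval_mul, Polynomial.eval_C, Polynomial.eval_prod]
  simp only [Polynomial.eval_add, Polynomial.eval_X, Polynomial.eval_C]
  rw [Finset.prod_congr rfl key, ← Nat.cast_prod,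
    ← Nat.descFactorial_eq_prod_range ((α + 1) * j + c) j,
    Nat.descFactorial_eq_factorial_mul_choose]
  push_cast
  rw [← mul_assoc, inv_mul_cancel₀ (by exact_mod_cast j.factorial_ne_zero), one_mul]

lemma Qp_eval_neg2 (α : ℕ) (hα : 1 ≤ α) {j : ℕ} (hj : 1 ≤ j) :
    (Qp α j).eval (-2 : ℚ) = (((α + 1) * j - 2).choose j : ℚ) := by
  have key : ∀ t ∈ Finset.range j,
      ((-2 : ℚ) + (((α + 1) * j - t : ℕ) : ℚ)) = (((α + 1) * j - 2 - t : ℕ) : ℚ) := by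
    intro t ht
    rw [Finset.mem_range] at ht
    have h2 : 2 * j ≤ (α + 1) * j := Nat.mul_le_mul_right j (by omega)
    have h1 : t + 2 ≤ (α + 1) * j := by omega
    have h3 : t ≤ (α + 1) * j - 2 := by omega
    rw [Nat.cast_sub (by omega : t ≤ (α + 1) * j), Nat.cast_sub h3,
      Nat.cast_sub (by omega : 2 ≤ (α + 1) * j)]
    push_cast
    ring
  rw [Qp, Polynomial.eval_mul, Polynomial.eval_C, Polynomial.eval_prod]
  simp only [Polynomial.eval_add, Polynomial.eval_X, Polynomial.eval_C]
  rw [Finset.prod_congr rfl key, ← Nat.cast_prod,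
    ← Nat.descFactorial_eq_prod_range ((α + 1) * j - 2) j,
    Nat.descFactorial_eq_factorial_mul_choose]
  push_cast
  rw [← mul_assoc, inv_mul_cancel₀ (by exact_mod_cast j.factorial_ne_zero), one_mul]

lemma Qp_zero (α : ℕ) : Qp α 0 = 1 := by
  simp [Qp]

lemma Aq_zero_right (α a : ℕ) : Aq α a 0 = 1 := by simp [Aq]

lemma Aq_zero_left (α : ℕ) {m : ℕ} (hm : 1 ≤ m) : Aq α 0 m = 0 := by
  rw [Aq, if_neg (by omega)]
  simp

lemma Aq_pascal (α a m : ℕ) :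
    Aq α (a + 1) (m + 1) = Aq α a (m + 1) + Aq α (a + α + 1) m := by
  rcases Nat.eq_zero_or_pos m with rfl | hm
  · simp only [Aq, if_neg (Nat.one_ne_zero), if_pos rfl, ↓reduceIte, mul_one]
    rw [Nat.choose_one_right, Nat.choose_one_right]
    have h1 : ((a + 1 + (α + 1) * 1 : ℕ) : ℚ) ≠ 0 := by positivity
    have h2 : ((a + (α + 1) * 1 : ℕ) : ℚ) ≠ 0 := by positivity
    field_simp
    exact Nat.cast_succ a
  · have hmne : m ≠ 0 := by omega
    simp only [Aq, if_neg (Nat.succ_ne_zero m), if_neg hmne]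
    have e1 : a + 1 + (α + 1) * (m + 1) = (a + α * (m + 1) + (m + 1)) + 1 := by ring
    have e2 : a + (α + 1) * (m + 1) = a + α * (m + 1) + (m + 1) := by ring
    have e3 : a + α + 1 + (α + 1) * m = a + α * (m + 1) + (m + 1) := by ring
    rw [e1, e2, e3]
    -- now only two distinct binomial tops: T+1 and T where T := a + α*(m+1) + (m+1)
    rw [Nat.cast_choose ℚ (by omega : m + 1 ≤ a + α * (m + 1) + (m + 1) + 1),
      Nat.cast_choose ℚ (by omega : m + 1 ≤ a + α * (m + 1) + (m + 1)),
      Nat.cast_choose ℚ (by omega : m ≤ a + α * (m + 1) + (m + 1))]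
    have f1 : a + α * (m + 1) + (m + 1) + 1 - (m + 1) = a + α * (m + 1) + 1 := by omega
    have f2 : a + α * (m + 1) + (m + 1) - (m + 1) = a + α * (m + 1) := by omega
    have f3 : a + α * (m + 1) + (m + 1) - m = a + α * (m + 1) + 1 := by omega
    rw [f1, f2, f3]
    rw [show (a + α * (m + 1) + (m + 1) + 1).factorial
        = (a + α * (m + 1) + (m + 1) + 1) * (a + α * (m + 1) + (m + 1)).factorial from
        Nat.factorial_succ _,
      show (a + α * (m + 1) + 1).factorial
        = (a + α * (m + 1) + 1) * (a + α * (m + 1)).factorial from Nat.factorial_succ _,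
      show (m + 1).factorial = (m + 1) * m.factorial from Nat.factorial_succ _]
    have nz1 : ((a + α * (m + 1) + (m + 1) + 1 : ℕ) : ℚ) ≠ 0 := by positivity
    have nz2 : ((a + α * (m + 1) + (m + 1) : ℕ) : ℚ) ≠ 0 := by positivity
    have nz3 : ((a + α * (m + 1) + (m + 1)).factorial : ℚ) ≠ 0 := by
      exact_mod_cast (a + α * (m + 1) + (m + 1)).factorial_ne_zero
    have nz4 : ((a + α * (m + 1)).factorial : ℚ) ≠ 0 := by
      exact_mod_cast (a + α * (m + 1)).factorial_ne_zero
    have nz5 : (m.factorial : ℚ) ≠ 0 := by exact_mod_cast m.factorial_ne_zero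
    have nz6 : ((m + 1 : ℕ) : ℚ) ≠ 0 := by positivity
    have nz7 : ((a + α * (m + 1) + 1 : ℕ) : ℚ) ≠ 0 := by positivity
    push_cast
    field_simp
    ring

lemma nat_cast_set_infinite : ({x : ℚ | ∃ n : ℕ, (n : ℚ) = x}).Infinite :=
  Set.infinite_of_injective_forall_mem (f := fun n : ℕ => (n : ℚ))
    Nat.cast_injective (fun n => ⟨n, rfl⟩)

/-- Pascal-type recurrence for the binomial polynomials. -/
lemma Qp_pascal (α j : ℕ) :
    (Qp α (j + 1)).comp (Polynomial.X + 1) =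
      Qp α (j + 1) + (Qp α j).comp (Polynomial.X + Polynomial.C ((α : ℚ) + 1)) := by
  apply Polynomial.eq_of_infinite_eval_eq
  apply Set.Infinite.mono _ nat_cast_set_infinite
  rintro x ⟨n, rfl⟩
  simp only [Set.mem_setOf_eq, Polynomial.eval_comp, Polynomial.eval_add,
    Polynomial.eval_X, Polynomial.eval_one, Polynomial.eval_C]
  have c1 : ((n : ℚ) + 1) = ((n + 1 : ℕ) : ℚ) := by push_cast; ring
  have c2 : ((n : ℚ) + ((α : ℚ) + 1)) = ((n + (α + 1) : ℕ) : ℚ) := by push_cast; ring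
  rw [c1, c2, Qp_eval_nat, Qp_eval_nat, Qp_eval_nat]
  have e1 : (α + 1) * (j + 1) + (n + 1) = ((α + 1) * (j + 1) + n) + 1 := by ring
  have e2 : (α + 1) * j + (n + (α + 1)) = (α + 1) * (j + 1) + n := by ring
  rw [e1, e2, Nat.choose_succ_succ ((α + 1) * (j + 1) + n) j]
  push_cast
  ring

/-- Gould's convolution identity, polynomial form. -/
lemma gould (α : ℕ) : ∀ K a : ℕ,
    ∑ m ∈ Finset.range (K + 1), Polynomial.C (Aq α a m) * Qp α (K - m)
      = (Qp α K).comp (Polynomial.X + Polynomial.C (a : ℚ)) := by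
  intro K
  induction K using Nat.strong_induction_on with
  | _ K ihK =>
    intro a
    induction a with
    | zero =>
      have hz : ∀ m ∈ Finset.range (K + 1), m ≠ 0 →
          Polynomial.C (Aq α 0 m) * Qp α (K - m) = 0 := by
        intro m _ hm
        rw [Aq_zero_left α (by omega)]
        simp
      rw [Finset.sum_eq_single 0 hz (by intro h; simp at h)]
      simp [Aq_zero_right]
    | succ a iha =>
      -- split into the two sums via the Pascal recurrence for Aq
      have hsplit : ∀ m, Aq α (a + 1) m =
          Aq α a m + (if m = 0 then 0 else Aq α (a + α + 1) (m - 1)) := by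
        intro m
        cases m with
        | zero => simp [Aq_zero_right]
        | succ m' => simp only [if_neg (Nat.succ_ne_zero m'), Nat.add_sub_cancel,
            Aq_pascal α a m']
      have expand : ∑ m ∈ Finset.range (K + 1), Polynomial.C (Aq α (a + 1) m) * Qp α (K - m)
          = (∑ m ∈ Finset.range (K + 1), Polynomial.C (Aq α a m) * Qp α (K - m))
            + ∑ m ∈ Finset.range (K + 1),
                Polynomial.C (if m = 0 then 0 else Aq α (a + α + 1) (m - 1)) * Qp α (K - m) := by
        rw [← Finset.sum_add_distrib]
        apply Finset.sum_congr rfl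
        intro m _
        rw [hsplit m, map_add, add_mul]
      rw [expand, iha]
      rcases Nat.eq_zero_or_pos K with rfl | hK
      · -- K = 0
        simp [Qp_zero]
      obtain ⟨K', rfl⟩ : ∃ K', K = K' + 1 := ⟨K - 1, by omega⟩
      have shift : ∑ m ∈ Finset.range (K' + 1 + 1),
            Polynomial.C (if m = 0 then 0 else Aq α (a + α + 1) (m - 1)) * Qp α (K' + 1 - m)
          = ∑ m' ∈ Finset.range (K' + 1),
              Polynomial.C (Aq α (a + α + 1) m') * Qp α (K' - m') := by
        rw [Finset.sum_range_succ' _ (K' + 1)]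
        have hcg : ∀ x ∈ Finset.range (K' + 1),
            Polynomial.C (if x + 1 = 0 then 0 else Aq α (a + α + 1) (x + 1 - 1)) *
                Qp α (K' + 1 - (x + 1))
              = Polynomial.C (Aq α (a + α + 1) x) * Qp α (K' - x) := by
          intro x _
          rw [if_neg (Nat.succ_ne_zero x), Nat.add_sub_cancel]
          congr 2
          omega
        rw [Finset.sum_congr rfl hcg]
        simp
      rw [shift, ihK K' (by omega) (a + α + 1)]
      -- use composed Pascal
      have hp := Qp_pascal α K'
      have hcomp := congrArg (fun P => P.comp (Polynomial.X + Polynomial.C (a : ℚ))) hp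
      simp only [Polynomial.comp_assoc, Polynomial.add_comp, Polynomial.X_comp,
        Polynomial.C_comp, Polynomial.one_comp] at hcomp
      have r1 : Polynomial.X + Polynomial.C (a : ℚ) + 1
          = Polynomial.X + Polynomial.C (((a + 1 : ℕ)) : ℚ) := by
        rw [Nat.cast_add, Nat.cast_one, map_add, map_one]
        ring
      have r2 : Polynomial.X + Polynomial.C (a : ℚ) + Polynomial.C ((α : ℚ) + 1)
          = Polynomial.X + Polynomial.C (((a + α + 1 : ℕ)) : ℚ) := by
        rw [Nat.cast_add, Nat.cast_add, Nat.cast_one, map_add, map_add, map_add, map_one]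
        ring
      rw [r1, r2] at hcomp
      exact hcomp.symm

end Gould

section Assembly

/-- Abbreviation: `E j` is the coefficient of the series `1 + g_ee`. -/
noncomputable def Ec (α j : ℕ) : ℚ :=
  if j = 0 then 1 else ((((α + 1) * j - 2).choose j : ℕ) : ℚ)

lemma gould_eval (α : ℕ) (hα : 1 ≤ α) (K : ℕ) :
    ∑ m ∈ Finset.range (K + 1), Aq α (α + 2) m * Ec α (K - m)
      = ((((α + 1) * K + α).choose K : ℕ) : ℚ) := by
  have h := congrArg (Polynomial.eval (-2 : ℚ)) (gould α K (α + 2))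
  simp only [Polynomial.eval_finset_sum, Polynomial.eval_mul, Polynomial.eval_C,
    Polynomial.eval_comp, Polynomial.eval_add, Polynomial.eval_X] at h
  have c : (-2 : ℚ) + ((α + 2 : ℕ) : ℚ) = ((α : ℕ) : ℚ) := by push_cast; ring
  rw [c, Qp_eval_nat] at h
  rw [← h]
  apply Finset.sum_congr rfl
  intro m _
  congr 1
  rcases Nat.eq_zero_or_pos (K - m) with he | he
  · rw [he, Ec, if_pos rfl, Qp_zero]
    simp
  · rw [Ec, if_neg (by omega), Qp_eval_neg2 α hα (by omega)]

lemma hco_eq (α : ℕ) (hα : 1 ≤ α) {k : ℕ} (hk : 1 ≤ k) :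
    (((α * (α + 2) : ℕ) : ℚ) / (((α + 1) * k + 1 : ℕ) : ℚ))
        * ((((α + 1) * k + 1).choose (k - 1) : ℕ) : ℚ)
      = (α : ℚ) * Aq α (α + 2) (k - 1) := by
  obtain ⟨K, rfl⟩ : ∃ K, k = K + 1 := ⟨k - 1, by omega⟩
  simp only [Nat.add_sub_cancel]
  rcases Nat.eq_zero_or_pos K with rfl | hK
  · rw [Aq_zero_right]
    have e : (α + 1) * (0 + 1) + 1 = α + 2 := by ring
    rw [e, Nat.choose_zero_right]
    have hne : ((α + 2 : ℕ) : ℚ) ≠ 0 := by positivity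
    push_cast
    field_simp
  · rw [Aq, if_neg (by omega)]
    have e : α + 2 + (α + 1) * K = (α + 1) * (K + 1) + 1 := by ring
    rw [e]
    push_cast
    ring

/-- Coefficients of `gfOf`. -/
lemma coeff_gfOf (S : ℕ → Set LatticePath) (k : ℕ) :
    PowerSeries.coeff k (gfOf S) = if k = 0 then 0 else ((S k).ncard : ℚ) := by
  rw [gfOf, PowerSeries.coeff_mk]

lemma coeff_one_gee (α : ℕ) (hα : 1 ≤ α) (j : ℕ) :
    PowerSeries.coeff j (1 + geeSer α 1) = Ec α j := by
  rw [map_add, PowerSeries.coeff_one, geeSer, PowerSeries.coeff_mk, Ec]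
  rcases Nat.eq_zero_or_pos j with rfl | hj
  · simp
  · rw [if_neg (by omega), if_neg (by omega), if_neg (by omega), zero_add, one_mul]

/-- The explicit series from the statement. -/
noncomputable def TSer (α : ℕ) : PowerSeries ℚ :=
  PowerSeries.mk (fun k => if k = 0 then 0 else
    (((α * (α + 2) : ℕ) : ℚ) / (((α + 1) * k + 1 : ℕ) : ℚ))
      * ((((α + 1) * k + 1).choose (k - 1) : ℕ) : ℚ))

lemma pascal_step (α : ℕ) (hα : 1 ≤ α) {k : ℕ} (hk : 1 ≤ k) :
    (((α + 1) * k - 1).choose k : ℕ)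
      = ((α + 1) * k - 2).choose k + ((α + 1) * k - 2).choose (α * k - 1) := by
  have e : (α + 1) * k = α * k + k := by ring
  have h2 : 2 ≤ (α + 1) * k := by
    calc 2 = 2 * 1 := by norm_num
    _ ≤ ((α + 1)) * k := Nat.mul_le_mul (by omega) hk
  have hsymm : ((α + 1) * k - 2).choose (α * k - 1) = ((α + 1) * k - 2).choose (k - 1) := by
    have hle : k - 1 ≤ (α + 1) * k - 2 := by
      have : 1 * k ≤ α * k := Nat.mul_le_mul_right k hα
      omega
    rw [← Nat.choose_symm hle]
    congr 1
    have : 1 * k ≤ α * k := Nat.mul_le_mul_right k hα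
    omega
  rw [hsymm]
  obtain ⟨k', rfl⟩ : ∃ k', k = k' + 1 := ⟨k - 1, by omega⟩
  have e1 : (α + 1) * (k' + 1) - 1 = ((α + 1) * (k' + 1) - 2) + 1 := by omega
  rw [e1, Nat.choose_succ_succ ((α + 1) * (k' + 1) - 2) k']
  simp only [Nat.add_sub_cancel, Nat.succ_eq_add_one]
  omega

lemma alpha_mul_choose (α : ℕ) (hα : 1 ≤ α) {k : ℕ} (hk : 1 ≤ k) :
    α * (((α + 1) * (k - 1) + α).choose (k - 1)) = ((α + 1) * k - 1).choose k := by
  obtain ⟨K, rfl⟩ : ∃ K, k = K + 1 := ⟨k - 1, by omega⟩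
  simp only [Nat.add_sub_cancel]
  have etop : (α + 1) * (K + 1) - 1 = (α + 1) * K + α := by
    have : (α + 1) * (K + 1) = (α + 1) * K + α + 1 := by ring
    omega
  rw [etop]
  have h := Nat.choose_succ_right_eq ((α + 1) * K + α) K
  have hsub : (α + 1) * K + α - K = α * (K + 1) := by
    have e : (α + 1) * K = α * K + K := by ring
    have e2 : α * (K + 1) = α * K + α := by ring
    omega
  rw [hsub] at h
  -- h : C(n, K+1) * (K+1) = C(n, K) * (α * (K+1))
  have := h
  have hKpos : 0 < K + 1 := by omega
  apply Nat.eq_of_mul_eq_mul_right hKpos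
  rw [h]
  ring

lemma TSer_mul (α : ℕ) (hα : 1 ≤ α) :
    TSer α * (1 + geeSer α 1) = geeSer α 1 + genSer α 1 := by
  ext k
  rw [PowerSeries.coeff_mul, Finset.Nat.sum_antidiagonal_eq_sum_range_succ_mk]
  rcases Nat.eq_zero_or_pos k with rfl | hk
  · simp [TSer, genSer, geeSer]
  have hT : ∀ i, PowerSeries.coeff i (TSer α)
      = if i = 0 then 0 else (α : ℚ) * Aq α (α + 2) (i - 1) := by
    intro i
    rw [TSer, PowerSeries.coeff_mk]
    rcases Nat.eq_zero_or_pos i with rfl | hi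
    · simp
    · rw [if_neg (by omega), if_neg (by omega), hco_eq α hα hi]
  calc ∑ i ∈ Finset.range (k + 1),
        PowerSeries.coeff i (TSer α) * PowerSeries.coeff (k - i) (1 + geeSer α 1)
      = ∑ m ∈ Finset.range k, (α : ℚ) * Aq α (α + 2) m * Ec α (k - 1 - m) := by
        rw [Finset.sum_range_succ' _ k]
        rw [hT 0, if_pos rfl, zero_mul, add_zero]
        apply Finset.sum_congr rfl
        intro m _
        rw [hT (m + 1), if_neg (Nat.succ_ne_zero m), Nat.add_sub_cancel,
          coeff_one_gee α hα]
        congr 2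
        omega
    _ = (α : ℚ) * ∑ m ∈ Finset.range ((k - 1) + 1), Aq α (α + 2) m * Ec α ((k - 1) - m) := by
        rw [Finset.mul_sum]
        apply Finset.sum_congr (by congr 1; omega)
        intro m _
        ring
    _ = (α : ℚ) * ((((α + 1) * (k - 1) + α).choose (k - 1) : ℕ) : ℚ) := by
        rw [gould_eval α hα]
    _ = ((((α + 1) * k - 1).choose k : ℕ) : ℚ) := by
        rw [← alpha_mul_choose α hα hk]
        push_cast
        ring
    _ = PowerSeries.coeff k (geeSer α 1 + genSer α 1) := by
        rw [map_add, geeSer, genSer, PowerSeries.coeff_mk, PowerSeries.coeff_mk,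
          if_neg (by omega), if_neg (by omega), pascal_step α hα hk]
        push_cast
        rw [one_mul]

end Assembly

section Final

lemma gfOf_bSet_true (α : ℕ) (hα : 1 ≤ α) :
    gfOf (fun k => bSet α k true) = geeSer α 1 := by
  ext k
  rw [coeff_gfOf, geeSer, PowerSeries.coeff_mk]
  rcases Nat.eq_zero_or_pos k with rfl | hk
  · simp
  · rw [if_neg (by omega), if_neg (by omega), ncard_bSet_true hα hk, one_mul]

lemma gfOf_bSet_false (α : ℕ) (hα : 1 ≤ α) :
    gfOf (fun k => bSet α k false) = genSer α 1 := by
  ext k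
  rw [coeff_gfOf, genSer, PowerSeries.coeff_mk]
  rcases Nat.eq_zero_or_pos k with rfl | hk
  · simp
  rw [if_neg (by omega), if_neg (by omega), ncard_bSet_false hα hk]
  have e : (α + 1) * k = α * k + k := by ring
  have h1k : 1 * k ≤ α * k := Nat.mul_le_mul_right k hα
  have hle : k - 1 ≤ (α + 1) * k - 2 := by omega
  congr 1
  rw [show α * k - 1 = (α + 1) * k - 2 - (k - 1) by omega, Nat.choose_symm hle]

lemma series_rec (α : ℕ) (hα : 1 ≤ α) (b : Bool) :
    gfOf (fun k => bSet α k b) = gfOf (fun k => aSet α k b)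
      + gfOf (fun k => aSet α k true) * gfOf (fun k => bSet α k b) := by
  ext k
  rw [map_add, PowerSeries.coeff_mul, Finset.Nat.sum_antidiagonal_eq_sum_range_succ_mk,
    coeff_gfOf, coeff_gfOf]
  rcases Nat.eq_zero_or_pos k with rfl | hk
  · simp [coeff_gfOf]
  rw [if_neg (by omega), if_neg (by omega), ncard_rec hα b hk]
  have hstep : ∀ i ∈ Finset.Ico 1 k,
      PowerSeries.coeff i (gfOf (fun k => aSet α k true))
          * PowerSeries.coeff (k - i) (gfOf (fun k => bSet α k b))
        = (((aSet α i true).ncard * (bSet α (k - i) b).ncard : ℕ) : ℚ) := by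
    intro i hi
    rw [Finset.mem_Ico] at hi
    rw [coeff_gfOf, coeff_gfOf, if_neg (by omega), if_neg (by omega)]
    push_cast
    ring
  rw [Finset.sum_range_succ, coeff_gfOf (fun k => bSet α k b) (k - k)]
  rw [Nat.sub_self, if_pos rfl, mul_zero, add_zero]
  rw [Finset.range_eq_Ico, Finset.sum_eq_sum_Ico_succ_bot hk,
    coeff_gfOf (fun k => aSet α k true) 0, if_pos rfl, zero_mul, zero_add,
    Finset.sum_congr rfl hstep]
  push_cast
  ring

lemma aSet_disj (α k : ℕ) : Disjoint (aSet α k true) (aSet α k false) := by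
  rw [Set.disjoint_left]
  rintro p ⟨_, _, _, h1⟩ ⟨_, _, _, h2⟩
  rw [LastStep] at h1 h2
  rw [h1] at h2
  simp at h2

lemma hE_union (α k : ℕ) (hk : 1 ≤ k) :
    {p : LatticePath | InL α 1 k p ∧ NoHCross α p ∧ FirstStep p true}
      = aSet α k true ∪ aSet α k false := by
  ext p
  constructor
  · rintro ⟨hIn, hnc, hf⟩
    have hne : p ≠ [] := by
      intro h
      subst h
      have h2 := hIn.2
      simp at h2
      omega
    obtain ⟨c, hc⟩ := Option.isSome_iff_exists.mp (List.getLast?_isSome.mpr hne)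
    cases c
    · right; exact ⟨hIn, hnc, hf, hc⟩
    · left; exact ⟨hIn, hnc, hf, hc⟩
  · rintro (⟨hIn, hnc, hf, _⟩ | ⟨hIn, hnc, hf, _⟩) <;> exact ⟨hIn, hnc, hf⟩

end Final

theorem statement18' (α : ℕ) (hα : 1 ≤ α) :
    nhcEE α * (1 + geeSer α 1) = geeSer α 1 ∧
    nhcEN α * (1 + geeSer α 1) = genSer α 1 ∧
    nhcNE α = nhcEN α ∧
    nhcEE α + nhcEN α = hEstar α ∧
    hEstar α = PowerSeries.mk (fun k => if k = 0 then 0 else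
      (((α * (α + 2) : ℕ) : ℚ) / (((α + 1) * k + 1 : ℕ) : ℚ))
        * ((((α + 1) * k + 1).choose (k - 1) : ℕ) : ℚ)) := by
  have e1 : gfOf (fun k => aSet α k true) = nhcEE α := rfl
  have e2 : gfOf (fun k => aSet α k false) = nhcEN α := rfl
  have hrecT := series_rec α hα true
  have hrecF := series_rec α hα false
  rw [gfOf_bSet_true α hα, e1] at hrecT
  rw [gfOf_bSet_false α hα, e1, e2] at hrecF
  -- P1
  have P1 : nhcEE α * (1 + geeSer α 1) = geeSer α 1 := by
    linear_combination -hrecT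
  -- P2
  have P2 : nhcEN α * (1 + geeSer α 1) = genSer α 1 := by
    linear_combination (-(1 + geeSer α 1)) * hrecF - genSer α 1 * P1
  -- P3
  have P3 : nhcNE α = nhcEN α := by
    ext k
    simp only [nhcNE, nhcEN]
    rw [coeff_gfOf, coeff_gfOf]
    rcases Nat.eq_zero_or_pos k with rfl | hk
    · simp
    rw [if_neg (by omega), if_neg (by omega)]
    congr 1
    rw [neSet_eq_image (α := α) (k := k),
      Set.ncard_image_of_injective _ List.reverse_injective]
  -- P4
  have P4 : nhcEE α + nhcEN α = hEstar α := by
    ext k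
    rw [map_add]
    simp only [nhcEE, nhcEN, hEstar]
    rw [coeff_gfOf, coeff_gfOf, coeff_gfOf]
    rcases Nat.eq_zero_or_pos k with rfl | hk
    · simp
    rw [if_neg (by omega), if_neg (by omega), if_neg (by omega)]
    have hu := hE_union α k hk
    rw [hu, Set.ncard_union_eq (aSet_disj α k) (aSet_finite true) (aSet_finite false)]
    simp only [aSet]
    push_cast
    ring
  -- P5
  have hne : (1 + geeSer α 1) ≠ 0 := by
    intro h
    have h0 := congrArg (PowerSeries.constantCoeff) h
    simp only [map_add, map_one, geeSer, PowerSeries.constantCoeff_mk, if_pos rfl,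
      map_zero] at h0
    norm_num at h0
  have P5 : hEstar α = TSer α := by
    apply mul_right_cancel₀ hne
    rw [← P4, add_mul, P1, P2, TSer_mul α hα]
  exact ⟨P1, P2, P3, P4, P5⟩

end St18

/-- For `β = 1`, `α ≥ 1`: `nhc_ee·(1 + g_ee) = g_ee`,
`nhc_en·(1 + g_ee) = g_en`, `nhc_ne = nhc_en`, and
`h_{E✳} = nhc_ee + nhc_en = Σ_{k≥1} (α(α+2)/((α+1)k+1))·C((α+1)k+1, k−1)·xᵏ`. -/
theorem statement18 (α : ℕ) (hα : 1 ≤ α) :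
    nhcEE α * (1 + geeSer α 1) = geeSer α 1 ∧
    nhcEN α * (1 + geeSer α 1) = genSer α 1 ∧
    nhcNE α = nhcEN α ∧
    nhcEE α + nhcEN α = hEstar α ∧
    hEstar α = PowerSeries.mk (fun k => if k = 0 then 0 else
      (((α * (α + 2) : ℕ) : ℚ) / (((α + 1) * k + 1 : ℕ) : ℚ))
        * ((((α + 1) * k + 1).choose (k - 1) : ℕ) : ℚ)) :=
  St18.statement18' α hα
end
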